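/- arXiv:1411.1788 — 2 statements merged into one kernel-verified Lean document; each statement's English description precedes it below -/
import Mathlib

section
/- Let G be a flow-admissible signed series-parallel graph with no nowhere-zero 6-flow that has the minimum number of edges among all such graphs. Then every non-terminal vertex of G has degree at least three. -/
/-!
Signed multigraphs (parallel edges allowed), two-terminal graphs,
series/parallel connections and flows, following the terminology of
Kaiser–Rollová, "Nowhere-zero flows in signed series-parallel graphs".

Vertices and edges are labelled by natural numbers.  An edge `e` has the
two endvertices `fst e` and `snd e` (its two half-edges are the ends at
`fst e` and at `snd e`), and `sign e = true` means that `e` is positive.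
-/

/-- The value `+1` (pointing towards its endvertex) or `-1` (pointing away)
of a Boolean direction of a half-edge. -/
def dirVal (b : Bool) : ℤ := if b then 1 else -1

/-- A signed multigraph. -/
structure SignedGraph where
  verts : Finset ℕ
  edges : Finset ℕ
  fst : ℕ → ℕ
  snd : ℕ → ℕ
  sign : ℕ → Bool
  fst_mem : ∀ e ∈ edges, fst e ∈ verts
  snd_mem : ∀ e ∈ edges, snd e ∈ verts

namespace SignedGraph

/-- Edge `e` joins the vertices `u` and `v`. -/
def Joins (G : SignedGraph) (e u v : ℕ) : Prop :=
  (G.fst e = u ∧ G.snd e = v) ∨ (G.fst e = v ∧ G.snd e = u)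

/-- `u` and `v` are adjacent (joined by some edge). -/
def Adj (G : SignedGraph) (u v : ℕ) : Prop := ∃ e ∈ G.edges, G.Joins e u v

/-- The degree of a vertex (each incidence of an edge counts once,
so loops count twice). -/
def degree (G : SignedGraph) (v : ℕ) : ℕ :=
  ∑ e ∈ G.edges, ((if G.fst e = v then 1 else 0) + (if G.snd e = v then 1 else 0))

/-- `e` and `f` are parallel edges: distinct edges joining the same
pair of vertices. -/
def Parallel (G : SignedGraph) (e f : ℕ) : Prop :=
  e ≠ f ∧ ((G.fst e = G.fst f ∧ G.snd e = G.snd f) ∨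
           (G.fst e = G.snd f ∧ G.snd e = G.fst f))

/-- `v` is contained in a 2-cycle (a cycle formed by two parallel edges). -/
def In2Cycle (G : SignedGraph) (v : ℕ) : Prop :=
  ∃ e ∈ G.edges, ∃ f ∈ G.edges, G.Parallel e f ∧ G.fst e ≠ G.snd e ∧
    (G.fst e = v ∨ G.snd e = v)

/-- `beta G` is the number of distinct 2-cycles of `G`. -/
def beta (G : SignedGraph) : ℕ :=
  ((G.edges ×ˢ G.edges).filter fun p => p.1 < p.2 ∧ G.fst p.1 ≠ G.snd p.1 ∧
     ((G.fst p.1 = G.fst p.2 ∧ G.snd p.1 = G.snd p.2) ∨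
      (G.fst p.1 = G.snd p.2 ∧ G.snd p.1 = G.fst p.2))).card

/-- An orientation of a signed graph: `o₁ e` (resp. `o₂ e`) tells whether the
half-edge of `e` at `fst e` (resp. at `snd e`) points towards its endvertex.
Of the two half-edges of a positive edge exactly one points towards its
endvertex, while for a negative edge none or both do. -/
def IsOrientation (G : SignedGraph) (o₁ o₂ : ℕ → Bool) : Prop :=
  ∀ e ∈ G.edges, (G.sign e = true → o₁ e ≠ o₂ e) ∧ (G.sign e = false → o₁ e = o₂ e)

/-- The excess (inflow minus outflow) at a vertex `v`. -/
def excess (G : SignedGraph) (o₁ o₂ : ℕ → Bool) (φ : ℕ → ℤ) (v : ℕ) : ℤ :=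
  ∑ e ∈ G.edges, ((if G.fst e = v then dirVal (o₁ e) * φ e else 0) +
                  (if G.snd e = v then dirVal (o₂ e) * φ e else 0))

/-- `(o₁, o₂, φ)` is a nowhere-zero `k`-flow on `G`: an orientation together
with a valuation of the edges by nonzero integers of absolute value less
than `k` such that at every vertex the inflow equals the outflow. -/
structure IsNZFlow (G : SignedGraph) (k : ℕ) (o₁ o₂ : ℕ → Bool) (φ : ℕ → ℤ) : Prop where
  orient : G.IsOrientation o₁ o₂
  nonzero : ∀ e ∈ G.edges, φ e ≠ 0
  bounded : ∀ e ∈ G.edges, |φ e| < (k : ℤ)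
  conserve : ∀ v ∈ G.verts, G.excess o₁ o₂ φ v = 0

/-- `G` admits a nowhere-zero `k`-flow. -/
def HasNZFlow (G : SignedGraph) (k : ℕ) : Prop := ∃ o₁ o₂ φ, G.IsNZFlow k o₁ o₂ φ

/-- `G` is flow-admissible: it admits a nowhere-zero `k`-flow for some `k`. -/
def FlowAdmissible (G : SignedGraph) : Prop := ∃ k, G.HasNZFlow k

/-- `(vs, es)` is a cycle of `G`: distinct vertices `vs = [v₀, …, v_{m-1}]`,
distinct edges `es = [e₀, …, e_{m-1}]`, where `eᵢ` joins `vᵢ` and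
`v_{i+1 (mod m)}`. -/
structure IsCycle (G : SignedGraph) (vs es : List ℕ) : Prop where
  nonempty : es ≠ []
  len : vs.length = es.length
  vnodup : vs.Nodup
  enodup : es.Nodup
  vmem : ∀ v ∈ vs, v ∈ G.verts
  emem : ∀ e ∈ es, e ∈ G.edges
  link : ∀ i < es.length,
    G.Joins (es.getD i 0) (vs.getD i 0) (vs.getD ((i + 1) % vs.length) 0)

/-- The number of negative edges in a list of edges. -/
def negCount (G : SignedGraph) (es : List ℕ) : ℕ :=
  (es.filter fun e => G.sign e = false).length

/-- A balanced cycle: a cycle with an even number of negative edges. -/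
def IsBalancedCycle (G : SignedGraph) (vs es : List ℕ) : Prop :=
  G.IsCycle vs es ∧ Even (G.negCount es)

/-- An unbalanced cycle: a cycle with an odd number of negative edges. -/
def IsUnbalancedCycle (G : SignedGraph) (vs es : List ℕ) : Prop :=
  G.IsCycle vs es ∧ Odd (G.negCount es)

/-- A signed graph is unbalanced if it contains an unbalanced cycle. -/
def IsUnbalanced (G : SignedGraph) : Prop := ∃ vs es, G.IsUnbalancedCycle vs es

/-- `(vs, es)` is a path of `G` (possibly trivial, i.e. a single vertex). -/
structure IsPath (G : SignedGraph) (vs es : List ℕ) : Prop where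
  nonempty : vs ≠ []
  len : vs.length = es.length + 1
  vnodup : vs.Nodup
  enodup : es.Nodup
  vmem : ∀ v ∈ vs, v ∈ G.verts
  emem : ∀ e ∈ es, e ∈ G.edges
  link : ∀ i < es.length, G.Joins (es.getD i 0) (vs.getD i 0) (vs.getD (i + 1) 0)

/-- A barbell: two edge-disjoint unbalanced cycles together with a path,
which either joins two vertex-disjoint cycles and is internally
vertex-disjoint from them, or is the trivial path at the single
common vertex of the two cycles. -/
structure IsBarbell (G : SignedGraph) (vs₁ es₁ vs₂ es₂ pvs pes : List ℕ) : Prop where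
  cyc1 : G.IsUnbalancedCycle vs₁ es₁
  cyc2 : G.IsUnbalancedCycle vs₂ es₂
  edge_disj : ∀ e ∈ es₁, e ∉ es₂
  path : G.IsPath pvs pes
  shape :
    ((∀ v ∈ vs₁, v ∉ vs₂) ∧
      pvs.getD 0 0 ∈ vs₁ ∧ pvs.getD (pvs.length - 1) 0 ∈ vs₂ ∧
      (∀ i, 0 < i → i < pvs.length - 1 → pvs.getD i 0 ∉ vs₁ ∧ pvs.getD i 0 ∉ vs₂)) ∨
    (∃ w, w ∈ vs₁ ∧ w ∈ vs₂ ∧ (∀ v ∈ vs₁, v ∈ vs₂ → v = w) ∧ pvs = [w] ∧ pes = [])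

/-- The edge `e` is contained in a signed circuit (a balanced cycle
or a barbell). -/
def InSignedCircuit (G : SignedGraph) (e : ℕ) : Prop :=
  (∃ vs es, G.IsBalancedCycle vs es ∧ e ∈ es) ∨
  (∃ vs₁ es₁ vs₂ es₂ pvs pes, G.IsBarbell vs₁ es₁ vs₂ es₂ pvs pes ∧
    (e ∈ es₁ ∨ e ∈ es₂ ∨ e ∈ pes))

/-- `H` is a subgraph of `G` (with the same labels, endvertices and signs). -/
def IsSubgraph (H G : SignedGraph) : Prop :=
  H.verts ⊆ G.verts ∧ H.edges ⊆ G.edges ∧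
  ∀ e ∈ H.edges, H.fst e = G.fst e ∧ H.snd e = G.snd e ∧ H.sign e = G.sign e

/-- Switching at a vertex `v`: the signs of all edges incident with `v`
(i.e. with exactly one end at `v`) are inverted. -/
def switchAt (G : SignedGraph) (v : ℕ) : SignedGraph where
  verts := G.verts
  edges := G.edges
  fst := G.fst
  snd := G.snd
  sign := fun e => if xor (G.fst e == v) (G.snd e == v) then !(G.sign e) else G.sign e
  fst_mem := G.fst_mem
  snd_mem := G.snd_mem

/-- Connectedness of a (nonempty) signed graph. -/
def Connected (G : SignedGraph) : Prop :=
  G.verts.Nonempty ∧ ∀ u ∈ G.verts, ∀ v ∈ G.verts, Relation.ReflTransGen G.Adj u v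

/-- Deletion of a vertex together with all incident edges. -/
def deleteVert (G : SignedGraph) (v : ℕ) : SignedGraph where
  verts := G.verts.erase v
  edges := G.edges.filter fun e => G.fst e ≠ v ∧ G.snd e ≠ v
  fst := G.fst
  snd := G.snd
  sign := G.sign
  fst_mem := by
    intro e he
    simp only [Finset.mem_filter] at he
    exact Finset.mem_erase.mpr ⟨he.2.1, G.fst_mem e he.1⟩
  snd_mem := by
    intro e he
    simp only [Finset.mem_filter] at he
    exact Finset.mem_erase.mpr ⟨he.2.2, G.snd_mem e he.1⟩

/-- `G` is 2-connected: it is connected and remains connected after the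
deletion of any single vertex. -/
def TwoConnected (G : SignedGraph) : Prop :=
  G.Connected ∧ ∀ v ∈ G.verts, (G.deleteVert v).Connected

end SignedGraph

/-- A two-terminal signed graph: a signed graph with two distinguished
distinct vertices, the source terminal `s` and the target terminal `t`. -/
structure TTGraph extends SignedGraph where
  s : ℕ
  t : ℕ
  s_mem : s ∈ verts
  t_mem : t ∈ verts
  s_ne_t : s ≠ t

namespace TTGraph

/-- Switching at a vertex of a two-terminal signed graph. -/
def switchAt (G : TTGraph) (v : ℕ) : TTGraph where
  toSignedGraph := G.toSignedGraph.switchAt v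
  s := G.s
  t := G.t
  s_mem := G.s_mem
  t_mem := G.t_mem
  s_ne_t := G.s_ne_t

end TTGraph

/-- Two two-terminal signed graphs are switching equivalent if one is
obtained from the other by a finite sequence of switchings. -/
def SwitchEquiv (G G' : TTGraph) : Prop :=
  Relation.ReflTransGen (fun A B => ∃ v ∈ A.verts, B = A.switchAt v) G G'

/-- `G` is the series connection `S(H₁, H₂)`: `H₁` and `H₂` are subgraphs
of `G` sharing exactly the vertex `H₁.t = H₂.s`, partitioning the edges,
with `G.s = H₁.s` and `G.t = H₂.t`. -/
structure IsSeriesConn2 (G H₁ H₂ : TTGraph) : Prop where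
  sub1 : SignedGraph.IsSubgraph H₁.toSignedGraph G.toSignedGraph
  sub2 : SignedGraph.IsSubgraph H₂.toSignedGraph G.toSignedGraph
  vert_union : H₁.verts ∪ H₂.verts = G.verts
  vert_inter : H₁.verts ∩ H₂.verts = {H₁.t}
  mid : H₁.t = H₂.s
  edge_union : H₁.edges ∪ H₂.edges = G.edges
  edge_disj : Disjoint H₁.edges H₂.edges
  src : G.s = H₁.s
  tgt : G.t = H₂.t

/-- `G` is the parallel connection `P(H₁, H₂)`: `H₁` and `H₂` are subgraphs
of `G` sharing exactly the two terminals, partitioning the edges, with the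
terminals of `G`, `H₁` and `H₂` identified. -/
structure IsParallelConn2 (G H₁ H₂ : TTGraph) : Prop where
  sub1 : SignedGraph.IsSubgraph H₁.toSignedGraph G.toSignedGraph
  sub2 : SignedGraph.IsSubgraph H₂.toSignedGraph G.toSignedGraph
  vert_union : H₁.verts ∪ H₂.verts = G.verts
  vert_inter : H₁.verts ∩ H₂.verts = {H₁.s, H₁.t}
  src_eq : H₁.s = H₂.s
  tgt_eq : H₁.t = H₂.t
  edge_union : H₁.edges ∪ H₂.edges = G.edges
  edge_disj : Disjoint H₁.edges H₂.edges
  src : G.s = H₁.s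
  tgt : G.t = H₁.t

/-- `G` is a (signed) copy of `K₂`: a single edge joining the two terminals. -/
def IsSignedK2 (G : TTGraph) : Prop :=
  G.verts = {G.s, G.t} ∧ ∃ e, G.edges = {e} ∧ G.toSignedGraph.Joins e G.s G.t

/-- Series-parallel two-terminal graphs: obtained from copies of `K₂` by
iterated series and parallel connections. -/
inductive IsSP : TTGraph → Prop
  | k2 {G} : IsSignedK2 G → IsSP G
  | series {G H₁ H₂} : IsSeriesConn2 G H₁ H₂ → IsSP H₁ → IsSP H₂ → IsSP G
  | parallel {G H₁ H₂} : IsParallelConn2 G H₁ H₂ → IsSP H₁ → IsSP H₂ → IsSP G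

/-- `G` is the series connection `S(H₁, …, Hₙ)` of the graphs in the list
(of length at least two). -/
inductive IsSeriesConnList : TTGraph → List TTGraph → Prop
  | two {G H₁ H₂} : IsSeriesConn2 G H₁ H₂ → IsSeriesConnList G [H₁, H₂]
  | cons {G G' H l} : IsSeriesConn2 G H G' → IsSeriesConnList G' l →
      IsSeriesConnList G (H :: l)

/-- `G` is the parallel connection `P(H₁, …, Hₙ)` of the graphs in the list
(of length at least two). -/
inductive IsParallelConnList : TTGraph → List TTGraph → Prop
  | two {G H₁ H₂} : IsParallelConn2 G H₁ H₂ → IsParallelConnList G [H₁, H₂]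
  | cons {G G' H l} : IsParallelConn2 G H G' → IsParallelConnList G' l →
      IsParallelConnList G (H :: l)

/-- `l` is the list of parts of `G` for a series connection: `G` is a series
connection of the series-parallel graphs in `l`, with `l` of maximum length. -/
def IsSeriesPartsOf (G : TTGraph) (l : List TTGraph) : Prop :=
  IsSeriesConnList G l ∧ (∀ H ∈ l, IsSP H) ∧
  ∀ l', IsSeriesConnList G l' → (∀ H ∈ l', IsSP H) → l'.length ≤ l.length

/-- `l` is the list of parts of `G` for a parallel connection. -/
def IsParallelPartsOf (G : TTGraph) (l : List TTGraph) : Prop :=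
  IsParallelConnList G l ∧ (∀ H ∈ l, IsSP H) ∧
  ∀ l', IsParallelConnList G l' → (∀ H ∈ l', IsSP H) → l'.length ≤ l.length

/-- `l` is the list of parts of `G`. -/
def IsPartsOf (G : TTGraph) (l : List TTGraph) : Prop :=
  IsSeriesPartsOf G l ∨ IsParallelPartsOf G l

/-- `H` is a part of `G`. -/
def IsPart (H G : TTGraph) : Prop := ∃ l, IsPartsOf G l ∧ H ∈ l

/-- `H` is a piece of `G`: there is a sequence `H = H₀, H₁, …, Hₘ = G`
where each `Hⱼ` is a part of `H_{j+1}`; in particular `G` is a piece of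
itself. -/
def IsPiece (H G : TTGraph) : Prop := Relation.ReflTransGen IsPart H G

/-- `G` is of series type: it is a series connection of its parts. -/
def IsSeriesType (G : TTGraph) : Prop := ∃ l, IsSeriesPartsOf G l

/-- `G` is of parallel type: it is a parallel connection of its parts. -/
def IsParallelType (G : TTGraph) : Prop := ∃ l, IsParallelPartsOf G l

/-- `H` is an endpart of `G`: the first or last part of a series
decomposition of `G` into its parts. -/
def IsEndpartOf (H G : TTGraph) : Prop :=
  ∃ l, IsSeriesPartsOf G l ∧ (l.head? = some H ∨ l.getLast? = some H)

/-- `DepthLe G d`: the depth of `G` is at most `d`.  The depth of a signed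
`K₂` is `0`; otherwise it is `1` plus the maximum depth of a part. -/
inductive DepthLe : TTGraph → ℕ → Prop
  | k2 {G d} : IsSignedK2 G → DepthLe G d
  | step {G l d} : IsPartsOf G l → (∀ H ∈ l, DepthLe H d) → DepthLe G (d + 1)

/-- `HasDepth G d`: the depth of `G` is exactly `d`, i.e. `d` is the least
upper bound in the recursive definition of depth. -/
def HasDepth (G : TTGraph) (d : ℕ) : Prop :=
  DepthLe G d ∧ ∀ d' < d, ¬ DepthLe G d'

/-- `G` is reduced: each non-terminal vertex has degree at least `3`, and
no two parallel edges have the same sign. -/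
def IsReducedGraph (G : TTGraph) : Prop :=
  (∀ v ∈ G.verts, v ≠ G.s → v ≠ G.t → 3 ≤ G.toSignedGraph.degree v) ∧
  (∀ e ∈ G.edges, ∀ f ∈ G.edges, G.toSignedGraph.Parallel e f → G.sign e ≠ G.sign f)

/-- `G` is a positive `K₂` (denoted `K₂⁺`). -/
def IsPositiveK2 (G : TTGraph) : Prop :=
  IsSignedK2 G ∧ ∀ e ∈ G.edges, G.sign e = true

/-- `G` is the unbalanced 2-cycle `D`: two parallel edges of opposite signs
joining the two terminals. -/
def IsUnbalanced2Cycle (G : TTGraph) : Prop :=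
  G.verts = {G.s, G.t} ∧ ∃ e f, e ≠ f ∧ G.edges = {e, f} ∧
    G.toSignedGraph.Joins e G.s G.t ∧ G.toSignedGraph.Joins f G.s G.t ∧
    G.sign e ≠ G.sign f

/-- `G` is a string: a copy of `K₂⁺` or `D`, or a series connection of copies
of `K₂⁺` and `D`, in which every non-terminal vertex lies in a 2-cycle. -/
def IsString (G : TTGraph) : Prop :=
  (IsPositiveK2 G ∨ IsUnbalanced2Cycle G ∨
    ∃ l, IsSeriesConnList G l ∧ ∀ H ∈ l, IsPositiveK2 H ∨ IsUnbalanced2Cycle H) ∧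
  ∀ v ∈ G.verts, v ≠ G.s → v ≠ G.t → G.toSignedGraph.In2Cycle v

/-- `G` is a necklace: a parallel connection of two strings, at least one of
which is nontrivial (has more than two vertices). -/
def IsNecklace (G : TTGraph) : Prop :=
  ∃ H₁ H₂, IsParallelConn2 G H₁ H₂ ∧ IsString H₁ ∧ IsString H₂ ∧
    (2 < H₁.verts.card ∨ 2 < H₂.verts.card)

/-- `(o₁, o₂, φ)` is an `(a,b)`-pseudoflow on the two-terminal signed graph
`G`: like a nowhere-zero 6-flow, except that at the source terminal the
outflow exceeds the inflow by `a`, and at the target terminal the inflow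
exceeds the outflow by `b`. -/
structure IsPseudoflow (G : TTGraph) (a b : ℤ) (o₁ o₂ : ℕ → Bool) (φ : ℕ → ℤ) :
    Prop where
  orient : G.toSignedGraph.IsOrientation o₁ o₂
  nonzero : ∀ e ∈ G.edges, φ e ≠ 0
  bounded : ∀ e ∈ G.edges, |φ e| < 6
  conserve : ∀ v ∈ G.verts, v ≠ G.s → v ≠ G.t →
    G.toSignedGraph.excess o₁ o₂ φ v = 0
  out_s : G.toSignedGraph.excess o₁ o₂ φ G.s = -a
  in_t : G.toSignedGraph.excess o₁ o₂ φ G.t = b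

/-- `G` admits an `(a,b)`-pseudoflow. -/
def HasPseudoflow (G : TTGraph) (a b : ℤ) : Prop :=
  ∃ o₁ o₂ φ, IsPseudoflow G a b o₁ o₂ φ

/-- `I₅ = {-5, …, 5}`. -/
noncomputable def I5 : Finset ℤ := Finset.Icc (-5) 5

/-- The pair `(a,b)` is valid for `G`: `a ≠ 0` or `deg(s) ≥ 2`, and
`b ≠ 0` or `deg(t) ≥ 2`. -/
def ValidPair (G : TTGraph) (a b : ℤ) : Prop :=
  (a ≠ 0 ∨ 2 ≤ G.toSignedGraph.degree G.s) ∧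
  (b ≠ 0 ∨ 2 ≤ G.toSignedGraph.degree G.t)

/-- `G` is a flow-admissible signed series-parallel graph with no
nowhere-zero 6-flow, with the minimum number of edges among all such
graphs. -/
def MinCounterexample (G : TTGraph) : Prop :=
  IsSP G ∧ G.toSignedGraph.FlowAdmissible ∧ ¬ G.toSignedGraph.HasNZFlow 6 ∧
  ∀ G' : TTGraph, IsSP G' → G'.toSignedGraph.FlowAdmissible →
    ¬ G'.toSignedGraph.HasNZFlow 6 → G.edges.card ≤ G'.edges.card

/-- `W` is a copy of `S(K₂⁺, D, K₂⁺)`. -/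
def IsSK2DK2 (W : TTGraph) : Prop :=
  ∃ A B C, IsSeriesConnList W [A, B, C] ∧ IsPositiveK2 A ∧
    IsUnbalanced2Cycle B ∧ IsPositiveK2 C

/-- `G'` is obtained from `G` by replacing the piece `H` (with terminals
`H.s`, `H.t`) by the two-terminal graph `W`: the edges and non-terminal
vertices of `H` are removed, `W` (whose new vertices are fresh) is added,
and its terminals are identified with the terminals of `H`. -/
def IsReplacement (G H G' W : TTGraph) : Prop :=
  W.s = H.s ∧ W.t = H.t ∧ G'.s = G.s ∧ G'.t = G.t ∧
  W.verts ∩ G.verts ⊆ {H.s, H.t} ∧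
  G'.verts = (G.verts \ (H.verts \ {H.s, H.t})) ∪ W.verts ∧
  G'.edges = (G.edges \ H.edges) ∪ W.edges ∧
  Disjoint (G.edges \ H.edges) W.edges ∧
  (∀ e ∈ G.edges \ H.edges,
    G'.fst e = G.fst e ∧ G'.snd e = G.snd e ∧ G'.sign e = G.sign e) ∧
  SignedGraph.IsSubgraph W.toSignedGraph G'.toSignedGraph

section Aux
open SignedGraph

lemma dirVal_ne_zero (b : Bool) : dirVal b ≠ 0 := by cases b <;> simp [dirVal]
lemma abs_dirVal (b : Bool) : |dirVal b| = 1 := by cases b <;> simp [dirVal]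
lemma dirVal_mul_self (b : Bool) : dirVal b * dirVal b = 1 := by
  cases b <;> simp [dirVal]

/-- The other end of the edge `g`, seen from the vertex `v`. -/
def otherEnd (P : SignedGraph) (g v : ℕ) : ℕ := if P.fst g = v then P.snd g else P.fst g

/-- `g` is incident with `v` exactly once. -/
def IncOnce (P : SignedGraph) (g v : ℕ) : Prop :=
  (P.fst g = v ∧ P.snd g ≠ v) ∨ (P.fst g ≠ v ∧ P.snd g = v)

lemma otherEnd_ne {P : SignedGraph} {g v : ℕ} (h : IncOnce P g v) : otherEnd P g v ≠ v := by
  rcases h with ⟨h1, h2⟩ | ⟨h1, h2⟩ <;> simp [otherEnd, h1, h2]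

lemma otherEnd_mem {P : SignedGraph} {g v : ℕ} (hg : g ∈ P.edges) :
    otherEnd P g v ∈ P.verts := by
  unfold otherEnd; split
  · exact P.snd_mem g hg
  · exact P.fst_mem g hg

/-- Data needed to suppress the degree-2 vertex `v` with incident edges `e`, `f`. -/
structure SuppData (G : TTGraph) (v e f : ℕ) : Prop where
  hvs : v ≠ G.s
  hvt : v ≠ G.t
  he : e ∈ G.edges
  hf : f ∈ G.edges
  hef : e ≠ f
  hiE : IncOnce G.toSignedGraph e v
  hiF : IncOnce G.toSignedGraph f v
  honly : ∀ g ∈ G.edges, G.fst g = v ∨ G.snd g = v → g = e ∨ g = f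

/-- Suppression of the degree-2 vertex `v`: the two edges `e`, `f` incident
with `v` are replaced by a single edge (labelled `e`) joining their other
ends, whose sign is the product of the signs. -/
def suppress (G : TTGraph) (v e f : ℕ) (h : SuppData G v e f) : TTGraph where
  verts := G.verts.erase v
  edges := G.edges.erase f
  fst := fun g => if g = e then otherEnd G.toSignedGraph e v else G.fst g
  snd := fun g => if g = e then otherEnd G.toSignedGraph f v else G.snd g
  sign := fun g => if g = e then (G.sign e == G.sign f) else G.sign g
  fst_mem := by
    intro g hg
    rcases Finset.mem_erase.mp hg with ⟨hgf, hge⟩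
    by_cases hgeq : g = e
    · simp only [hgeq, if_pos rfl]
      exact Finset.mem_erase.mpr ⟨otherEnd_ne h.hiE, otherEnd_mem h.he⟩
    · simp only [if_neg hgeq]
      refine Finset.mem_erase.mpr ⟨?_, G.fst_mem g hge⟩
      intro hfv
      rcases h.honly g hge (Or.inl hfv) with rfl | rfl
      · exact hgeq rfl
      · exact hgf rfl
  snd_mem := by
    intro g hg
    rcases Finset.mem_erase.mp hg with ⟨hgf, hge⟩
    by_cases hgeq : g = e
    · simp only [hgeq, if_pos rfl]
      exact Finset.mem_erase.mpr ⟨otherEnd_ne h.hiF, otherEnd_mem h.hf⟩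
    · simp only [if_neg hgeq]
      refine Finset.mem_erase.mpr ⟨?_, G.snd_mem g hge⟩
      intro hfv
      rcases h.honly g hge (Or.inr hfv) with rfl | rfl
      · exact hgeq rfl
      · exact hgf rfl
  s := G.s
  t := G.t
  s_mem := Finset.mem_erase.mpr ⟨Ne.symm h.hvs, G.s_mem⟩
  t_mem := Finset.mem_erase.mpr ⟨Ne.symm h.hvt, G.t_mem⟩
  s_ne_t := G.s_ne_t

@[simp] lemma suppress_verts (G : TTGraph) (v e f : ℕ) (h : SuppData G v e f) :
    (suppress G v e f h).verts = G.verts.erase v := rfl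
@[simp] lemma suppress_edges (G : TTGraph) (v e f : ℕ) (h : SuppData G v e f) :
    (suppress G v e f h).edges = G.edges.erase f := rfl
@[simp] lemma suppress_s (G : TTGraph) (v e f : ℕ) (h : SuppData G v e f) :
    (suppress G v e f h).s = G.s := rfl
@[simp] lemma suppress_t (G : TTGraph) (v e f : ℕ) (h : SuppData G v e f) :
    (suppress G v e f h).t = G.t := rfl
lemma suppress_fst (G : TTGraph) (v e f : ℕ) (h : SuppData G v e f) (g : ℕ) :
    (suppress G v e f h).fst g = if g = e then otherEnd G.toSignedGraph e v else G.fst g := rfl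
lemma suppress_snd (G : TTGraph) (v e f : ℕ) (h : SuppData G v e f) (g : ℕ) :
    (suppress G v e f h).snd g = if g = e then otherEnd G.toSignedGraph f v else G.snd g := rfl
lemma suppress_sign (G : TTGraph) (v e f : ℕ) (h : SuppData G v e f) (g : ℕ) :
    (suppress G v e f h).sign g = if g = e then (G.sign e == G.sign f) else G.sign g := rfl

end Aux
section Aux2
open SignedGraph

lemma sub_fst {H G : TTGraph} (hsub : IsSubgraph H.toSignedGraph G.toSignedGraph)
    {g : ℕ} (hg : g ∈ H.edges) : G.fst g = H.fst g := ((hsub.2.2 g hg).1).symm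
lemma sub_snd {H G : TTGraph} (hsub : IsSubgraph H.toSignedGraph G.toSignedGraph)
    {g : ℕ} (hg : g ∈ H.edges) : G.snd g = H.snd g := ((hsub.2.2 g hg).2.1).symm
lemma sub_sign {H G : TTGraph} (hsub : IsSubgraph H.toSignedGraph G.toSignedGraph)
    {g : ℕ} (hg : g ∈ H.edges) : G.sign g = H.sign g := ((hsub.2.2 g hg).2.2).symm

lemma sub_fst_mem {H G : TTGraph} (hsub : IsSubgraph H.toSignedGraph G.toSignedGraph)
    {g : ℕ} (hg : g ∈ H.edges) : G.fst g ∈ H.verts := by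
  rw [sub_fst hsub hg]; exact H.fst_mem g hg
lemma sub_snd_mem {H G : TTGraph} (hsub : IsSubgraph H.toSignedGraph G.toSignedGraph)
    {g : ℕ} (hg : g ∈ H.edges) : G.snd g ∈ H.verts := by
  rw [sub_snd hsub hg]; exact H.snd_mem g hg

/-- Every vertex of a series-parallel graph is incident with an edge. -/
lemma IsSP.exists_incident {G : TTGraph} (h : IsSP G) :
    ∀ z ∈ G.verts, ∃ g ∈ G.edges, G.fst g = z ∨ G.snd g = z := by
  induction h with
  | k2 hk2 =>
    intro z hz
    obtain ⟨hverts, e, hedges, hJ⟩ := hk2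
    rw [hverts] at hz
    refine ⟨e, by simp [hedges], ?_⟩
    rcases Finset.mem_insert.mp hz with rfl | hz
    · rcases hJ with ⟨h1, _⟩ | ⟨_, h2⟩
      · exact Or.inl h1
      · exact Or.inr h2
    · rcases Finset.mem_singleton.mp hz with rfl
      rcases hJ with ⟨_, h2⟩ | ⟨h1, _⟩
      · exact Or.inr h2
      · exact Or.inl h1
  | series hS _ _ ih1 ih2 =>
    intro z hz
    rw [← hS.vert_union] at hz
    rcases Finset.mem_union.mp hz with hz | hz
    · obtain ⟨g, hg, hinc⟩ := ih1 z hz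
      exact ⟨g, hS.edge_union ▸ Finset.mem_union_left _ hg, by
        rw [sub_fst hS.sub1 hg, sub_snd hS.sub1 hg]; exact hinc⟩
    · obtain ⟨g, hg, hinc⟩ := ih2 z hz
      exact ⟨g, hS.edge_union ▸ Finset.mem_union_right _ hg, by
        rw [sub_fst hS.sub2 hg, sub_snd hS.sub2 hg]; exact hinc⟩
  | parallel hP _ _ ih1 ih2 =>
    intro z hz
    rw [← hP.vert_union] at hz
    rcases Finset.mem_union.mp hz with hz | hz
    · obtain ⟨g, hg, hinc⟩ := ih1 z hz
      exact ⟨g, hP.edge_union ▸ Finset.mem_union_left _ hg, by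
        rw [sub_fst hP.sub1 hg, sub_snd hP.sub1 hg]; exact hinc⟩
    · obtain ⟨g, hg, hinc⟩ := ih2 z hz
      exact ⟨g, hP.edge_union ▸ Finset.mem_union_right _ hg, by
        rw [sub_fst hP.sub2 hg, sub_snd hP.sub2 hg]; exact hinc⟩

/-- Series-parallel graphs have no loops. -/
lemma IsSP.no_loop {G : TTGraph} (h : IsSP G) :
    ∀ g ∈ G.edges, G.fst g ≠ G.snd g := by
  induction h with
  | @k2 G0 hk2 =>
    intro g hg
    obtain ⟨_, e, hedges, hJ⟩ := hk2
    rw [hedges, Finset.mem_singleton] at hg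
    subst hg
    rcases hJ with ⟨h1, h2⟩ | ⟨h1, h2⟩ <;> rw [h1, h2]
    · exact G0.s_ne_t
    · exact (G0.s_ne_t).symm
  | series hS _ _ ih1 ih2 =>
    intro g hg
    rw [← hS.edge_union] at hg
    rcases Finset.mem_union.mp hg with hg | hg
    · rw [sub_fst hS.sub1 hg, sub_snd hS.sub1 hg]; exact ih1 g hg
    · rw [sub_fst hS.sub2 hg, sub_snd hS.sub2 hg]; exact ih2 g hg
  | parallel hP _ _ ih1 ih2 =>
    intro g hg
    rw [← hP.edge_union] at hg
    rcases Finset.mem_union.mp hg with hg | hg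
    · rw [sub_fst hP.sub1 hg, sub_snd hP.sub1 hg]; exact ih1 g hg
    · rw [sub_fst hP.sub2 hg, sub_snd hP.sub2 hg]; exact ih2 g hg

lemma IsParallelConn2.symm {G H₁ H₂ : TTGraph} (h : IsParallelConn2 G H₁ H₂) :
    IsParallelConn2 G H₂ H₁ where
  sub1 := h.sub2
  sub2 := h.sub1
  vert_union := by rw [Finset.union_comm]; exact h.vert_union
  vert_inter := by rw [Finset.inter_comm, h.vert_inter, h.src_eq, h.tgt_eq]
  src_eq := h.src_eq.symm
  tgt_eq := h.tgt_eq.symm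
  edge_union := by rw [Finset.union_comm]; exact h.edge_union
  edge_disj := h.edge_disj.symm
  src := h.src.trans h.src_eq
  tgt := h.tgt.trans h.tgt_eq

end Aux2
section Aux3
open SignedGraph

/-- The direction of the half-edge of `g` at `v`. -/
def atV (P : SignedGraph) (o₁ o₂ : ℕ → Bool) (v g : ℕ) : Bool :=
  if P.fst g = v then o₁ g else o₂ g

/-- The direction of the half-edge of `g` at its other end. -/
def awV (P : SignedGraph) (o₁ o₂ : ℕ → Bool) (v g : ℕ) : Bool :=
  if P.fst g = v then o₂ g else o₁ g

lemma orient_atV {P : SignedGraph} {o₁ o₂ : ℕ → Bool} (ho : P.IsOrientation o₁ o₂)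
    {g : ℕ} (hg : g ∈ P.edges) (v : ℕ) :
    (P.sign g = true → atV P o₁ o₂ v g ≠ awV P o₁ o₂ v g) ∧
    (P.sign g = false → atV P o₁ o₂ v g = awV P o₁ o₂ v g) := by
  unfold atV awV
  split
  · exact ho g hg
  · exact ⟨fun hs => Ne.symm ((ho g hg).1 hs), fun hs => ((ho g hg).2 hs).symm⟩

lemma SuppData.hv {G : TTGraph} {v e f : ℕ} (h : SuppData G v e f) : v ∈ G.verts := by
  rcases h.hiE with ⟨p1, _⟩ | ⟨_, p2⟩
  · exact p1 ▸ G.fst_mem e h.he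
  · exact p2 ▸ G.snd_mem e h.he

lemma excess_pair {G : TTGraph} {v e f : ℕ} (h : SuppData G v e f)
    (o₁ o₂ : ℕ → Bool) (φ : ℕ → ℤ) :
    G.toSignedGraph.excess o₁ o₂ φ v =
      dirVal (atV G.toSignedGraph o₁ o₂ v e) * φ e +
      dirVal (atV G.toSignedGraph o₁ o₂ v f) * φ f := by
  unfold SignedGraph.excess
  have hsub : ({e, f} : Finset ℕ) ⊆ G.edges := by
    intro x hx
    rcases Finset.mem_insert.mp hx with rfl | hx
    · exact h.he
    · exact Finset.mem_singleton.mp hx ▸ h.hf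
  rw [← Finset.sum_subset hsub]
  · rw [Finset.sum_pair h.hef]
    rcases h.hiE with ⟨p1, p2⟩ | ⟨p1, p2⟩ <;> rcases h.hiF with ⟨q1, q2⟩ | ⟨q1, q2⟩ <;>
      simp [atV, p1, p2, q1, q2]
  · intro x hx hnx
    simp only [Finset.mem_insert, Finset.mem_singleton, not_or] at hnx
    have h1 : ¬ G.fst x = v := fun hc => by
      rcases h.honly x hx (Or.inl hc) with rfl | rfl
      exacts [hnx.1 rfl, hnx.2 rfl]
    have h2 : ¬ G.snd x = v := fun hc => by
      rcases h.honly x hx (Or.inr hc) with rfl | rfl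
      exacts [hnx.1 rfl, hnx.2 rfl]
    simp [h1, h2]

/-- Key excess identity between a graph and its suppression. -/
lemma excess_suppress {G : TTGraph} {v e f : ℕ} (h : SuppData G v e f)
    (o₁ o₂ o₁' o₂' : ℕ → Bool) (φ φ' : ℕ → ℤ)
    (hagree : ∀ g ∈ G.edges, g ≠ e → g ≠ f → o₁' g = o₁ g ∧ o₂' g = o₂ g ∧ φ' g = φ g)
    (hu : dirVal (o₁' e) * φ' e = dirVal (awV G.toSignedGraph o₁ o₂ v e) * φ e)
    (hw : dirVal (o₂' e) * φ' e = dirVal (awV G.toSignedGraph o₁ o₂ v f) * φ f)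
    {z : ℕ} (hz : z ≠ v) :
    (suppress G v e f h).toSignedGraph.excess o₁' o₂' φ' z =
      G.toSignedGraph.excess o₁ o₂ φ z := by
  unfold SignedGraph.excess
  have hef : e ∈ G.edges.erase f := Finset.mem_erase.mpr ⟨h.hef, h.he⟩
  rw [show (suppress G v e f h).edges = G.edges.erase f from rfl]
  rw [← Finset.add_sum_erase _ _ hef]
  conv_rhs => rw [← Finset.add_sum_erase _ _ h.hf, ← Finset.add_sum_erase _
    (fun g => ((if G.fst g = z then dirVal (o₁ g) * φ g else 0) +
       (if G.snd g = z then dirVal (o₂ g) * φ g else 0))) hef]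
  have hrest : ∑ g ∈ (G.edges.erase f).erase e,
      ((if (suppress G v e f h).fst g = z then dirVal (o₁' g) * φ' g else 0) +
       (if (suppress G v e f h).snd g = z then dirVal (o₂' g) * φ' g else 0)) =
      ∑ g ∈ (G.edges.erase f).erase e,
      ((if G.fst g = z then dirVal (o₁ g) * φ g else 0) +
       (if G.snd g = z then dirVal (o₂ g) * φ g else 0)) := by
    apply Finset.sum_congr rfl
    intro g hg
    rcases Finset.mem_erase.mp hg with ⟨hge, hg'⟩
    rcases Finset.mem_erase.mp hg' with ⟨hgf, hgmem⟩
    obtain ⟨e1, e2, e3⟩ := hagree g hgmem hge hgf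
    rw [suppress_fst, suppress_snd, if_neg hge, if_neg hge, e1, e2, e3]
  rw [hrest]
  have hmain : ((if (suppress G v e f h).fst e = z then dirVal (o₁' e) * φ' e else 0) +
      (if (suppress G v e f h).snd e = z then dirVal (o₂' e) * φ' e else 0)) =
      ((if G.fst f = z then dirVal (o₁ f) * φ f else 0) +
       (if G.snd f = z then dirVal (o₂ f) * φ f else 0)) +
      ((if G.fst e = z then dirVal (o₁ e) * φ e else 0) +
       (if G.snd e = z then dirVal (o₂ e) * φ e else 0)) := by
    rw [suppress_fst, suppress_snd, if_pos rfl, if_pos rfl]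
    unfold awV at hu hw
    unfold otherEnd
    rcases h.hiE with ⟨p1, p2⟩ | ⟨p1, p2⟩ <;> rcases h.hiF with ⟨q1, q2⟩ | ⟨q1, q2⟩
    · rw [if_pos p1] at hu ⊢
      rw [if_pos q1] at hw ⊢
      rw [if_neg (show ¬ G.fst e = z from fun hc => hz (hc ▸ p1)),
          if_neg (show ¬ G.fst f = z from fun hc => hz (hc ▸ q1)), hu, hw]
      ring
    · rw [if_pos p1] at hu ⊢
      rw [if_neg q1] at hw ⊢
      rw [if_neg (show ¬ G.fst e = z from fun hc => hz (hc ▸ p1)),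
          if_neg (show ¬ G.snd f = z from fun hc => hz (hc ▸ q2)), hu, hw]
      ring
    · rw [if_neg p1] at hu ⊢
      rw [if_pos q1] at hw ⊢
      rw [if_neg (show ¬ G.snd e = z from fun hc => hz (hc ▸ p2)),
          if_neg (show ¬ G.fst f = z from fun hc => hz (hc ▸ q1)), hu, hw]
      ring
    · rw [if_neg p1] at hu ⊢
      rw [if_neg q1] at hw ⊢
      rw [if_neg (show ¬ G.snd e = z from fun hc => hz (hc ▸ p2)),
          if_neg (show ¬ G.snd f = z from fun hc => hz (hc ▸ q2)), hu, hw]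
      ring
  rw [hmain]
  ring

end Aux3
section Aux4
open SignedGraph

lemma bool_orient_merge : ∀ se sf a ue b fw : Bool,
    ((se = true → a ≠ ue) ∧ (se = false → a = ue)) →
    ((sf = true → b ≠ fw) ∧ (sf = false → b = fw)) →
    (((se == sf) = true → ue ≠ xor (a == b) fw) ∧
     ((se == sf) = false → ue = xor (a == b) fw)) := by decide

lemma dirVal_xor (a b c : Bool) :
    dirVal (xor (a == b) c) = -(dirVal a * dirVal b * dirVal c) := by
  cases a <;> cases b <;> cases c <;> decide

lemma dirVal_atV_awV (a b : Bool) (x y : ℤ) (hx : dirVal a * x + dirVal b * y = 0) :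
    y = -(dirVal a * dirVal b * x) := by
  cases a <;> cases b <;> simp [dirVal] at hx ⊢ <;> linarith

/-- Forward orientation of the merged edge. -/
def fwdO₁ (G : TTGraph) (o₁ o₂ : ℕ → Bool) (v e : ℕ) : ℕ → Bool :=
  fun g => if g = e then awV G.toSignedGraph o₁ o₂ v e else o₁ g
def fwdO₂ (G : TTGraph) (o₁ o₂ : ℕ → Bool) (v e f : ℕ) : ℕ → Bool :=
  fun g => if g = e then
    xor (atV G.toSignedGraph o₁ o₂ v e == atV G.toSignedGraph o₁ o₂ v f)
      (awV G.toSignedGraph o₁ o₂ v f)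
  else o₂ g

@[simp] lemma fwdO₁_self (G : TTGraph) (o₁ o₂ : ℕ → Bool) (v e : ℕ) :
    fwdO₁ G o₁ o₂ v e e = awV G.toSignedGraph o₁ o₂ v e := if_pos rfl
@[simp] lemma fwdO₂_self (G : TTGraph) (o₁ o₂ : ℕ → Bool) (v e f : ℕ) :
    fwdO₂ G o₁ o₂ v e f e =
      xor (atV G.toSignedGraph o₁ o₂ v e == atV G.toSignedGraph o₁ o₂ v f)
        (awV G.toSignedGraph o₁ o₂ v f) := if_pos rfl
lemma fwdO₁_other (G : TTGraph) (o₁ o₂ : ℕ → Bool) (v e : ℕ) {g : ℕ} (hg : g ≠ e) :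
    fwdO₁ G o₁ o₂ v e g = o₁ g := if_neg hg
lemma fwdO₂_other (G : TTGraph) (o₁ o₂ : ℕ → Bool) (v e f : ℕ) {g : ℕ} (hg : g ≠ e) :
    fwdO₂ G o₁ o₂ v e f g = o₂ g := if_neg hg

/-- A nowhere-zero `k`-flow on `G` induces one on the suppressed graph. -/
lemma suppress_flow_forward {G : TTGraph} {v e f : ℕ} (h : SuppData G v e f)
    {k : ℕ} {o₁ o₂ : ℕ → Bool} {φ : ℕ → ℤ}
    (hfl : G.toSignedGraph.IsNZFlow k o₁ o₂ φ) :
    (suppress G v e f h).toSignedGraph.HasNZFlow k := by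
  refine ⟨fwdO₁ G o₁ o₂ v e, fwdO₂ G o₁ o₂ v e f, φ, ?_, ?_, ?_, ?_⟩
  · -- orientation
    intro g hg
    rcases Finset.mem_erase.mp hg with ⟨hgf, hgmem⟩
    by_cases hge : g = e
    · subst hge
      rw [suppress_sign, if_pos rfl, fwdO₁_self, fwdO₂_self]
      exact bool_orient_merge (G.sign g) (G.sign f) _ _ _ _
        (orient_atV hfl.orient hgmem v) (orient_atV hfl.orient h.hf v)
    · rw [suppress_sign, if_neg hge, fwdO₁_other _ _ _ _ _ hge, fwdO₂_other _ _ _ _ _ _ hge]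
      exact hfl.orient g hgmem
  · intro g hg
    exact hfl.nonzero g (Finset.mem_of_mem_erase hg)
  · intro g hg
    exact hfl.bounded g (Finset.mem_of_mem_erase hg)
  · intro z hz
    rcases Finset.mem_erase.mp hz with ⟨hzv, hzmem⟩
    rw [excess_suppress h o₁ o₂ _ _ φ φ ?_ ?_ ?_ hzv]
    · exact hfl.conserve z hzmem
    · intro g hg hge hgf
      exact ⟨fwdO₁_other _ _ _ _ _ hge, fwdO₂_other _ _ _ _ _ _ hge, rfl⟩
    · rw [fwdO₁_self]
    · rw [fwdO₂_self]
      have hcons := hfl.conserve v h.hv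
      rw [excess_pair h o₁ o₂ φ] at hcons
      rw [dirVal_xor, dirVal_atV_awV _ _ (φ e) (φ f) hcons]
      ring

lemma bool_back_pair : ∀ se x : Bool,
    (se = true → (if se then !x else x) ≠ x) ∧
    (se = false → (if se then !x else x) = x) := by decide

lemma bool_back_cons : ∀ se sf ue o2 : Bool,
    (((se == sf) = true → ue ≠ o2) ∧ ((se == sf) = false → ue = o2)) →
    dirVal (if se then !ue else ue) + dirVal (if sf then !o2 else o2) = 0 := by decide

/-- Direction of the new half-edge of `e` at `v`. -/
def bwdA (G : TTGraph) (o₁' : ℕ → Bool) (e : ℕ) : Bool :=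
  if G.sign e then !(o₁' e) else o₁' e
/-- Direction of the new half-edge of `f` at `v`. -/
def bwdB (G : TTGraph) (o₂' : ℕ → Bool) (e f : ℕ) : Bool :=
  if G.sign f then !(o₂' e) else o₂' e

def bwdO₁ (G : TTGraph) (o₁' o₂' : ℕ → Bool) (v e f : ℕ) : ℕ → Bool :=
  fun g => if g = e then (if G.fst e = v then bwdA G o₁' e else o₁' e)
    else if g = f then (if G.fst f = v then bwdB G o₂' e f else o₂' e) else o₁' g
def bwdO₂ (G : TTGraph) (o₁' o₂' : ℕ → Bool) (v e f : ℕ) : ℕ → Bool :=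
  fun g => if g = e then (if G.fst e = v then o₁' e else bwdA G o₁' e)
    else if g = f then (if G.fst f = v then o₂' e else bwdB G o₂' e f) else o₂' g
def bwdφ (G : TTGraph) (o₂' : ℕ → Bool) (φ' : ℕ → ℤ) (e f : ℕ) : ℕ → ℤ :=
  fun g => if g = e then φ' e else if g = f then φ' e else φ' g

/-- A nowhere-zero `k`-flow on the suppressed graph induces one on `G`. -/
lemma suppress_flow_backward {G : TTGraph} {v e f : ℕ} (h : SuppData G v e f)
    {k : ℕ} {o₁' o₂' : ℕ → Bool} {φ' : ℕ → ℤ}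
    (hfl : (suppress G v e f h).toSignedGraph.IsNZFlow k o₁' o₂' φ') :
    G.toSignedGraph.HasNZFlow k := by
  classical
  have hfe : f ≠ e := Ne.symm h.hef
  set o₁ := bwdO₁ G o₁' o₂' v e f with ho₁
  set o₂ := bwdO₂ G o₁' o₂' v e f with ho₂
  set φ := bwdφ G o₂' φ' e f with hφ
  have hO₁e : o₁ e = (if G.fst e = v then bwdA G o₁' e else o₁' e) := if_pos rfl
  have hO₂e : o₂ e = (if G.fst e = v then o₁' e else bwdA G o₁' e) := if_pos rfl
  have hO₁f : o₁ f = (if G.fst f = v then bwdB G o₂' e f else o₂' e) := by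
    rw [ho₁]; show (if f = e then _ else _) = _; rw [if_neg hfe, if_pos rfl]
  have hO₂f : o₂ f = (if G.fst f = v then o₂' e else bwdB G o₂' e f) := by
    rw [ho₂]; show (if f = e then _ else _) = _; rw [if_neg hfe, if_pos rfl]
  have hO₁g : ∀ g, g ≠ e → g ≠ f → o₁ g = o₁' g := by
    intro g h1 h2; rw [ho₁]; show (if g = e then _ else _) = _; rw [if_neg h1, if_neg h2]
  have hO₂g : ∀ g, g ≠ e → g ≠ f → o₂ g = o₂' g := by
    intro g h1 h2; rw [ho₂]; show (if g = e then _ else _) = _; rw [if_neg h1, if_neg h2]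
  have hφe : φ e = φ' e := if_pos rfl
  have hφf : φ f = φ' e := by
    rw [hφ]; show (if f = e then _ else _) = _; rw [if_neg hfe, if_pos rfl]
  have hφg : ∀ g, g ≠ e → g ≠ f → φ g = φ' g := by
    intro g h1 h2; rw [hφ]; show (if g = e then _ else _) = _; rw [if_neg h1, if_neg h2]
  have heG' : e ∈ (suppress G v e f h).edges := Finset.mem_erase.mpr ⟨h.hef, h.he⟩
  have horiE := hfl.orient e heG'
  rw [suppress_sign, if_pos rfl] at horiE
  have hatE : atV G.toSignedGraph o₁ o₂ v e = bwdA G o₁' e := by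
    unfold atV; rw [hO₁e, hO₂e]; split <;> simp_all
  have hawE : awV G.toSignedGraph o₁ o₂ v e = o₁' e := by
    unfold awV; rw [hO₁e, hO₂e]; split <;> simp_all
  have hatF : atV G.toSignedGraph o₁ o₂ v f = bwdB G o₂' e f := by
    unfold atV; rw [hO₁f, hO₂f]; split <;> simp_all
  have hawF : awV G.toSignedGraph o₁ o₂ v f = o₂' e := by
    unfold awV; rw [hO₁f, hO₂f]; split <;> simp_all
  refine ⟨o₁, o₂, φ, ?_, ?_, ?_, ?_⟩
  · -- orientation
    intro g hg
    by_cases hge : g = e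
    · subst hge
      rw [hO₁e, hO₂e]
      constructor
      · intro hs; unfold bwdA; rw [hs]; split <;> simp
      · intro hs; unfold bwdA; rw [hs]; simp
    · by_cases hgf : g = f
      · subst hgf
        rw [hO₁f, hO₂f]
        constructor
        · intro hs; unfold bwdB; rw [hs]; split <;> simp
        · intro hs; unfold bwdB; rw [hs]; simp
      · have hg' : g ∈ (suppress G v e f h).edges := Finset.mem_erase.mpr ⟨hgf, hg⟩
        have := hfl.orient g hg'
        rw [suppress_sign, if_neg hge] at this
        rw [hO₁g g hge hgf, hO₂g g hge hgf]
        exact this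
  · -- nonzero
    intro g hg
    by_cases hge : g = e
    · subst hge; rw [hφe]; exact hfl.nonzero g heG'
    · by_cases hgf : g = f
      · subst hgf
        rw [hφf]
        exact hfl.nonzero e heG'
      · rw [hφg g hge hgf]
        exact hfl.nonzero g (Finset.mem_erase.mpr ⟨hgf, hg⟩)
  · -- bounded
    intro g hg
    by_cases hge : g = e
    · subst hge; rw [hφe]; exact hfl.bounded g heG'
    · by_cases hgf : g = f
      · subst hgf
        rw [hφf]
        exact hfl.bounded e heG'
      · rw [hφg g hge hgf]
        exact hfl.bounded g (Finset.mem_erase.mpr ⟨hgf, hg⟩)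
  · -- conservation
    have hEXC : ∀ z : ℕ, z ≠ v →
        (suppress G v e f h).toSignedGraph.excess o₁' o₂' φ' z =
          G.toSignedGraph.excess o₁ o₂ φ z := by
      intro z hzv
      refine excess_suppress h o₁ o₂ o₁' o₂' φ φ' ?_ ?_ ?_ hzv
      · intro g hg hge hgf
        exact ⟨(hO₁g g hge hgf).symm, (hO₂g g hge hgf).symm, (hφg g hge hgf).symm⟩
      · rw [hawE, hφe]
      · rw [hawF, hφf]
    intro z hz
    by_cases hzv : z = v
    · subst hzv
      rw [excess_pair h o₁ o₂ φ, hatE, hatF, hφe, hφf]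
      have h0 := bool_back_cons (G.sign e) (G.sign f) (o₁' e) (o₂' e) horiE
      unfold bwdA bwdB
      calc dirVal (if G.sign e = true then !(o₁' e) else o₁' e) * φ' e +
            dirVal (if G.sign f = true then !(o₂' e) else o₂' e) * φ' e
          = (dirVal (if G.sign e = true then !(o₁' e) else o₁' e) +
             dirVal (if G.sign f = true then !(o₂' e) else o₂' e)) * φ' e := by ring
        _ = 0 := by rw [h0]; ring
    · rw [← hEXC z hzv]
      exact hfl.conserve z (Finset.mem_erase.mpr ⟨hzv, hz⟩)

end Aux4
section Aux5
open SignedGraph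

lemma IsSubgraph.trans' {A B C : SignedGraph} (h1 : IsSubgraph A B) (h2 : IsSubgraph B C) :
    IsSubgraph A C := by
  refine ⟨h1.1.trans h2.1, h1.2.1.trans h2.2.1, ?_⟩
  intro g hg
  obtain ⟨a1, a2, a3⟩ := h1.2.2 g hg
  obtain ⟨b1, b2, b3⟩ := h2.2.2 g (h1.2.1 hg)
  exact ⟨a1.trans b1, a2.trans b2, a3.trans b3⟩

lemma joins_of_sub {H G : TTGraph} (hsub : IsSubgraph H.toSignedGraph G.toSignedGraph)
    {g a b : ℕ} (hg : g ∈ H.edges) (hJ : H.toSignedGraph.Joins g a b) :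
    G.toSignedGraph.Joins g a b := by
  rcases hJ with ⟨h1, h2⟩ | ⟨h1, h2⟩
  · exact Or.inl ⟨(sub_fst hsub hg).trans h1, (sub_snd hsub hg).trans h2⟩
  · exact Or.inr ⟨(sub_fst hsub hg).trans h1, (sub_snd hsub hg).trans h2⟩

lemma otherEnd_of_joins {P : SignedGraph} {g a b : ℕ} (hJ : P.Joins g a b) (hab : a ≠ b) :
    otherEnd P g b = a := by
  rcases hJ with ⟨h1, h2⟩ | ⟨h1, h2⟩
  · unfold otherEnd; rw [if_neg (h1 ▸ hab), h1]
  · unfold otherEnd; rw [if_pos h1, h2]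

lemma otherEnd_sub {H G : TTGraph} (hsub : IsSubgraph H.toSignedGraph G.toSignedGraph)
    {g : ℕ} (hg : g ∈ H.edges) (v : ℕ) :
    otherEnd G.toSignedGraph g v = otherEnd H.toSignedGraph g v := by
  unfold otherEnd
  rw [sub_fst hsub hg, sub_snd hsub hg]

lemma joins_otherEnd {P : SignedGraph} {g v : ℕ} (hinc : IncOnce P g v) :
    P.Joins g (otherEnd P g v) v := by
  rcases hinc with ⟨h1, h2⟩ | ⟨h1, h2⟩
  · unfold otherEnd; rw [if_pos h1]; exact Or.inr ⟨h1, rfl⟩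
  · unfold otherEnd; rw [if_neg h1]; exact Or.inl ⟨rfl, h2⟩

lemma joins_otherEnd' {P : SignedGraph} {g v : ℕ} (hinc : IncOnce P g v) :
    P.Joins g v (otherEnd P g v) := by
  rcases hinc with ⟨h1, h2⟩ | ⟨h1, h2⟩
  · unfold otherEnd; rw [if_pos h1]; exact Or.inl ⟨h1, rfl⟩
  · unfold otherEnd; rw [if_neg h1]; exact Or.inr ⟨rfl, h2⟩

/-- The two-terminal graph consisting of the single edge `g` of `P` joining
`a` to `b`, with source `a` and target `b`. -/
def oneEdge (P : SignedGraph) (g a b : ℕ) (hJ : P.Joins g a b) (hab : a ≠ b) : TTGraph where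
  verts := {a, b}
  edges := {g}
  fst := P.fst
  snd := P.snd
  sign := P.sign
  fst_mem := by
    intro x hx
    rw [Finset.mem_singleton] at hx; subst hx
    rcases hJ with ⟨h1, _⟩ | ⟨h1, _⟩ <;> simp [h1]
  snd_mem := by
    intro x hx
    rw [Finset.mem_singleton] at hx; subst hx
    rcases hJ with ⟨_, h2⟩ | ⟨_, h2⟩ <;> simp [h2]
  s := a
  t := b
  s_mem := by simp
  t_mem := by simp
  s_ne_t := hab

@[simp] lemma oneEdge_verts (P : SignedGraph) (g a b : ℕ) (hJ : P.Joins g a b) (hab : a ≠ b) :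
    (oneEdge P g a b hJ hab).verts = {a, b} := rfl
@[simp] lemma oneEdge_edges (P : SignedGraph) (g a b : ℕ) (hJ : P.Joins g a b) (hab : a ≠ b) :
    (oneEdge P g a b hJ hab).edges = {g} := rfl
@[simp] lemma oneEdge_s (P : SignedGraph) (g a b : ℕ) (hJ : P.Joins g a b) (hab : a ≠ b) :
    (oneEdge P g a b hJ hab).s = a := rfl
@[simp] lemma oneEdge_t (P : SignedGraph) (g a b : ℕ) (hJ : P.Joins g a b) (hab : a ≠ b) :
    (oneEdge P g a b hJ hab).t = b := rfl
@[simp] lemma oneEdge_fst (P : SignedGraph) (g a b : ℕ) (hJ : P.Joins g a b) (hab : a ≠ b)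
    (x : ℕ) : (oneEdge P g a b hJ hab).fst x = P.fst x := rfl
@[simp] lemma oneEdge_snd (P : SignedGraph) (g a b : ℕ) (hJ : P.Joins g a b) (hab : a ≠ b)
    (x : ℕ) : (oneEdge P g a b hJ hab).snd x = P.snd x := rfl

lemma oneEdge_isK2 (P : SignedGraph) (g a b : ℕ) (hJ : P.Joins g a b) (hab : a ≠ b) :
    IsSignedK2 (oneEdge P g a b hJ hab) := ⟨rfl, g, rfl, hJ⟩

lemma oneEdge_isSP (P : SignedGraph) (g a b : ℕ) (hJ : P.Joins g a b) (hab : a ≠ b) :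
    IsSP (oneEdge P g a b hJ hab) := IsSP.k2 (oneEdge_isK2 P g a b hJ hab)

end Aux5
section Aux6
open SignedGraph

/-- If the target terminal of a series-parallel graph has a unique incident
edge `g`, then either the graph is a single edge, or it is a series
connection of a series-parallel graph with the single edge `g`. -/
lemma sp_pendant_t {H : TTGraph} (hsp : IsSP H) :
    ∀ g, g ∈ H.edges → IncOnce H.toSignedGraph g H.t →
    (∀ g' ∈ H.edges, H.fst g' = H.t ∨ H.snd g' = H.t → g' = g) →
    IsSignedK2 H ∨
    ∃ A, IsSP A ∧ ∀ (hJ : H.toSignedGraph.Joins g (otherEnd H.toSignedGraph g H.t) H.t)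
      (hne : otherEnd H.toSignedGraph g H.t ≠ H.t),
      IsSeriesConn2 H A (oneEdge H.toSignedGraph g (otherEnd H.toSignedGraph g H.t) H.t hJ hne) := by
  induction hsp with
  | @k2 G0 hk2 => exact fun _ _ _ _ => Or.inl hk2
  | @parallel G0 H₁ H₂ hP hsp1 hsp2 ih1 ih2 =>
    intro g hg hinc huniq
    exfalso
    obtain ⟨g₁, hg₁, hinc₁⟩ := hsp1.exists_incident H₁.t H₁.t_mem
    obtain ⟨g₂, hg₂, hinc₂⟩ := hsp2.exists_incident H₂.t H₂.t_mem
    have e₁ : g₁ = g := by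
      apply huniq g₁ (hP.edge_union ▸ Finset.mem_union_left _ hg₁)
      rw [sub_fst hP.sub1 hg₁, sub_snd hP.sub1 hg₁, hP.tgt]
      exact hinc₁
    have e₂ : g₂ = g := by
      apply huniq g₂ (hP.edge_union ▸ Finset.mem_union_right _ hg₂)
      rw [sub_fst hP.sub2 hg₂, sub_snd hP.sub2 hg₂, hP.tgt, hP.tgt_eq]
      exact hinc₂
    subst e₁; subst e₂
    exact Finset.disjoint_left.mp hP.edge_disj hg₁ hg₂
  | @series G0 B₁ B₂ hS hsp1 hsp2 ih1 ih2 =>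
    intro g hg hinc huniq
    have htB₂ : G0.t = B₂.t := hS.tgt
    have htne : B₂.s ≠ G0.t := fun hc => B₂.s_ne_t (hc.trans htB₂)
    have htnotB₁ : G0.t ∉ B₁.verts := by
      intro hmem
      have hmem2 : G0.t ∈ B₂.verts := htB₂ ▸ B₂.t_mem
      have h3 : G0.t ∈ ({B₁.t} : Finset ℕ) := by
        rw [← hS.vert_inter]; exact Finset.mem_inter.mpr ⟨hmem, hmem2⟩
      rw [Finset.mem_singleton] at h3
      exact htne ((h3.trans hS.mid).symm)
    -- g belongs to B₂
    have hgB₂ : g ∈ B₂.edges := by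
      rw [← hS.edge_union] at hg
      rcases Finset.mem_union.mp hg with hg1 | hg2
      · exfalso
        apply htnotB₁
        rcases hinc with ⟨h1, _⟩ | ⟨_, h2⟩
        · exact h1 ▸ sub_fst_mem hS.sub1 hg1
        · exact h2 ▸ sub_snd_mem hS.sub1 hg1
      · exact hg2
    have hincB₂ : IncOnce B₂.toSignedGraph g B₂.t := by
      rcases hinc with ⟨h1, h2⟩ | ⟨h1, h2⟩
      · exact Or.inl ⟨by rw [← sub_fst hS.sub2 hgB₂, h1, htB₂],
          by rw [← sub_snd hS.sub2 hgB₂, ← htB₂]; exact h2⟩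
      · exact Or.inr ⟨by rw [← sub_fst hS.sub2 hgB₂, ← htB₂]; exact h1,
          by rw [← sub_snd hS.sub2 hgB₂, h2, htB₂]⟩
    have huniqB₂ : ∀ g' ∈ B₂.edges, B₂.fst g' = B₂.t ∨ B₂.snd g' = B₂.t → g' = g := by
      intro g' hg' hinc'
      apply huniq g' (hS.edge_union ▸ Finset.mem_union_right _ hg')
      rw [sub_fst hS.sub2 hg', sub_snd hS.sub2 hg', htB₂]
      exact hinc'
    have hOeq : otherEnd G0.toSignedGraph g G0.t = otherEnd B₂.toSignedGraph g B₂.t := by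
      rw [htB₂]; exact otherEnd_sub hS.sub2 hgB₂ B₂.t
    rcases ih2 g hgB₂ hincB₂ huniqB₂ with hK2 | ⟨A₂, hspA₂, hconn⟩
    · -- B₂ is a single edge
      right
      refine ⟨B₁, hsp1, ?_⟩
      intro hJ hne
      obtain ⟨hv2, e₀, he₀, hJ₀⟩ := hK2
      have hge₀ : e₀ = g := by
        have h5 := hgB₂; rw [he₀, Finset.mem_singleton] at h5; exact h5.symm
      rw [hge₀] at he₀ hJ₀
      have hu : otherEnd G0.toSignedGraph g G0.t = B₂.s := by
        rw [hOeq]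
        exact otherEnd_of_joins hJ₀ B₂.s_ne_t
      refine ⟨hS.sub1, ?_, ?_, ?_, ?_, ?_, ?_, hS.src, rfl⟩
      · -- sub2 : oneEdge ⊑ G0
        refine ⟨?_, ?_, ?_⟩
        · intro x hx
          rw [oneEdge_verts, Finset.mem_insert, Finset.mem_singleton] at hx
          rcases hx with rfl | rfl
          · rw [hu]; exact hS.sub2.1 B₂.s_mem
          · exact G0.t_mem
        · intro x hx
          rw [oneEdge_edges, Finset.mem_singleton] at hx
          subst hx; exact hg
        · intro x _; exact ⟨rfl, rfl, rfl⟩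
      · rw [oneEdge_verts, hu, ← hS.vert_union, hv2, htB₂]
      · rw [oneEdge_verts, hu, ← hS.vert_inter, hv2, htB₂]
      · rw [oneEdge_s, hu, hS.mid]
      · rw [oneEdge_edges, ← hS.edge_union, he₀]
      · rw [oneEdge_edges, ← he₀]; exact hS.edge_disj
    · -- B₂ = S(A₂, g), build C = S(B₁, A₂)
      right
      have hJ₂ := joins_otherEnd hincB₂
      have hne₂ := otherEnd_ne hincB₂
      have hconn' := hconn hJ₂ hne₂
      have hsubA₂ : IsSubgraph A₂.toSignedGraph G0.toSignedGraph :=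
        IsSubgraph.trans' hconn'.sub1 hS.sub2
      have hA₂t : A₂.t = otherEnd B₂.toSignedGraph g B₂.t := hconn'.mid
      have htnotA₂ : G0.t ∉ A₂.verts := by
        intro hmem
        have h1 : B₂.t ∈ A₂.verts := htB₂ ▸ hmem
        have h2 : B₂.t ∈ (oneEdge B₂.toSignedGraph g _ B₂.t hJ₂ hne₂).verts := by
          rw [oneEdge_verts]; simp
        have h3 : B₂.t ∈ ({A₂.t} : Finset ℕ) := by
          rw [← hconn'.vert_inter]; exact Finset.mem_inter.mpr ⟨h1, h2⟩
        rw [Finset.mem_singleton] at h3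
        exact hne₂ ((h3.trans hA₂t).symm)
      have hgnotB₁ : g ∉ B₁.edges := fun hc =>
        Finset.disjoint_left.mp hS.edge_disj hc hgB₂
      have hgnotA₂ : g ∉ A₂.edges := fun hc =>
        Finset.disjoint_left.mp hconn'.edge_disj hc (by rw [oneEdge_edges]; simp)
      have hsneC : G0.s ≠ A₂.t := by
        intro hc
        have h1 : G0.s ∈ A₂.verts := hc ▸ A₂.t_mem
        have h2 : G0.s ∈ B₁.verts := hS.src ▸ B₁.s_mem
        have h3 : G0.s ∈ ({B₁.t} : Finset ℕ) := by
          rw [← hS.vert_inter]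
          exact Finset.mem_inter.mpr ⟨h2, hconn'.sub1.1 h1⟩
        rw [Finset.mem_singleton] at h3
        exact B₁.s_ne_t (hS.src.symm.trans h3)
      refine ⟨⟨⟨B₁.verts ∪ A₂.verts, B₁.edges ∪ A₂.edges, G0.fst, G0.snd, G0.sign,
        ?_, ?_⟩, G0.s, A₂.t, ?_, ?_, hsneC⟩, ?_, ?_⟩
      · intro x hx
        rcases Finset.mem_union.mp hx with hx | hx
        · exact Finset.mem_union_left _ (sub_fst_mem hS.sub1 hx)
        · exact Finset.mem_union_right _ (sub_fst_mem hsubA₂ hx)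
      · intro x hx
        rcases Finset.mem_union.mp hx with hx | hx
        · exact Finset.mem_union_left _ (sub_snd_mem hS.sub1 hx)
        · exact Finset.mem_union_right _ (sub_snd_mem hsubA₂ hx)
      · exact Finset.mem_union_left _ (hS.src ▸ B₁.s_mem)
      · exact Finset.mem_union_right _ A₂.t_mem
      · -- IsSP C
        refine IsSP.series ?_ hsp1 hspA₂
        refine ⟨?_, ?_, rfl, ?_, ?_, rfl, ?_, hS.src, rfl⟩
        · exact ⟨Finset.subset_union_left, Finset.subset_union_left,
            fun x hx => ⟨(sub_fst hS.sub1 hx).symm, (sub_snd hS.sub1 hx).symm,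
              (sub_sign hS.sub1 hx).symm⟩⟩
        · exact ⟨Finset.subset_union_right, Finset.subset_union_right,
            fun x hx => ⟨(sub_fst hsubA₂ hx).symm, (sub_snd hsubA₂ hx).symm,
              (sub_sign hsubA₂ hx).symm⟩⟩
        · -- vert_inter B₁ ∩ A₂ = {B₁.t}
          apply Finset.Subset.antisymm
          · intro x hx
            rcases Finset.mem_inter.mp hx with ⟨hx1, hx2⟩
            rw [← hS.vert_inter]
            exact Finset.mem_inter.mpr ⟨hx1, hconn'.sub1.1 hx2⟩
          · intro x hx
            rw [Finset.mem_singleton] at hx; subst hx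
            refine Finset.mem_inter.mpr ⟨B₁.t_mem, ?_⟩
            have : B₁.t = A₂.s := hS.mid.trans hconn'.src
            exact this ▸ A₂.s_mem
        · exact hS.mid.trans hconn'.src
        · -- edge_disj
          rw [Finset.disjoint_left]
          intro x hx1 hx2
          exact Finset.disjoint_left.mp hS.edge_disj hx1 (hconn'.sub1.2.1 hx2)
      · -- IsSeriesConn2 G0 C (oneEdge g)
        intro hJ hne
        refine ⟨?_, ?_, ?_, ?_, ?_, ?_, ?_, rfl, rfl⟩
        · exact ⟨Finset.union_subset (hS.sub1.1) (hsubA₂.1),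
            Finset.union_subset (hS.sub1.2.1) (hsubA₂.2.1),
            fun x _ => ⟨rfl, rfl, rfl⟩⟩
        · refine ⟨?_, ?_, fun x _ => ⟨rfl, rfl, rfl⟩⟩
          · intro x hx
            rw [oneEdge_verts, Finset.mem_insert, Finset.mem_singleton] at hx
            rcases hx with rfl | rfl
            · exact otherEnd_mem hg
            · exact G0.t_mem
          · intro x hx
            rw [oneEdge_edges, Finset.mem_singleton] at hx
            subst hx; exact hg
        · -- vert_union
          rw [oneEdge_verts, ← hS.vert_union, ← hconn'.vert_union, oneEdge_verts,
            Finset.union_assoc, hOeq, htB₂]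
        · -- vert_inter
          rw [oneEdge_verts]
          apply Finset.Subset.antisymm
          · intro x hx
            rcases Finset.mem_inter.mp hx with ⟨hx1, hx2⟩
            rw [Finset.mem_insert, Finset.mem_singleton] at hx2
            rcases hx2 with rfl | rfl
            · rw [Finset.mem_singleton]
              show otherEnd G0.toSignedGraph g G0.t = A₂.t
              exact hOeq.trans hA₂t.symm
            · exfalso
              rcases Finset.mem_union.mp hx1 with hx1 | hx1
              · exact htnotB₁ hx1
              · exact htnotA₂ hx1
          · intro x hx
            rw [Finset.mem_singleton] at hx; subst hx
            refine Finset.mem_inter.mpr ⟨Finset.mem_union_right _ A₂.t_mem, ?_⟩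
            rw [Finset.mem_insert]
            exact Or.inl (hA₂t.trans hOeq.symm)
        · -- mid
          rw [oneEdge_s]
          exact hA₂t.trans hOeq.symm
        · -- edge_union
          rw [oneEdge_edges, ← hS.edge_union, ← hconn'.edge_union, oneEdge_edges,
            Finset.union_assoc]
        · -- edge_disj
          rw [oneEdge_edges, Finset.disjoint_singleton_right]
          intro hc
          rcases Finset.mem_union.mp hc with hc | hc
          exacts [hgnotB₁ hc, hgnotA₂ hc]

end Aux6
section Aux7
open SignedGraph

/-- Mirror of `sp_pendant_t` for the source terminal. -/
lemma sp_pendant_s {H : TTGraph} (hsp : IsSP H) :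
    ∀ g, g ∈ H.edges → IncOnce H.toSignedGraph g H.s →
    (∀ g' ∈ H.edges, H.fst g' = H.s ∨ H.snd g' = H.s → g' = g) →
    IsSignedK2 H ∨
    ∃ A, IsSP A ∧ ∀ (hJ : H.toSignedGraph.Joins g H.s (otherEnd H.toSignedGraph g H.s))
      (hne : H.s ≠ otherEnd H.toSignedGraph g H.s),
      IsSeriesConn2 H (oneEdge H.toSignedGraph g H.s (otherEnd H.toSignedGraph g H.s) hJ hne) A := by
  induction hsp with
  | @k2 G0 hk2 => exact fun _ _ _ _ => Or.inl hk2
  | @parallel G0 H₁ H₂ hP hsp1 hsp2 ih1 ih2 =>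
    intro g hg hinc huniq
    exfalso
    obtain ⟨g₁, hg₁, hinc₁⟩ := hsp1.exists_incident H₁.s H₁.s_mem
    obtain ⟨g₂, hg₂, hinc₂⟩ := hsp2.exists_incident H₂.s H₂.s_mem
    have e₁ : g₁ = g := by
      apply huniq g₁ (hP.edge_union ▸ Finset.mem_union_left _ hg₁)
      rw [sub_fst hP.sub1 hg₁, sub_snd hP.sub1 hg₁, hP.src]
      exact hinc₁
    have e₂ : g₂ = g := by
      apply huniq g₂ (hP.edge_union ▸ Finset.mem_union_right _ hg₂)
      rw [sub_fst hP.sub2 hg₂, sub_snd hP.sub2 hg₂, hP.src, hP.src_eq]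
      exact hinc₂
    subst e₁; subst e₂
    exact Finset.disjoint_left.mp hP.edge_disj hg₁ hg₂
  | @series G0 B₁ B₂ hS hsp1 hsp2 ih1 ih2 =>
    intro g hg hinc huniq
    have hsB₁ : G0.s = B₁.s := hS.src
    have hsnotB₂ : G0.s ∉ B₂.verts := by
      intro hmem
      have h2 : G0.s ∈ B₁.verts := hsB₁ ▸ B₁.s_mem
      have h3 : G0.s ∈ ({B₁.t} : Finset ℕ) := by
        rw [← hS.vert_inter]; exact Finset.mem_inter.mpr ⟨h2, hmem⟩
      rw [Finset.mem_singleton] at h3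
      exact B₁.s_ne_t (hsB₁.symm.trans h3)
    -- g belongs to B₁
    have hgB₁ : g ∈ B₁.edges := by
      rw [← hS.edge_union] at hg
      rcases Finset.mem_union.mp hg with hg1 | hg2
      · exact hg1
      · exfalso
        apply hsnotB₂
        rcases hinc with ⟨h1, _⟩ | ⟨_, h2⟩
        · exact h1 ▸ sub_fst_mem hS.sub2 hg2
        · exact h2 ▸ sub_snd_mem hS.sub2 hg2
    have hincB₁ : IncOnce B₁.toSignedGraph g B₁.s := by
      rcases hinc with ⟨h1, h2⟩ | ⟨h1, h2⟩
      · exact Or.inl ⟨by rw [← sub_fst hS.sub1 hgB₁, h1, hsB₁],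
          by rw [← sub_snd hS.sub1 hgB₁, ← hsB₁]; exact h2⟩
      · exact Or.inr ⟨by rw [← sub_fst hS.sub1 hgB₁, ← hsB₁]; exact h1,
          by rw [← sub_snd hS.sub1 hgB₁, h2, hsB₁]⟩
    have huniqB₁ : ∀ g' ∈ B₁.edges, B₁.fst g' = B₁.s ∨ B₁.snd g' = B₁.s → g' = g := by
      intro g' hg' hinc'
      apply huniq g' (hS.edge_union ▸ Finset.mem_union_left _ hg')
      rw [sub_fst hS.sub1 hg', sub_snd hS.sub1 hg', hsB₁]
      exact hinc'
    have hOeq : otherEnd G0.toSignedGraph g G0.s = otherEnd B₁.toSignedGraph g B₁.s := by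
      rw [hsB₁]; exact otherEnd_sub hS.sub1 hgB₁ B₁.s
    rcases ih1 g hgB₁ hincB₁ huniqB₁ with hK2 | ⟨A₁, hspA₁, hconn⟩
    · -- B₁ is a single edge
      right
      refine ⟨B₂, hsp2, ?_⟩
      intro hJ hne
      obtain ⟨hv1, e₀, he₀, hJ₀⟩ := hK2
      have hge₀ : e₀ = g := by
        have h5 := hgB₁; rw [he₀, Finset.mem_singleton] at h5; exact h5.symm
      rw [hge₀] at he₀ hJ₀
      have hJ₀' : B₁.toSignedGraph.Joins g B₁.t B₁.s := by
        rcases hJ₀ with ⟨a1, a2⟩ | ⟨a1, a2⟩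
        · exact Or.inr ⟨a1, a2⟩
        · exact Or.inl ⟨a1, a2⟩
      have hu : otherEnd G0.toSignedGraph g G0.s = B₁.t := by
        rw [hOeq]
        exact otherEnd_of_joins hJ₀' (Ne.symm B₁.s_ne_t)
      refine ⟨?_, hS.sub2, ?_, ?_, ?_, ?_, ?_, rfl, hS.tgt⟩
      · -- sub1 : oneEdge ⊑ G0
        refine ⟨?_, ?_, ?_⟩
        · intro x hx
          rw [oneEdge_verts, Finset.mem_insert, Finset.mem_singleton] at hx
          rcases hx with rfl | rfl
          · exact G0.s_mem
          · rw [hu]; exact hS.sub1.1 B₁.t_mem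
        · intro x hx
          rw [oneEdge_edges, Finset.mem_singleton] at hx
          subst hx; exact hg
        · intro x _; exact ⟨rfl, rfl, rfl⟩
      · rw [oneEdge_verts, hu, ← hS.vert_union, hv1, hsB₁]
      · rw [oneEdge_verts, oneEdge_t, hu, hsB₁, ← hv1, hS.vert_inter]
      · rw [oneEdge_t, hu, hS.mid]
      · rw [oneEdge_edges, ← hS.edge_union, he₀]
      · rw [oneEdge_edges, ← he₀]; exact hS.edge_disj
    · -- B₁ = S(g, A₁), build C = S(A₁, B₂)
      right
      have hJ₁ := joins_otherEnd' hincB₁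
      have hne₁ : B₁.s ≠ otherEnd B₁.toSignedGraph g B₁.s := Ne.symm (otherEnd_ne hincB₁)
      have hconn' := hconn hJ₁ hne₁
      have hsubA₁ : IsSubgraph A₁.toSignedGraph G0.toSignedGraph :=
        IsSubgraph.trans' hconn'.sub2 hS.sub1
      have hA₁s : A₁.s = otherEnd B₁.toSignedGraph g B₁.s := (hconn'.mid).symm
      have hueq : otherEnd G0.toSignedGraph g G0.s = A₁.s := hOeq.trans hA₁s.symm
      have hsnotA₁ : G0.s ∉ A₁.verts := by
        intro hmem
        have h1 : B₁.s ∈ A₁.verts := hsB₁ ▸ hmem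
        have h2 : B₁.s ∈ (oneEdge B₁.toSignedGraph g B₁.s _ hJ₁ hne₁).verts := by
          rw [oneEdge_verts]; simp
        have h3 : B₁.s ∈ ({(oneEdge B₁.toSignedGraph g B₁.s _ hJ₁ hne₁).t} : Finset ℕ) := by
          rw [← hconn'.vert_inter]; exact Finset.mem_inter.mpr ⟨h2, h1⟩
        rw [Finset.mem_singleton, oneEdge_t] at h3
        exact hne₁ h3
      have hgnotB₂ : g ∉ B₂.edges := fun hc =>
        Finset.disjoint_left.mp hS.edge_disj hgB₁ hc
      have hgnotA₁ : g ∉ A₁.edges := fun hc =>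
        Finset.disjoint_left.mp hconn'.edge_disj (by rw [oneEdge_edges]; simp) hc
      have hA₁t : A₁.t = B₁.t := hconn'.tgt.symm
      have hsneC : A₁.s ≠ G0.t := by
        intro hc
        have h1 : G0.t ∈ A₁.verts := hc ▸ A₁.s_mem
        have h2 : G0.t ∈ B₂.verts := hS.tgt ▸ B₂.t_mem
        have h3 : G0.t ∈ ({B₁.t} : Finset ℕ) := by
          rw [← hS.vert_inter]
          exact Finset.mem_inter.mpr ⟨hconn'.sub2.1 h1, h2⟩
        rw [Finset.mem_singleton] at h3
        have h4 : G0.t = B₂.s := h3.trans hS.mid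
        exact B₂.s_ne_t (h4.symm.trans hS.tgt)
      refine ⟨⟨⟨A₁.verts ∪ B₂.verts, A₁.edges ∪ B₂.edges, G0.fst, G0.snd, G0.sign,
        ?_, ?_⟩, A₁.s, G0.t, ?_, ?_, hsneC⟩, ?_, ?_⟩
      · intro x hx
        rcases Finset.mem_union.mp hx with hx | hx
        · exact Finset.mem_union_left _ (sub_fst_mem hsubA₁ hx)
        · exact Finset.mem_union_right _ (sub_fst_mem hS.sub2 hx)
      · intro x hx
        rcases Finset.mem_union.mp hx with hx | hx
        · exact Finset.mem_union_left _ (sub_snd_mem hsubA₁ hx)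
        · exact Finset.mem_union_right _ (sub_snd_mem hS.sub2 hx)
      · exact Finset.mem_union_left _ A₁.s_mem
      · exact Finset.mem_union_right _ (hS.tgt ▸ B₂.t_mem)
      · -- IsSP C
        refine IsSP.series ?_ hspA₁ hsp2
        refine ⟨?_, ?_, rfl, ?_, ?_, rfl, ?_, rfl, hS.tgt⟩
        · exact ⟨Finset.subset_union_left, Finset.subset_union_left,
            fun x hx => ⟨(sub_fst hsubA₁ hx).symm, (sub_snd hsubA₁ hx).symm,
              (sub_sign hsubA₁ hx).symm⟩⟩
        · exact ⟨Finset.subset_union_right, Finset.subset_union_right,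
            fun x hx => ⟨(sub_fst hS.sub2 hx).symm, (sub_snd hS.sub2 hx).symm,
              (sub_sign hS.sub2 hx).symm⟩⟩
        · -- vert_inter A₁ ∩ B₂ = {A₁.t}
          apply Finset.Subset.antisymm
          · intro x hx
            rcases Finset.mem_inter.mp hx with ⟨hx1, hx2⟩
            rw [Finset.mem_singleton, hA₁t]
            have h3 : x ∈ ({B₁.t} : Finset ℕ) := by
              rw [← hS.vert_inter]
              exact Finset.mem_inter.mpr ⟨hconn'.sub2.1 hx1, hx2⟩
            rw [Finset.mem_singleton] at h3
            exact h3
          · intro x hx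
            rw [Finset.mem_singleton] at hx; subst hx
            refine Finset.mem_inter.mpr ⟨A₁.t_mem, ?_⟩
            have h4 : A₁.t = B₂.s := hA₁t.trans hS.mid
            exact h4 ▸ B₂.s_mem
        · exact hA₁t.trans hS.mid
        · -- edge_disj
          rw [Finset.disjoint_left]
          intro x hx1 hx2
          exact Finset.disjoint_left.mp hS.edge_disj (hconn'.sub2.2.1 hx1) hx2
      · -- IsSeriesConn2 G0 (oneEdge g) C
        intro hJ hne
        refine ⟨?_, ?_, ?_, ?_, ?_, ?_, ?_, rfl, rfl⟩
        · refine ⟨?_, ?_, fun x _ => ⟨rfl, rfl, rfl⟩⟩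
          · intro x hx
            rw [oneEdge_verts, Finset.mem_insert, Finset.mem_singleton] at hx
            rcases hx with rfl | rfl
            · exact G0.s_mem
            · exact otherEnd_mem hg
          · intro x hx
            rw [oneEdge_edges, Finset.mem_singleton] at hx
            subst hx; exact hg
        · exact ⟨Finset.union_subset (hsubA₁.1) (hS.sub2.1),
            Finset.union_subset (hsubA₁.2.1) (hS.sub2.2.1),
            fun x _ => ⟨rfl, rfl, rfl⟩⟩
        · -- vert_union
          rw [oneEdge_verts, ← hS.vert_union, ← hconn'.vert_union, oneEdge_verts,
            ← Finset.union_assoc, hOeq, hsB₁]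
        · -- vert_inter
          rw [oneEdge_verts]
          apply Finset.Subset.antisymm
          · intro x hx
            rcases Finset.mem_inter.mp hx with ⟨hx1, hx2⟩
            rw [Finset.mem_insert, Finset.mem_singleton] at hx1
            rcases hx1 with rfl | rfl
            · exfalso
              rcases Finset.mem_union.mp hx2 with hx2 | hx2
              · exact hsnotA₁ hx2
              · exact hsnotB₂ hx2
            · rw [Finset.mem_singleton, oneEdge_t]
          · intro x hx
            rw [Finset.mem_singleton, oneEdge_t] at hx; subst hx
            refine Finset.mem_inter.mpr ⟨?_, ?_⟩
            · rw [Finset.mem_insert, Finset.mem_singleton]; exact Or.inr rfl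
            · exact Finset.mem_union_left _ (hueq ▸ A₁.s_mem)
        · -- mid
          rw [oneEdge_t]
          show otherEnd G0.toSignedGraph g G0.s = A₁.s
          exact hueq
        · -- edge_union
          rw [oneEdge_edges, ← hS.edge_union, ← hconn'.edge_union, oneEdge_edges,
            ← Finset.union_assoc]
        · -- edge_disj
          rw [oneEdge_edges, Finset.disjoint_singleton_left]
          intro hc
          rcases Finset.mem_union.mp hc with hc | hc
          exacts [hgnotA₁ hc, hgnotB₂ hc]

end Aux7
section Aux8
open SignedGraph

/-- Reversal of a two-terminal graph: swap the two terminals. -/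
def TTGraph.rev (G : TTGraph) : TTGraph where
  toSignedGraph := G.toSignedGraph
  s := G.t
  t := G.s
  s_mem := G.t_mem
  t_mem := G.s_mem
  s_ne_t := Ne.symm G.s_ne_t

@[simp] lemma rev_toSignedGraph (G : TTGraph) : (G.rev).toSignedGraph = G.toSignedGraph := rfl
@[simp] lemma rev_s (G : TTGraph) : (G.rev).s = G.t := rfl
@[simp] lemma rev_t (G : TTGraph) : (G.rev).t = G.s := rfl
@[simp] lemma rev_verts (G : TTGraph) : (G.rev).verts = G.verts := rfl
@[simp] lemma rev_edges (G : TTGraph) : (G.rev).edges = G.edges := rfl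

lemma IsSignedK2.rev {G : TTGraph} (h : IsSignedK2 G) : IsSignedK2 G.rev := by
  obtain ⟨hv, e, he, hJ⟩ := h
  refine ⟨?_, e, he, ?_⟩
  · rw [rev_verts, hv, rev_s, rev_t]
    exact Finset.pair_comm G.s G.t ▸ rfl
  · rcases hJ with ⟨h1, h2⟩ | ⟨h1, h2⟩
    · exact Or.inr ⟨h1, h2⟩
    · exact Or.inl ⟨h1, h2⟩

lemma IsSeriesConn2.rev {G H₁ H₂ : TTGraph} (h : IsSeriesConn2 G H₁ H₂) :
    IsSeriesConn2 G.rev H₂.rev H₁.rev where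
  sub1 := h.sub2
  sub2 := h.sub1
  vert_union := by rw [rev_verts, rev_verts, rev_verts, Finset.union_comm]; exact h.vert_union
  vert_inter := by
    rw [rev_verts, rev_verts, Finset.inter_comm, h.vert_inter, rev_t, ← h.mid]
  mid := by rw [rev_t, rev_s, ← h.mid]
  edge_union := by rw [rev_edges, rev_edges, rev_edges, Finset.union_comm]; exact h.edge_union
  edge_disj := h.edge_disj.symm
  src := by rw [rev_s, rev_s, h.tgt]
  tgt := by rw [rev_t, rev_t, h.src]

lemma IsParallelConn2.rev {G H₁ H₂ : TTGraph} (h : IsParallelConn2 G H₁ H₂) :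
    IsParallelConn2 G.rev H₁.rev H₂.rev where
  sub1 := h.sub1
  sub2 := h.sub2
  vert_union := h.vert_union
  vert_inter := by
    rw [rev_verts, rev_verts, h.vert_inter, rev_s, rev_t]
    exact Finset.pair_comm H₁.s H₁.t ▸ rfl
  src_eq := by rw [rev_s, rev_s, h.tgt_eq]
  tgt_eq := by rw [rev_t, rev_t, h.src_eq]
  edge_union := h.edge_union
  edge_disj := h.edge_disj
  src := by rw [rev_s, rev_s, h.tgt]
  tgt := by rw [rev_t, rev_t, h.src]

lemma IsSP.rev {G : TTGraph} (h : IsSP G) : IsSP G.rev := by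
  induction h with
  | k2 hk2 => exact IsSP.k2 hk2.rev
  | series hS _ _ ih1 ih2 => exact IsSP.series hS.rev ih2 ih1
  | parallel hP _ _ ih1 ih2 => exact IsSP.parallel hP.rev ih1 ih2

lemma SuppData.rev {G : TTGraph} {v e f : ℕ} (h : SuppData G v e f) :
    SuppData G.rev v e f where
  hvs := h.hvt
  hvt := h.hvs
  he := h.he
  hf := h.hf
  hef := h.hef
  hiE := h.hiE
  hiF := h.hiF
  honly := h.honly

lemma suppress_rev {G : TTGraph} {v e f : ℕ} (h : SuppData G v e f) :
    suppress G.rev v e f h.rev = (suppress G v e f h).rev := rfl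

end Aux8
section Aux9
open SignedGraph

lemma inc_mem_piece {K G0 : TTGraph} (hsub : IsSubgraph K.toSignedGraph G0.toSignedGraph)
    {g v : ℕ} (hg : g ∈ K.edges) (hinc : G0.fst g = v ∨ G0.snd g = v) : v ∈ K.verts := by
  rcases hinc with h1 | h1
  · exact h1 ▸ sub_fst_mem hsub hg
  · exact h1 ▸ sub_snd_mem hsub hg

lemma SuppData.restrict {G0 K : TTGraph} (hsub : IsSubgraph K.toSignedGraph G0.toSignedGraph)
    {v e f : ℕ} (h : SuppData G0 v e f) (he : e ∈ K.edges) (hf : f ∈ K.edges)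
    (hs : v ≠ K.s) (ht : v ≠ K.t) : SuppData K v e f where
  hvs := hs
  hvt := ht
  he := he
  hf := hf
  hef := h.hef
  hiE := by
    rcases h.hiE with ⟨h1, h2⟩ | ⟨h1, h2⟩
    · exact Or.inl ⟨by rw [← sub_fst hsub he]; exact h1, by rw [← sub_snd hsub he]; exact h2⟩
    · exact Or.inr ⟨by rw [← sub_fst hsub he]; exact h1, by rw [← sub_snd hsub he]; exact h2⟩
  hiF := by
    rcases h.hiF with ⟨h1, h2⟩ | ⟨h1, h2⟩
    · exact Or.inl ⟨by rw [← sub_fst hsub hf]; exact h1, by rw [← sub_snd hsub hf]; exact h2⟩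
    · exact Or.inr ⟨by rw [← sub_fst hsub hf]; exact h1, by rw [← sub_snd hsub hf]; exact h2⟩
  honly := fun g hg hinc => h.honly g (hsub.2.1 hg)
    (by rw [sub_fst hsub hg, sub_snd hsub hg]; exact hinc)

lemma erase_union_right {s t : Finset ℕ} {v : ℕ} (hv : v ∉ t) :
    s.erase v ∪ t = (s ∪ t).erase v := by
  ext x
  simp only [Finset.mem_union, Finset.mem_erase]
  constructor
  · rintro (⟨h1, h2⟩ | hx)
    · exact ⟨h1, Or.inl h2⟩
    · exact ⟨fun hc => hv (hc ▸ hx), Or.inr hx⟩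
  · rintro ⟨h1, h2 | h2⟩
    · exact Or.inl ⟨h1, h2⟩
    · exact Or.inr h2

lemma erase_inter' (v : ℕ) (s t : Finset ℕ) : s.erase v ∩ t = (s ∩ t).erase v := by
  ext x
  simp only [Finset.mem_inter, Finset.mem_erase]
  tauto

lemma suppress_sub {G0 K : TTGraph} (hsub : IsSubgraph K.toSignedGraph G0.toSignedGraph)
    {v e f : ℕ} (h : SuppData G0 v e f) (hk : SuppData K v e f) :
    IsSubgraph (suppress K v e f hk).toSignedGraph (suppress G0 v e f h).toSignedGraph := by
  refine ⟨Finset.erase_subset_erase _ hsub.1, Finset.erase_subset_erase _ hsub.2.1, ?_⟩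
  intro g hg
  rcases Finset.mem_erase.mp hg with ⟨hgf, hgK⟩
  by_cases hge : g = e
  · subst hge
    refine ⟨?_, ?_, ?_⟩
    · rw [suppress_fst, suppress_fst, if_pos rfl, if_pos rfl]
      exact (otherEnd_sub hsub hk.he v).symm
    · rw [suppress_snd, suppress_snd, if_pos rfl, if_pos rfl]
      exact (otherEnd_sub hsub hk.hf v).symm
    · rw [suppress_sign, suppress_sign, if_pos rfl, if_pos rfl,
        sub_sign hsub hk.he, sub_sign hsub hk.hf]
  · refine ⟨?_, ?_, ?_⟩
    · rw [suppress_fst, suppress_fst, if_neg hge, if_neg hge]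
      exact (sub_fst hsub hgK).symm
    · rw [suppress_snd, suppress_snd, if_neg hge, if_neg hge]
      exact (sub_snd hsub hgK).symm
    · rw [suppress_sign, suppress_sign, if_neg hge, if_neg hge]
      exact (sub_sign hsub hgK).symm

lemma suppress_parallel_left {G0 H₁ H₂ : TTGraph} (hP : IsParallelConn2 G0 H₁ H₂)
    {v e f : ℕ} (h : SuppData G0 v e f) (hv1 : v ∈ H₁.verts) (hsp2 : IsSP H₂)
    (ih : ∀ (h₁ : SuppData H₁ v e f), IsSP (suppress H₁ v e f h₁)) :
    IsSP (suppress G0 v e f h) := by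
  have hvs1 : v ≠ H₁.s := fun hc => h.hvs (hc.trans hP.src.symm)
  have hvt1 : v ≠ H₁.t := fun hc => h.hvt (hc.trans hP.tgt.symm)
  have hv2 : v ∉ H₂.verts := by
    intro hc
    have hmem : v ∈ H₁.verts ∩ H₂.verts := Finset.mem_inter.mpr ⟨hv1, hc⟩
    rw [hP.vert_inter, Finset.mem_insert, Finset.mem_singleton] at hmem
    rcases hmem with h' | h'
    exacts [hvs1 h', hvt1 h']
  have heH₁ : e ∈ H₁.edges := by
    have hm := h.he; rw [← hP.edge_union] at hm
    rcases Finset.mem_union.mp hm with h' | h'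
    · exact h'
    · exact absurd (inc_mem_piece hP.sub2 h'
        (by rcases h.hiE with ⟨h1, _⟩ | ⟨_, h2⟩; exacts [Or.inl h1, Or.inr h2])) hv2
  have hfH₁ : f ∈ H₁.edges := by
    have hm := h.hf; rw [← hP.edge_union] at hm
    rcases Finset.mem_union.mp hm with h' | h'
    · exact h'
    · exact absurd (inc_mem_piece hP.sub2 h'
        (by rcases h.hiF with ⟨h1, _⟩ | ⟨_, h2⟩; exacts [Or.inl h1, Or.inr h2])) hv2
  have hk := SuppData.restrict hP.sub1 h heH₁ hfH₁ hvs1 hvt1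
  refine IsSP.parallel ?_ (ih hk) hsp2
  refine ⟨suppress_sub hP.sub1 h hk, ?_, ?_, ?_, hP.src_eq, hP.tgt_eq, ?_, ?_, hP.src, hP.tgt⟩
  · -- sub2
    refine ⟨?_, ?_, ?_⟩
    · intro x hx
      exact Finset.mem_erase.mpr ⟨fun hc => hv2 (hc ▸ hx), hP.sub2.1 hx⟩
    · intro x hx
      refine Finset.mem_erase.mpr ⟨?_, hP.sub2.2.1 hx⟩
      intro hc; subst hc
      exact Finset.disjoint_left.mp hP.edge_disj hfH₁ hx
    · intro g hg
      have hgne : g ≠ e := fun hc =>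
        Finset.disjoint_left.mp hP.edge_disj heH₁ (hc ▸ hg)
      rw [suppress_fst, suppress_snd, suppress_sign, if_neg hgne, if_neg hgne, if_neg hgne]
      exact hP.sub2.2.2 g hg
  · -- vert_union
    rw [suppress_verts, suppress_verts, ← hP.vert_union]
    exact erase_union_right hv2
  · -- vert_inter
    rw [suppress_verts, erase_inter', hP.vert_inter, Finset.erase_eq_of_notMem (by
      simp only [Finset.mem_insert, Finset.mem_singleton]
      rintro (hc | hc)
      exacts [hvs1 hc, hvt1 hc])]
    rfl
  · -- edge_union
    rw [suppress_edges, suppress_edges, ← hP.edge_union]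
    exact erase_union_right (fun hc => Finset.disjoint_left.mp hP.edge_disj hfH₁ hc)
  · -- edge_disj
    exact Finset.disjoint_of_subset_left (Finset.erase_subset _ _) hP.edge_disj

lemma suppress_series_left {G0 H₁ H₂ : TTGraph} (hS : IsSeriesConn2 G0 H₁ H₂)
    {v e f : ℕ} (h : SuppData G0 v e f) (hv1 : v ∈ H₁.verts) (hvt1 : v ≠ H₁.t)
    (hsp2 : IsSP H₂)
    (ih : ∀ (h₁ : SuppData H₁ v e f), IsSP (suppress H₁ v e f h₁)) :
    IsSP (suppress G0 v e f h) := by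
  have hvs1 : v ≠ H₁.s := fun hc => h.hvs (hc.trans hS.src.symm)
  have hv2 : v ∉ H₂.verts := by
    intro hc
    have hmem : v ∈ H₁.verts ∩ H₂.verts := Finset.mem_inter.mpr ⟨hv1, hc⟩
    rw [hS.vert_inter, Finset.mem_singleton] at hmem
    exact hvt1 hmem
  have heH₁ : e ∈ H₁.edges := by
    have hm := h.he; rw [← hS.edge_union] at hm
    rcases Finset.mem_union.mp hm with h' | h'
    · exact h'
    · exact absurd (inc_mem_piece hS.sub2 h'
        (by rcases h.hiE with ⟨h1, _⟩ | ⟨_, h2⟩; exacts [Or.inl h1, Or.inr h2])) hv2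
  have hfH₁ : f ∈ H₁.edges := by
    have hm := h.hf; rw [← hS.edge_union] at hm
    rcases Finset.mem_union.mp hm with h' | h'
    · exact h'
    · exact absurd (inc_mem_piece hS.sub2 h'
        (by rcases h.hiF with ⟨h1, _⟩ | ⟨_, h2⟩; exacts [Or.inl h1, Or.inr h2])) hv2
  have hk := SuppData.restrict hS.sub1 h heH₁ hfH₁ hvs1 hvt1
  refine IsSP.series ?_ (ih hk) hsp2
  refine ⟨suppress_sub hS.sub1 h hk, ?_, ?_, ?_, hS.mid, ?_, ?_, hS.src, hS.tgt⟩
  · -- sub2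
    refine ⟨?_, ?_, ?_⟩
    · intro x hx
      exact Finset.mem_erase.mpr ⟨fun hc => hv2 (hc ▸ hx), hS.sub2.1 hx⟩
    · intro x hx
      refine Finset.mem_erase.mpr ⟨?_, hS.sub2.2.1 hx⟩
      intro hc; subst hc
      exact Finset.disjoint_left.mp hS.edge_disj hfH₁ hx
    · intro g hg
      have hgne : g ≠ e := fun hc =>
        Finset.disjoint_left.mp hS.edge_disj heH₁ (hc ▸ hg)
      rw [suppress_fst, suppress_snd, suppress_sign, if_neg hgne, if_neg hgne, if_neg hgne]
      exact hS.sub2.2.2 g hg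
  · -- vert_union
    rw [suppress_verts, suppress_verts, ← hS.vert_union]
    exact erase_union_right hv2
  · -- vert_inter
    rw [suppress_verts, erase_inter', hS.vert_inter, Finset.erase_eq_of_notMem (by
      rw [Finset.mem_singleton]; exact hvt1)]
    rfl
  · -- edge_union
    rw [suppress_edges, suppress_edges, ← hS.edge_union]
    exact erase_union_right (fun hc => Finset.disjoint_left.mp hS.edge_disj hfH₁ hc)
  · -- edge_disj
    exact Finset.disjoint_of_subset_left (Finset.erase_subset _ _) hS.edge_disj

end Aux9
section Aux10
open SignedGraph

lemma otherEnd_mem_piece {K G0 : TTGraph} (hsub : IsSubgraph K.toSignedGraph G0.toSignedGraph)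
    {g : ℕ} (hg : g ∈ K.edges) (v : ℕ) : otherEnd G0.toSignedGraph g v ∈ K.verts := by
  rw [otherEnd_sub hsub hg]
  exact otherEnd_mem hg

lemma suppress_series_mid {G0 H₁ H₂ : TTGraph} (hS : IsSeriesConn2 G0 H₁ H₂)
    (hsp1 : IsSP H₁) (hsp2 : IsSP H₂) {v e f : ℕ} (h : SuppData G0 v e f)
    (hvm : v = H₁.t) (heH₁ : e ∈ H₁.edges) (hfH₂ : f ∈ H₂.edges) :
    IsSP (suppress G0 v e f h) := by
  have hv2s : v = H₂.s := hvm.trans hS.mid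
  set u := otherEnd G0.toSignedGraph e v with hudef
  set w := otherEnd G0.toSignedGraph f v with hwdef
  have huv : u ≠ v := otherEnd_ne h.hiE
  have hwv : w ≠ v := otherEnd_ne h.hiF
  have huH₁ : u ∈ H₁.verts := otherEnd_mem_piece hS.sub1 heH₁ v
  have hwH₂ : w ∈ H₂.verts := otherEnd_mem_piece hS.sub2 hfH₂ v
  have huG : u ∈ G0.verts := otherEnd_mem h.he
  have hwG : w ∈ G0.verts := otherEnd_mem h.hf
  have huw : u ≠ w := by
    intro hc
    have hmem : u ∈ H₁.verts ∩ H₂.verts := Finset.mem_inter.mpr ⟨huH₁, hc ▸ hwH₂⟩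
    rw [hS.vert_inter, Finset.mem_singleton] at hmem
    exact huv (hmem.trans hvm.symm)
  have hJm : (suppress G0 v e f h).toSignedGraph.Joins e u w :=
    Or.inl ⟨by rw [suppress_fst, if_pos rfl], by rw [suppress_snd, if_pos rfl]⟩
  have hfnotH₁ : f ∉ H₁.edges := fun hc => Finset.disjoint_left.mp hS.edge_disj hc hfH₂
  have henotH₂ : e ∉ H₂.edges := fun hc => Finset.disjoint_left.mp hS.edge_disj heH₁ hc
  have hincE1 : IncOnce H₁.toSignedGraph e H₁.t := by
    rw [← hvm]
    rcases h.hiE with ⟨h1, h2⟩ | ⟨h1, h2⟩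
    · exact Or.inl ⟨by rw [← sub_fst hS.sub1 heH₁]; exact h1,
        by rw [← sub_snd hS.sub1 heH₁]; exact h2⟩
    · exact Or.inr ⟨by rw [← sub_fst hS.sub1 heH₁]; exact h1,
        by rw [← sub_snd hS.sub1 heH₁]; exact h2⟩
  have hincF2 : IncOnce H₂.toSignedGraph f H₂.s := by
    rw [← hv2s]
    rcases h.hiF with ⟨h1, h2⟩ | ⟨h1, h2⟩
    · exact Or.inl ⟨by rw [← sub_fst hS.sub2 hfH₂]; exact h1,
        by rw [← sub_snd hS.sub2 hfH₂]; exact h2⟩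
    · exact Or.inr ⟨by rw [← sub_fst hS.sub2 hfH₂]; exact h1,
        by rw [← sub_snd hS.sub2 hfH₂]; exact h2⟩
  have huniqE1 : ∀ g' ∈ H₁.edges, H₁.fst g' = H₁.t ∨ H₁.snd g' = H₁.t → g' = e := by
    intro g' hg' hinc'
    have hg'G : g' ∈ G0.edges := hS.sub1.2.1 hg'
    have : g' = e ∨ g' = f := h.honly g' hg'G (by
      rw [sub_fst hS.sub1 hg', sub_snd hS.sub1 hg', hvm]; exact hinc')
    rcases this with rfl | rfl
    · rfl
    · exact absurd hg' hfnotH₁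
  have huniqF2 : ∀ g' ∈ H₂.edges, H₂.fst g' = H₂.s ∨ H₂.snd g' = H₂.s → g' = f := by
    intro g' hg' hinc'
    have hg'G : g' ∈ G0.edges := hS.sub2.2.1 hg'
    have : g' = e ∨ g' = f := h.honly g' hg'G (by
      rw [sub_fst hS.sub2 hg', sub_snd hS.sub2 hg', hv2s]; exact hinc')
    rcases this with rfl | rfl
    · exact absurd hg' henotH₂
    · rfl
  have hu1 : otherEnd H₁.toSignedGraph e H₁.t = u := by
    rw [hudef, hvm]; exact (otherEnd_sub hS.sub1 heH₁ H₁.t).symm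
  have hw2 : otherEnd H₂.toSignedGraph f H₂.s = w := by
    rw [hwdef, hv2s]; exact (otherEnd_sub hS.sub2 hfH₂ H₂.s).symm
  have hGv : G0.verts = H₁.verts ∪ H₂.verts := hS.vert_union.symm
  have hGe : G0.edges = H₁.edges ∪ H₂.edges := hS.edge_union.symm
  rcases sp_pendant_t hsp1 e heH₁ hincE1 huniqE1 with hK1 | ⟨A, hspA, hconnA⟩ <;>
    rcases sp_pendant_s hsp2 f hfH₂ hincF2 huniqF2 with hK2 | ⟨C, hspC, hconnC⟩
  · -- both single edges : suppressed graph is a signed K2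
    obtain ⟨hv1, e₀, he₀, hJ₀⟩ := hK1
    obtain ⟨hv2, f₀, hf₀, hJ₀'⟩ := hK2
    have he₀e : e₀ = e := by
      have hm := heH₁; rw [he₀, Finset.mem_singleton] at hm; exact hm.symm
    have hf₀f : f₀ = f := by
      have hm := hfH₂; rw [hf₀, Finset.mem_singleton] at hm; exact hm.symm
    rw [he₀e] at he₀ hJ₀
    rw [hf₀f] at hf₀ hJ₀'
    have hu_s : u = H₁.s := by
      rw [← hu1]; exact otherEnd_of_joins hJ₀ H₁.s_ne_t
    have hJflip : H₂.toSignedGraph.Joins f H₂.t H₂.s := by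
      rcases hJ₀' with ⟨a1, a2⟩ | ⟨a1, a2⟩
      · exact Or.inr ⟨a1, a2⟩
      · exact Or.inl ⟨a1, a2⟩
    have hw_t : w = H₂.t := by
      rw [← hw2]; exact otherEnd_of_joins hJflip (Ne.symm H₂.s_ne_t)
    apply IsSP.k2
    refine ⟨?_, e, ?_, ?_⟩
    · -- verts
      show G0.verts.erase v = {G0.s, G0.t}
      rw [hGv, hv1, hv2, ← hvm, ← hv2s]
      ext x
      simp only [Finset.mem_erase, Finset.mem_union, Finset.mem_insert, Finset.mem_singleton]
      constructor
      · rintro ⟨hxv, (rfl | rfl) | (rfl | rfl)⟩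
        · exact Or.inl hS.src.symm
        · exact absurd rfl hxv
        · exact absurd rfl hxv
        · exact Or.inr hS.tgt.symm
      · rintro (rfl | rfl)
        · exact ⟨Ne.symm h.hvs, Or.inl (Or.inl hS.src)⟩
        · exact ⟨Ne.symm h.hvt, Or.inr (Or.inr hS.tgt)⟩
    · -- edges
      show G0.edges.erase f = {e}
      rw [hGe, he₀, hf₀]
      ext x
      simp only [Finset.mem_erase, Finset.mem_union, Finset.mem_singleton]
      constructor
      · rintro ⟨hxf, rfl | rfl⟩
        · rfl
        · exact absurd rfl hxf
      · rintro rfl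
        exact ⟨h.hef, Or.inl rfl⟩
    · -- joins
      refine Or.inl ⟨?_, ?_⟩
      · rw [suppress_fst, if_pos rfl, suppress_s, ← hudef, hu_s]
        exact hS.src.symm
      · rw [suppress_snd, if_pos rfl, suppress_t, ← hwdef, hw_t]
        exact hS.tgt.symm
  · -- H₁ single edge, H₂ = S(f, C) : suppressed = S(K2m, C)
    obtain ⟨hv1, e₀, he₀, hJ₀⟩ := hK1
    have he₀e : e₀ = e := by
      have hm := heH₁; rw [he₀, Finset.mem_singleton] at hm; exact hm.symm
    rw [he₀e] at he₀ hJ₀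
    have hu_s : u = H₁.s := by
      rw [← hu1]; exact otherEnd_of_joins hJ₀ H₁.s_ne_t
    have hconnC' := hconnC (joins_otherEnd' hincF2) (Ne.symm (otherEnd_ne hincF2))
    have hCs : C.s = w := by rw [← hconnC'.mid, oneEdge_t, hw2]
    have hCt : H₂.t = C.t := hconnC'.tgt
    have hsubC : IsSubgraph C.toSignedGraph G0.toSignedGraph :=
      IsSubgraph.trans' hconnC'.sub2 hS.sub2
    have hvnotC : v ∉ C.verts := by
      intro hc
      have h1 : H₂.s ∈ C.verts := hv2s ▸ hc
      have h2 : H₂.s ∈ (oneEdge H₂.toSignedGraph f H₂.s _ (joins_otherEnd' hincF2)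
          (Ne.symm (otherEnd_ne hincF2))).verts := by
        rw [oneEdge_verts]; simp
      have h3 : H₂.s ∈ ({(oneEdge H₂.toSignedGraph f H₂.s _ (joins_otherEnd' hincF2)
          (Ne.symm (otherEnd_ne hincF2))).t} : Finset ℕ) := by
        rw [← hconnC'.vert_inter]; exact Finset.mem_inter.mpr ⟨h2, h1⟩
      rw [Finset.mem_singleton, oneEdge_t] at h3
      exact (Ne.symm (otherEnd_ne hincF2)) h3
    have hfnotC : f ∉ C.edges := fun hc =>
      Finset.disjoint_left.mp hconnC'.edge_disj (by rw [oneEdge_edges]; simp) hc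
    have henotC : e ∉ C.edges := fun hc => henotH₂ (hconnC'.sub2.2.1 hc)
    have hH₂v : H₂.verts = {v, w} ∪ C.verts := by
      rw [← hconnC'.vert_union, oneEdge_verts, hw2, hv2s]
    have hH₂e : H₂.edges = {f} ∪ C.edges := by
      rw [← hconnC'.edge_union, oneEdge_edges]
    have hunotC : u ∉ C.verts := by
      intro hc
      have hmem : u ∈ H₁.verts ∩ H₂.verts :=
        Finset.mem_inter.mpr ⟨huH₁, hconnC'.sub2.1 hc⟩
      rw [hS.vert_inter, Finset.mem_singleton] at hmem
      exact huv (hmem.trans hvm.symm)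
    refine IsSP.series ?_ (oneEdge_isSP _ e u w hJm huw) hspC
    refine ⟨?_, ?_, ?_, ?_, ?_, ?_, ?_, ?_, ?_⟩
    · -- sub1 : K2m ⊑ suppressed
      refine ⟨?_, ?_, fun x _ => ⟨rfl, rfl, rfl⟩⟩
      · intro x hx
        rw [oneEdge_verts, Finset.mem_insert, Finset.mem_singleton] at hx
        rcases hx with rfl | rfl
        · exact Finset.mem_erase.mpr ⟨huv, huG⟩
        · exact Finset.mem_erase.mpr ⟨hwv, hwG⟩
      · intro x hx
        rw [oneEdge_edges, Finset.mem_singleton] at hx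
        subst hx
        exact Finset.mem_erase.mpr ⟨h.hef, h.he⟩
    · -- sub2 : C ⊑ suppressed
      refine ⟨?_, ?_, ?_⟩
      · intro x hx
        exact Finset.mem_erase.mpr ⟨fun hc => hvnotC (hc ▸ hx), hsubC.1 hx⟩
      · intro x hx
        exact Finset.mem_erase.mpr ⟨fun hc => hfnotC (hc ▸ hx), hsubC.2.1 hx⟩
      · intro g hg
        have hgne : g ≠ e := fun hc => henotC (hc ▸ hg)
        rw [suppress_fst, suppress_snd, suppress_sign, if_neg hgne, if_neg hgne, if_neg hgne]
        exact ⟨(sub_fst hsubC hg).symm, (sub_snd hsubC hg).symm, (sub_sign hsubC hg).symm⟩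
    · -- vert_union
      show (oneEdge _ e u w hJm huw).verts ∪ C.verts = G0.verts.erase v
      rw [oneEdge_verts, hGv, hv1, ← hvm, hH₂v]
      ext x
      simp only [Finset.mem_erase, Finset.mem_union, Finset.mem_insert, Finset.mem_singleton]
      constructor
      · rintro ((rfl | rfl) | hx)
        · exact ⟨huv, Or.inl (Or.inl hu_s)⟩
        · exact ⟨hwv, Or.inr (Or.inl (Or.inr rfl))⟩
        · exact ⟨fun hc => hvnotC (hc ▸ hx), Or.inr (Or.inr hx)⟩
      · rintro ⟨hxv, (rfl | rfl) | (rfl | rfl) | hx⟩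
        · exact Or.inl (Or.inl hu_s.symm)
        · exact absurd rfl hxv
        · exact absurd rfl hxv
        · exact Or.inl (Or.inr rfl)
        · exact Or.inr hx
    · -- vert_inter
      show (oneEdge _ e u w hJm huw).verts ∩ C.verts = {(oneEdge _ e u w hJm huw).t}
      rw [oneEdge_verts, oneEdge_t]
      ext x
      simp only [Finset.mem_inter, Finset.mem_insert, Finset.mem_singleton]
      constructor
      · rintro ⟨rfl | rfl, hx⟩
        · exact absurd hx hunotC
        · rfl
      · rintro rfl
        exact ⟨Or.inr rfl, hCs ▸ C.s_mem⟩
    · -- mid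
      rw [oneEdge_t]; exact hCs.symm
    · -- edge_union
      show (oneEdge _ e u w hJm huw).edges ∪ C.edges = G0.edges.erase f
      rw [oneEdge_edges, hGe, he₀, hH₂e]
      ext x
      simp only [Finset.mem_erase, Finset.mem_union, Finset.mem_singleton]
      constructor
      · rintro (rfl | hx)
        · exact ⟨h.hef, Or.inl rfl⟩
        · exact ⟨fun hc => hfnotC (hc ▸ hx), Or.inr (Or.inr hx)⟩
      · rintro ⟨hxf, rfl | rfl | hx⟩
        · exact Or.inl rfl
        · exact absurd rfl hxf
        · exact Or.inr hx
    · -- edge_disj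
      rw [oneEdge_edges, Finset.disjoint_singleton_left]
      exact henotC
    · -- src
      show G0.s = (oneEdge _ e u w hJm huw).s
      rw [oneEdge_s, hu_s]; exact hS.src
    · -- tgt
      show G0.t = C.t
      exact hS.tgt.trans hCt
  · -- H₁ = S(A, e), H₂ single edge : suppressed = S(A, K2m)
    obtain ⟨hv2, f₀, hf₀, hJ₀'⟩ := hK2
    have hf₀f : f₀ = f := by
      have hm := hfH₂; rw [hf₀, Finset.mem_singleton] at hm; exact hm.symm
    rw [hf₀f] at hf₀ hJ₀'
    have hJflip : H₂.toSignedGraph.Joins f H₂.t H₂.s := by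
      rcases hJ₀' with ⟨a1, a2⟩ | ⟨a1, a2⟩
      · exact Or.inr ⟨a1, a2⟩
      · exact Or.inl ⟨a1, a2⟩
    have hw_t : w = H₂.t := by
      rw [← hw2]; exact otherEnd_of_joins hJflip (Ne.symm H₂.s_ne_t)
    have hconnA' := hconnA (joins_otherEnd hincE1) (otherEnd_ne hincE1)
    have hAt : A.t = u := by rw [hconnA'.mid, oneEdge_s, hu1]
    have hsubA : IsSubgraph A.toSignedGraph G0.toSignedGraph :=
      IsSubgraph.trans' hconnA'.sub1 hS.sub1
    have hvnotA : v ∉ A.verts := by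
      intro hc
      have h1 : H₁.t ∈ A.verts := hvm ▸ hc
      have h2 : H₁.t ∈ (oneEdge H₁.toSignedGraph e _ H₁.t (joins_otherEnd hincE1)
          (otherEnd_ne hincE1)).verts := by
        rw [oneEdge_verts]; simp
      have h3 : H₁.t ∈ ({A.t} : Finset ℕ) := by
        rw [← hconnA'.vert_inter]; exact Finset.mem_inter.mpr ⟨h1, h2⟩
      rw [Finset.mem_singleton] at h3
      exact (otherEnd_ne hincE1) (hu1.symm ▸ (h3.trans hAt)).symm
    have henotA : e ∉ A.edges := fun hc =>
      Finset.disjoint_left.mp hconnA'.edge_disj hc (by rw [oneEdge_edges]; simp)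
    have hfnotA : f ∉ A.edges := fun hc => hfnotH₁ (hconnA'.sub1.2.1 hc)
    have hH₁v : H₁.verts = A.verts ∪ {u, v} := by
      rw [← hconnA'.vert_union, oneEdge_verts, hu1, hvm]
    have hH₁e : H₁.edges = A.edges ∪ {e} := by
      rw [← hconnA'.edge_union, oneEdge_edges]
    have hwnotA : w ∉ A.verts := by
      intro hc
      have hmem : w ∈ H₁.verts ∩ H₂.verts :=
        Finset.mem_inter.mpr ⟨hconnA'.sub1.1 hc, hwH₂⟩
      rw [hS.vert_inter, Finset.mem_singleton] at hmem
      exact hwv (hmem.trans hvm.symm)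
    refine IsSP.series ?_ hspA (oneEdge_isSP _ e u w hJm huw)
    refine ⟨?_, ?_, ?_, ?_, ?_, ?_, ?_, ?_, ?_⟩
    · -- sub1 : A ⊑ suppressed
      refine ⟨?_, ?_, ?_⟩
      · intro x hx
        exact Finset.mem_erase.mpr ⟨fun hc => hvnotA (hc ▸ hx), hsubA.1 hx⟩
      · intro x hx
        exact Finset.mem_erase.mpr ⟨fun hc => hfnotA (hc ▸ hx), hsubA.2.1 hx⟩
      · intro g hg
        have hgne : g ≠ e := fun hc => henotA (hc ▸ hg)
        rw [suppress_fst, suppress_snd, suppress_sign, if_neg hgne, if_neg hgne, if_neg hgne]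
        exact ⟨(sub_fst hsubA hg).symm, (sub_snd hsubA hg).symm, (sub_sign hsubA hg).symm⟩
    · -- sub2 : K2m ⊑ suppressed
      refine ⟨?_, ?_, fun x _ => ⟨rfl, rfl, rfl⟩⟩
      · intro x hx
        rw [oneEdge_verts, Finset.mem_insert, Finset.mem_singleton] at hx
        rcases hx with rfl | rfl
        · exact Finset.mem_erase.mpr ⟨huv, huG⟩
        · exact Finset.mem_erase.mpr ⟨hwv, hwG⟩
      · intro x hx
        rw [oneEdge_edges, Finset.mem_singleton] at hx
        subst hx
        exact Finset.mem_erase.mpr ⟨h.hef, h.he⟩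
    · -- vert_union
      show A.verts ∪ (oneEdge _ e u w hJm huw).verts = G0.verts.erase v
      rw [oneEdge_verts, hGv, hv2, ← hv2s, hH₁v, hw_t]
      ext x
      simp only [Finset.mem_erase, Finset.mem_union, Finset.mem_insert, Finset.mem_singleton]
      constructor
      · rintro (hx | rfl | rfl)
        · exact ⟨fun hc => hvnotA (hc ▸ hx), Or.inl (Or.inl hx)⟩
        · exact ⟨huv, Or.inl (Or.inr (Or.inl rfl))⟩
        · exact ⟨hw_t ▸ hwv, Or.inr (Or.inr rfl)⟩
      · rintro ⟨hxv, (hx | rfl | rfl) | rfl | rfl⟩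
        · exact Or.inl hx
        · exact Or.inr (Or.inl rfl)
        · exact absurd rfl hxv
        · exact absurd rfl hxv
        · exact Or.inr (Or.inr rfl)
    · -- vert_inter
      show A.verts ∩ (oneEdge _ e u w hJm huw).verts = {A.t}
      rw [oneEdge_verts]
      ext x
      simp only [Finset.mem_inter, Finset.mem_insert, Finset.mem_singleton]
      constructor
      · rintro ⟨hx, rfl | rfl⟩
        · exact hAt.symm
        · exact absurd hx hwnotA
      · rintro rfl
        exact ⟨A.t_mem, Or.inl hAt⟩
    · -- mid
      rw [oneEdge_s]; exact hAt
    · -- edge_union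
      show A.edges ∪ (oneEdge _ e u w hJm huw).edges = G0.edges.erase f
      rw [oneEdge_edges, hGe, hf₀, hH₁e]
      ext x
      simp only [Finset.mem_erase, Finset.mem_union, Finset.mem_singleton]
      constructor
      · rintro (hx | rfl)
        · exact ⟨fun hc => hfnotA (hc ▸ hx), Or.inl (Or.inl hx)⟩
        · exact ⟨h.hef, Or.inl (Or.inr rfl)⟩
      · rintro ⟨hxf, (hx | rfl) | rfl⟩
        · exact Or.inl hx
        · exact Or.inr rfl
        · exact absurd rfl hxf
    · -- edge_disj
      rw [oneEdge_edges, Finset.disjoint_singleton_right]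
      exact henotA
    · -- src
      show G0.s = A.s
      exact hS.src.trans hconnA'.src
    · -- tgt
      show G0.t = (oneEdge _ e u w hJm huw).t
      rw [oneEdge_t, hw_t]; exact hS.tgt
  · -- H₁ = S(A, e), H₂ = S(f, C) : suppressed = S(A, S(K2m, C))
    have hconnA' := hconnA (joins_otherEnd hincE1) (otherEnd_ne hincE1)
    have hconnC' := hconnC (joins_otherEnd' hincF2) (Ne.symm (otherEnd_ne hincF2))
    have hAt : A.t = u := by rw [hconnA'.mid, oneEdge_s, hu1]
    have hCs : C.s = w := by rw [← hconnC'.mid, oneEdge_t, hw2]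
    have hCt : H₂.t = C.t := hconnC'.tgt
    have hsubA : IsSubgraph A.toSignedGraph G0.toSignedGraph :=
      IsSubgraph.trans' hconnA'.sub1 hS.sub1
    have hsubC : IsSubgraph C.toSignedGraph G0.toSignedGraph :=
      IsSubgraph.trans' hconnC'.sub2 hS.sub2
    have hvnotA : v ∉ A.verts := by
      intro hc
      have h1 : H₁.t ∈ A.verts := hvm ▸ hc
      have h2 : H₁.t ∈ (oneEdge H₁.toSignedGraph e _ H₁.t (joins_otherEnd hincE1)
          (otherEnd_ne hincE1)).verts := by
        rw [oneEdge_verts]; simp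
      have h3 : H₁.t ∈ ({A.t} : Finset ℕ) := by
        rw [← hconnA'.vert_inter]; exact Finset.mem_inter.mpr ⟨h1, h2⟩
      rw [Finset.mem_singleton] at h3
      exact (otherEnd_ne hincE1) (hu1.symm ▸ (h3.trans hAt)).symm
    have hvnotC : v ∉ C.verts := by
      intro hc
      have h1 : H₂.s ∈ C.verts := hv2s ▸ hc
      have h2 : H₂.s ∈ (oneEdge H₂.toSignedGraph f H₂.s _ (joins_otherEnd' hincF2)
          (Ne.symm (otherEnd_ne hincF2))).verts := by
        rw [oneEdge_verts]; simp
      have h3 : H₂.s ∈ ({(oneEdge H₂.toSignedGraph f H₂.s _ (joins_otherEnd' hincF2)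
          (Ne.symm (otherEnd_ne hincF2))).t} : Finset ℕ) := by
        rw [← hconnC'.vert_inter]; exact Finset.mem_inter.mpr ⟨h2, h1⟩
      rw [Finset.mem_singleton, oneEdge_t] at h3
      exact (Ne.symm (otherEnd_ne hincF2)) h3
    have henotA : e ∉ A.edges := fun hc =>
      Finset.disjoint_left.mp hconnA'.edge_disj hc (by rw [oneEdge_edges]; simp)
    have hfnotA : f ∉ A.edges := fun hc => hfnotH₁ (hconnA'.sub1.2.1 hc)
    have hfnotC : f ∉ C.edges := fun hc =>
      Finset.disjoint_left.mp hconnC'.edge_disj (by rw [oneEdge_edges]; simp) hc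
    have henotC : e ∉ C.edges := fun hc => henotH₂ (hconnC'.sub2.2.1 hc)
    have hH₁v : H₁.verts = A.verts ∪ {u, v} := by
      rw [← hconnA'.vert_union, oneEdge_verts, hu1, hvm]
    have hH₁e : H₁.edges = A.edges ∪ {e} := by
      rw [← hconnA'.edge_union, oneEdge_edges]
    have hH₂v : H₂.verts = {v, w} ∪ C.verts := by
      rw [← hconnC'.vert_union, oneEdge_verts, hw2, hv2s]
    have hH₂e : H₂.edges = {f} ∪ C.edges := by
      rw [← hconnC'.edge_union, oneEdge_edges]
    have hwnotA : w ∉ A.verts := by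
      intro hc
      have hmem : w ∈ H₁.verts ∩ H₂.verts :=
        Finset.mem_inter.mpr ⟨hconnA'.sub1.1 hc, hwH₂⟩
      rw [hS.vert_inter, Finset.mem_singleton] at hmem
      exact hwv (hmem.trans hvm.symm)
    have hunotC : u ∉ C.verts := by
      intro hc
      have hmem : u ∈ H₁.verts ∩ H₂.verts :=
        Finset.mem_inter.mpr ⟨huH₁, hconnC'.sub2.1 hc⟩
      rw [hS.vert_inter, Finset.mem_singleton] at hmem
      exact huv (hmem.trans hvm.symm)
    have hAC : ∀ x, x ∈ A.verts → x ∈ C.verts → False := by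
      intro x hxA hxC
      have hmem : x ∈ H₁.verts ∩ H₂.verts :=
        Finset.mem_inter.mpr ⟨hconnA'.sub1.1 hxA, hconnC'.sub2.1 hxC⟩
      rw [hS.vert_inter, Finset.mem_singleton] at hmem
      exact hvnotA ((hmem.trans hvm.symm) ▸ hxA)
    have hACe : ∀ x, x ∈ A.edges → x ∈ C.edges → False := by
      intro x hxA hxC
      exact Finset.disjoint_left.mp hS.edge_disj (hconnA'.sub1.2.1 hxA) (hconnC'.sub2.2.1 hxC)
    have hutC : u ≠ C.t := by
      intro hc
      have h1 : u ∈ C.verts := hc ▸ C.t_mem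
      exact hunotC h1
    -- middle graph M = S(K2m, C)
    refine IsSP.series (H₁ := A) (H₂ := ⟨⟨{u, w} ∪ C.verts, {e} ∪ C.edges,
      (suppress G0 v e f h).fst, (suppress G0 v e f h).snd, (suppress G0 v e f h).sign,
      ?_, ?_⟩, u, C.t, ?_, ?_, hutC⟩) ?_ hspA ?_
    · -- fst_mem
      intro x hx
      rcases Finset.mem_union.mp hx with hx | hx
      · rw [Finset.mem_singleton] at hx; subst hx
        rw [suppress_fst, if_pos rfl]
        exact Finset.mem_union_left _ (by simp [hudef, hwdef])
      · have hgne : x ≠ e := fun hc => henotC (hc ▸ hx)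
        rw [suppress_fst, if_neg hgne]
        exact Finset.mem_union_right _ (sub_fst_mem hsubC hx)
    · -- snd_mem
      intro x hx
      rcases Finset.mem_union.mp hx with hx | hx
      · rw [Finset.mem_singleton] at hx; subst hx
        rw [suppress_snd, if_pos rfl]
        exact Finset.mem_union_left _ (by simp [hudef, hwdef])
      · have hgne : x ≠ e := fun hc => henotC (hc ▸ hx)
        rw [suppress_snd, if_neg hgne]
        exact Finset.mem_union_right _ (sub_snd_mem hsubC hx)
    · exact Finset.mem_union_left _ (by simp)
    · exact Finset.mem_union_right _ C.t_mem
    · -- IsSeriesConn2 (suppress) A M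
      refine ⟨?_, ?_, ?_, ?_, ?_, ?_, ?_, ?_, ?_⟩
      · -- sub1 : A ⊑ suppressed
        refine ⟨?_, ?_, ?_⟩
        · intro x hx
          exact Finset.mem_erase.mpr ⟨fun hc => hvnotA (hc ▸ hx), hsubA.1 hx⟩
        · intro x hx
          exact Finset.mem_erase.mpr ⟨fun hc => hfnotA (hc ▸ hx), hsubA.2.1 hx⟩
        · intro g hg
          have hgne : g ≠ e := fun hc => henotA (hc ▸ hg)
          rw [suppress_fst, suppress_snd, suppress_sign, if_neg hgne, if_neg hgne, if_neg hgne]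
          exact ⟨(sub_fst hsubA hg).symm, (sub_snd hsubA hg).symm, (sub_sign hsubA hg).symm⟩
      · -- sub2 : M ⊑ suppressed
        refine ⟨?_, ?_, fun x _ => ⟨rfl, rfl, rfl⟩⟩
        · intro x hx
          rcases Finset.mem_union.mp hx with hx | hx
          · rw [Finset.mem_insert, Finset.mem_singleton] at hx
            rcases hx with rfl | rfl
            · exact Finset.mem_erase.mpr ⟨huv, huG⟩
            · exact Finset.mem_erase.mpr ⟨hwv, hwG⟩
          · exact Finset.mem_erase.mpr ⟨fun hc => hvnotC (hc ▸ hx), hsubC.1 hx⟩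
        · intro x hx
          rcases Finset.mem_union.mp hx with hx | hx
          · rw [Finset.mem_singleton] at hx; subst hx
            exact Finset.mem_erase.mpr ⟨h.hef, h.he⟩
          · exact Finset.mem_erase.mpr ⟨fun hc => hfnotC (hc ▸ hx), hsubC.2.1 hx⟩
      · -- vert_union
        show A.verts ∪ ({u, w} ∪ C.verts) = G0.verts.erase v
        rw [hGv, hH₁v, hH₂v]
        ext x
        simp only [Finset.mem_erase, Finset.mem_union, Finset.mem_insert, Finset.mem_singleton]
        constructor
        · rintro (hx | (rfl | rfl) | hx)
          · exact ⟨fun hc => hvnotA (hc ▸ hx), Or.inl (Or.inl hx)⟩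
          · exact ⟨huv, Or.inl (Or.inr (Or.inl rfl))⟩
          · exact ⟨hwv, Or.inr (Or.inl (Or.inr rfl))⟩
          · exact ⟨fun hc => hvnotC (hc ▸ hx), Or.inr (Or.inr hx)⟩
        · rintro ⟨hxv, (hx | rfl | rfl) | (rfl | rfl) | hx⟩
          · exact Or.inl hx
          · exact Or.inr (Or.inl (Or.inl rfl))
          · exact absurd rfl hxv
          · exact absurd rfl hxv
          · exact Or.inr (Or.inl (Or.inr rfl))
          · exact Or.inr (Or.inr hx)
      · -- vert_inter
        show A.verts ∩ ({u, w} ∪ C.verts) = {A.t}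
        ext x
        simp only [Finset.mem_inter, Finset.mem_union, Finset.mem_insert, Finset.mem_singleton]
        constructor
        · rintro ⟨hx, (rfl | rfl) | hxC⟩
          · exact hAt.symm
          · exact absurd hx hwnotA
          · exact absurd hxC (fun hc => hAC x hx hc)
        · rintro rfl
          exact ⟨A.t_mem, Or.inl (Or.inl hAt)⟩
      · -- mid
        show A.t = u
        exact hAt
      · -- edge_union
        show A.edges ∪ ({e} ∪ C.edges) = G0.edges.erase f
        rw [hGe, hH₁e, hH₂e]
        ext x
        simp only [Finset.mem_erase, Finset.mem_union, Finset.mem_singleton]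
        constructor
        · rintro (hx | rfl | hx)
          · exact ⟨fun hc => hfnotA (hc ▸ hx), Or.inl (Or.inl hx)⟩
          · exact ⟨h.hef, Or.inl (Or.inr rfl)⟩
          · exact ⟨fun hc => hfnotC (hc ▸ hx), Or.inr (Or.inr hx)⟩
        · rintro ⟨hxf, (hx | rfl) | rfl | hx⟩
          · exact Or.inl hx
          · exact Or.inr (Or.inl rfl)
          · exact absurd rfl hxf
          · exact Or.inr (Or.inr hx)
      · -- edge_disj
        rw [Finset.disjoint_left]
        intro x hx hx2
        rcases Finset.mem_union.mp hx2 with hx2 | hx2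
        · rw [Finset.mem_singleton] at hx2; subst hx2; exact henotA hx
        · exact hACe x hx hx2
      · -- src
        show G0.s = A.s
        exact hS.src.trans hconnA'.src
      · -- tgt
        show G0.t = C.t
        exact hS.tgt.trans hCt
    · -- IsSP M
      refine IsSP.series ?_ (oneEdge_isSP _ e u w hJm huw) hspC
      refine ⟨?_, ?_, rfl, ?_, ?_, rfl, ?_, rfl, rfl⟩
      · -- K2m ⊑ M
        refine ⟨?_, ?_, fun x _ => ⟨rfl, rfl, rfl⟩⟩
        · intro x hx
          rw [oneEdge_verts] at hx
          exact Finset.mem_union_left _ hx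
        · intro x hx
          rw [oneEdge_edges] at hx
          exact Finset.mem_union_left _ hx
      · -- C ⊑ M
        refine ⟨Finset.subset_union_right, Finset.subset_union_right, ?_⟩
        intro g hg
        have hgne : g ≠ e := fun hc => henotC (hc ▸ hg)
        show C.fst g = _ ∧ C.snd g = _ ∧ C.sign g = _
        rw [suppress_fst, suppress_snd, suppress_sign, if_neg hgne, if_neg hgne, if_neg hgne]
        exact ⟨(sub_fst hsubC hg).symm, (sub_snd hsubC hg).symm, (sub_sign hsubC hg).symm⟩
      · -- vert_inter : {u,w} ∩ C.verts = {w}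
        rw [oneEdge_verts, oneEdge_t]
        ext x
        simp only [Finset.mem_inter, Finset.mem_insert, Finset.mem_singleton]
        constructor
        · rintro ⟨rfl | rfl, hx⟩
          · exact absurd hx hunotC
          · rfl
        · rintro rfl
          exact ⟨Or.inr rfl, hCs ▸ C.s_mem⟩
      · -- mid
        rw [oneEdge_t]; exact hCs.symm
      · -- edge_disj
        rw [oneEdge_edges, Finset.disjoint_singleton_left]
        exact henotC
end Aux10
section Aux11
open SignedGraph

/-- Suppressing a non-terminal degree-2 vertex of a series-parallel graph
yields a series-parallel graph. -/
lemma suppress_isSP {G : TTGraph} (hsp : IsSP G) :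
    ∀ v e f (h : SuppData G v e f), IsSP (suppress G v e f h) := by
  induction hsp with
  | @k2 G0 hk2 =>
    intro v e f h
    exfalso
    obtain ⟨hverts, e₀, hedges, hJ⟩ := hk2
    have hv := h.hv
    rw [hverts, Finset.mem_insert, Finset.mem_singleton] at hv
    rcases hv with rfl | rfl
    exacts [h.hvs rfl, h.hvt rfl]
  | @parallel G0 H₁ H₂ hP hsp1 hsp2 ih1 ih2 =>
    intro v e f h
    have hv : v ∈ H₁.verts ∪ H₂.verts := by rw [hP.vert_union]; exact h.hv
    rcases Finset.mem_union.mp hv with hv1 | hv2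
    · exact suppress_parallel_left hP h hv1 hsp2 (fun h₁ => ih1 v e f h₁)
    · exact suppress_parallel_left hP.symm h hv2 hsp1 (fun h₂ => ih2 v e f h₂)
  | @series G0 H₁ H₂ hS hsp1 hsp2 ih1 ih2 =>
    intro v e f h
    by_cases hvm : v = H₁.t
    · -- junction case
      have hv2s : v = H₂.s := hvm.trans hS.mid
      have hnot11 : ¬ (e ∈ H₁.edges ∧ f ∈ H₁.edges) := by
        rintro ⟨he1, hf1⟩
        obtain ⟨g₂, hg₂, hincg₂⟩ := hsp2.exists_incident H₂.s H₂.s_mem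
        have hincG : G0.fst g₂ = v ∨ G0.snd g₂ = v := by
          rw [sub_fst hS.sub2 hg₂, sub_snd hS.sub2 hg₂, hv2s]
          exact hincg₂
        rcases h.honly g₂ (hS.sub2.2.1 hg₂) hincG with rfl | rfl
        · exact Finset.disjoint_left.mp hS.edge_disj he1 hg₂
        · exact Finset.disjoint_left.mp hS.edge_disj hf1 hg₂
      have hnot22 : ¬ (e ∈ H₂.edges ∧ f ∈ H₂.edges) := by
        rintro ⟨he2, hf2⟩
        obtain ⟨g₁, hg₁, hincg₁⟩ := hsp1.exists_incident H₁.t H₁.t_mem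
        have hincG : G0.fst g₁ = v ∨ G0.snd g₁ = v := by
          rw [sub_fst hS.sub1 hg₁, sub_snd hS.sub1 hg₁, hvm]
          exact hincg₁
        rcases h.honly g₁ (hS.sub1.2.1 hg₁) hincG with rfl | rfl
        · exact Finset.disjoint_left.mp hS.edge_disj hg₁ he2
        · exact Finset.disjoint_left.mp hS.edge_disj hg₁ hf2
      have he' : e ∈ H₁.edges ∨ e ∈ H₂.edges := by
        have hm := h.he; rw [← hS.edge_union] at hm
        exact Finset.mem_union.mp hm
      have hf' : f ∈ H₁.edges ∨ f ∈ H₂.edges := by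
        have hm := h.hf; rw [← hS.edge_union] at hm
        exact Finset.mem_union.mp hm
      rcases he' with he1 | he2 <;> rcases hf' with hf1 | hf2
      · exact absurd ⟨he1, hf1⟩ hnot11
      · exact suppress_series_mid hS hsp1 hsp2 h hvm he1 hf2
      · -- use reversal
        have hrev := suppress_series_mid hS.rev hsp2.rev hsp1.rev h.rev
          (show v = H₂.rev.t from hv2s) he2 hf1
        exact hrev.rev
      · exact absurd ⟨he2, hf2⟩ hnot22
    · -- v is not the junction
      have hv : v ∈ H₁.verts ∪ H₂.verts := by rw [hS.vert_union]; exact h.hv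
      rcases Finset.mem_union.mp hv with hv1 | hv2
      · exact suppress_series_left hS h hv1 hvm hsp2 (fun h₁ => ih1 v e f h₁)
      · have hvs2 : v ≠ H₂.s := fun hc => hvm (hc.trans hS.mid.symm)
        have ihrev : ∀ (h₂ : SuppData H₂.rev v e f), IsSP (suppress H₂.rev v e f h₂) := by
          intro h₂
          have h₂' : SuppData H₂ v e f :=
            ⟨h₂.hvt, h₂.hvs, h₂.he, h₂.hf, h₂.hef, h₂.hiE, h₂.hiF, h₂.honly⟩
          exact (ih2 v e f h₂').rev
        exact (suppress_series_left hS.rev h.rev hv2 hvs2 hsp1.rev ihrev).rev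

end Aux11
section Aux12
open SignedGraph

lemma degree_eq_card_inc {G : TTGraph} (hnl : ∀ g ∈ G.edges, G.fst g ≠ G.snd g) (v : ℕ) :
    G.toSignedGraph.degree v =
      (G.edges.filter (fun g => G.fst g = v ∨ G.snd g = v)).card := by
  unfold SignedGraph.degree
  rw [Finset.card_filter]
  apply Finset.sum_congr rfl
  intro g hg
  by_cases h1 : G.fst g = v
  · by_cases h2 : G.snd g = v
    · exact absurd (h1.trans h2.symm) (hnl g hg)
    · simp [h1, h2]
  · by_cases h2 : G.snd g = v
    · simp [h1, h2]
    · simp [h1, h2]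

lemma excess_eq_sum_inc (G : TTGraph) (o₁ o₂ : ℕ → Bool) (φ : ℕ → ℤ) (v : ℕ) :
    G.toSignedGraph.excess o₁ o₂ φ v =
      ∑ g ∈ G.edges.filter (fun g => G.fst g = v ∨ G.snd g = v),
        ((if G.fst g = v then dirVal (o₁ g) * φ g else 0) +
         (if G.snd g = v then dirVal (o₂ g) * φ g else 0)) := by
  unfold SignedGraph.excess
  rw [Finset.sum_filter_of_ne]
  intro g _ hne
  by_contra hc
  push_neg at hc
  simp [hc.1, hc.2] at hne
/-- In a minimum counterexample, every non-terminal vertex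
has degree at least three. -/
theorem min_counterexample_nonterminal_degree_ge_three (G : TTGraph)
    (hmin : MinCounterexample G) :
    ∀ v ∈ G.verts, v ≠ G.s → v ≠ G.t → 3 ≤ G.toSignedGraph.degree v := by
  obtain ⟨hsp, ⟨k, o₁, o₂, φ, hfl⟩, h6, hminl⟩ := hmin
  intro v hv hvs hvt
  by_contra hdeg
  push_neg at hdeg
  have hnl := hsp.no_loop
  have hcard : (G.edges.filter (fun g => G.fst g = v ∨ G.snd g = v)).card ≤ 2 := by
    rw [← degree_eq_card_inc hnl v]; omega
  obtain ⟨g₀, hg₀, hincg₀⟩ := hsp.exists_incident v hv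
  have hg₀mem : g₀ ∈ G.edges.filter (fun g => G.fst g = v ∨ G.snd g = v) :=
    Finset.mem_filter.mpr ⟨hg₀, hincg₀⟩
  have hpos : 0 < (G.edges.filter (fun g => G.fst g = v ∨ G.snd g = v)).card :=
    Finset.card_pos.mpr ⟨g₀, hg₀mem⟩
  have hne1 : (G.edges.filter (fun g => G.fst g = v ∨ G.snd g = v)).card ≠ 1 := by
    intro h1
    obtain ⟨g, hgset⟩ := Finset.card_eq_one.mp h1
    have hgmem : g ∈ G.edges.filter (fun g => G.fst g = v ∨ G.snd g = v) := by
      rw [hgset]; exact Finset.mem_singleton_self g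
    obtain ⟨hgE, hginc⟩ := Finset.mem_filter.mp hgmem
    have h0 := hfl.conserve v hv
    rw [excess_eq_sum_inc, hgset, Finset.sum_singleton] at h0
    rcases hginc with h1' | h2'
    · have hsne : G.snd g ≠ v := fun hc => hnl g hgE (h1'.trans hc.symm)
      rw [if_pos h1', if_neg hsne, add_zero] at h0
      exact mul_ne_zero (dirVal_ne_zero _) (hfl.nonzero g hgE) h0
    · have hfne : G.fst g ≠ v := fun hc => hnl g hgE (hc.trans h2'.symm)
      rw [if_neg hfne, if_pos h2', zero_add] at h0
      exact mul_ne_zero (dirVal_ne_zero _) (hfl.nonzero g hgE) h0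
  have hc2 : (G.edges.filter (fun g => G.fst g = v ∨ G.snd g = v)).card = 2 := by omega
  obtain ⟨e, f, hef, hpair⟩ := Finset.card_eq_two.mp hc2
  have hemem : e ∈ G.edges.filter (fun g => G.fst g = v ∨ G.snd g = v) := by
    rw [hpair]; exact Finset.mem_insert_self _ _
  have hfmem : f ∈ G.edges.filter (fun g => G.fst g = v ∨ G.snd g = v) := by
    rw [hpair]; simp
  obtain ⟨heE, heinc⟩ := Finset.mem_filter.mp hemem
  obtain ⟨hfE, hfinc⟩ := Finset.mem_filter.mp hfmem
  have hiE : IncOnce G.toSignedGraph e v := by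
    rcases heinc with h1 | h2
    · exact Or.inl ⟨h1, fun hc => hnl e heE (h1.trans hc.symm)⟩
    · exact Or.inr ⟨fun hc => hnl e heE (hc.trans h2.symm), h2⟩
  have hiF : IncOnce G.toSignedGraph f v := by
    rcases hfinc with h1 | h2
    · exact Or.inl ⟨h1, fun hc => hnl f hfE (h1.trans hc.symm)⟩
    · exact Or.inr ⟨fun hc => hnl f hfE (hc.trans h2.symm), h2⟩
  have hD : SuppData G v e f := by
    refine ⟨hvs, hvt, heE, hfE, hef, hiE, hiF, ?_⟩
    intro g hg hinc
    have hgm : g ∈ G.edges.filter (fun g => G.fst g = v ∨ G.snd g = v) :=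
      Finset.mem_filter.mpr ⟨hg, hinc⟩
    rw [hpair, Finset.mem_insert, Finset.mem_singleton] at hgm
    exact hgm
  have hSP' := suppress_isSP hsp v e f hD
  have hadm' : (suppress G v e f hD).toSignedGraph.FlowAdmissible :=
    ⟨k, suppress_flow_forward hD hfl⟩
  have h6' : ¬ (suppress G v e f hD).toSignedGraph.HasNZFlow 6 := by
    rintro ⟨o₁', o₂', φ', hfl'⟩
    exact h6 (suppress_flow_backward hD hfl')
  have hge := hminl (suppress G v e f hD) hSP' hadm' h6'
  have hlt : (G.edges.erase f).card < G.edges.card := Finset.card_erase_lt_of_mem hfE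
  rw [suppress_edges] at hge
  omega
end Aux12
end

section
/- Every flow-admissible string admits a nowhere-zero 6-flow, and every flow-admissible necklace admits a nowhere-zero 6-flow. -/
section KR

open SignedGraph

/-- per-edge contribution term -/
def kTm (A : SignedGraph) (o₁ o₂ : ℕ → Bool) (φ : ℕ → ℤ) (v e : ℕ) : ℤ :=
  (if A.fst e = v then dirVal (o₁ e) * φ e else 0) +
  (if A.snd e = v then dirVal (o₂ e) * φ e else 0)

/-- contribution of a set of edges at a vertex -/
def kCtb (A : SignedGraph) (o₁ o₂ : ℕ → Bool) (φ : ℕ → ℤ) (E : Finset ℕ) (v : ℕ) : ℤ :=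
  ∑ e ∈ E, kTm A o₁ o₂ φ v e

lemma excess_eq_kCtb (A : SignedGraph) (o₁ o₂ : ℕ → Bool) (φ : ℕ → ℤ) (v : ℕ) :
    A.excess o₁ o₂ φ v = kCtb A o₁ o₂ φ A.edges v := rfl

lemma kTm_congr {A : SignedGraph} {o₁ o₂ p₁ p₂ : ℕ → Bool} {φ ψ : ℕ → ℤ} {v e : ℕ}
    (h1 : o₁ e = p₁ e) (h2 : o₂ e = p₂ e) (h3 : φ e = ψ e) :
    kTm A o₁ o₂ φ v e = kTm A p₁ p₂ ψ v e := by
  unfold kTm; rw [h1, h2, h3]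

lemma kTm_zero {A : SignedGraph} {o₁ o₂ : ℕ → Bool} {φ : ℕ → ℤ} {v e : ℕ}
    (h1 : A.fst e ≠ v) (h2 : A.snd e ≠ v) : kTm A o₁ o₂ φ v e = 0 := by
  unfold kTm; rw [if_neg h1, if_neg h2]; ring

lemma kCtb_zero {A : SignedGraph} {o₁ o₂ : ℕ → Bool} {φ : ℕ → ℤ} {E : Finset ℕ} {v : ℕ}
    (h : ∀ e ∈ E, A.fst e ≠ v ∧ A.snd e ≠ v) : kCtb A o₁ o₂ φ E v = 0 := by
  unfold kCtb
  exact Finset.sum_eq_zero fun e he => kTm_zero (h e he).1 (h e he).2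

/-- total excess over a vertex set -/
lemma kTotal (A : SignedGraph) (o₁ o₂ : ℕ → Bool) (φ : ℕ → ℤ) :
    ∑ v ∈ A.verts, A.excess o₁ o₂ φ v
      = ∑ e ∈ A.edges, (dirVal (o₁ e) + dirVal (o₂ e)) * φ e := by
  unfold SignedGraph.excess
  rw [Finset.sum_comm]
  refine Finset.sum_congr rfl fun e he => ?_
  rw [Finset.sum_add_distrib, Finset.sum_ite_eq, Finset.sum_ite_eq,
    if_pos (A.fst_mem e he), if_pos (A.snd_mem e he)]
  ring

/-- a flow on a graph with exactly one negative edge is impossible -/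
lemma kOneNegContra {A : SignedGraph} {k : ℕ} {o₁ o₂ : ℕ → Bool} {φ : ℕ → ℤ}
    (hf : A.IsNZFlow k o₁ o₂ φ) {f : ℕ} (hfm : f ∈ A.edges) (hneg : A.sign f = false)
    (hpos : ∀ e ∈ A.edges, e ≠ f → A.sign e = true) : False := by
  have h0 : ∑ v ∈ A.verts, A.excess o₁ o₂ φ v = 0 :=
    Finset.sum_eq_zero fun v hv => hf.conserve v hv
  rw [kTotal] at h0
  have hsum : ∑ e ∈ A.edges, (dirVal (o₁ e) + dirVal (o₂ e)) * φ e
      = (dirVal (o₁ f) + dirVal (o₂ f)) * φ f := by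
    refine Finset.sum_eq_single_of_mem f hfm fun e he hne => ?_
    have := (hf.orient e he).1 (hpos e he hne)
    cases h1 : o₁ e <;> cases h2 : o₂ e <;> simp [h1, h2] at this ⊢ <;> simp [dirVal]
  rw [hsum] at h0
  have heq := (hf.orient f hfm).2 hneg
  have hnz := hf.nonzero f hfm
  cases h1 : o₁ f <;> rw [h1] at heq <;> rw [← heq] at h0 <;> rw [h1] at h0 <;>
    simp [dirVal] at h0 <;> omega

/-- a flow with a degree-one vertex `u` (unique incident edge `e0`) is impossible -/
lemma kUniqueEdgeContra {A : SignedGraph} {o₁ o₂ : ℕ → Bool} {φ : ℕ → ℤ}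
    {u w e0 : ℕ} (he0 : e0 ∈ A.edges)
    (hj : A.Joins e0 u w) (huw : u ≠ w)
    (huniq : ∀ e ∈ A.edges, (A.fst e = u ∨ A.snd e = u) → e = e0)
    (hnz : φ e0 ≠ 0) (hcons : A.excess o₁ o₂ φ u = 0) : False := by
  have hexc : A.excess o₁ o₂ φ u = kTm A o₁ o₂ φ u e0 := by
    rw [excess_eq_kCtb]
    refine Finset.sum_eq_single_of_mem e0 he0 fun e he hne => ?_
    refine kTm_zero (fun h => hne (huniq e he (Or.inl h))) (fun h => hne (huniq e he (Or.inr h)))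
  rw [hcons] at hexc
  unfold kTm at hexc
  rcases hj with ⟨h1, h2⟩ | ⟨h1, h2⟩ <;>
    rw [h1, h2] at hexc
  · rw [if_pos rfl, if_neg (Ne.symm huw)] at hexc
    have := dirVal_ne_zero (o₁ e0)
    have : dirVal (o₁ e0) = 1 ∨ dirVal (o₁ e0) = -1 := by
      cases o₁ e0 <;> simp [dirVal]
    rcases this with h | h <;> rw [h] at hexc <;> omega
  · rw [if_neg (Ne.symm huw), if_pos rfl] at hexc
    have : dirVal (o₂ e0) = 1 ∨ dirVal (o₂ e0) = -1 := by
      cases o₂ e0 <;> simp [dirVal]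
    rcases this with h | h <;> rw [h] at hexc <;> omega

/-- agreement of edge data with an ambient signed graph -/
def kAgree (A : SignedGraph) (X : TTGraph) : Prop :=
  ∀ e ∈ X.edges, A.fst e = X.fst e ∧ A.snd e = X.snd e ∧ A.sign e = X.sign e

lemma kAgree_refl (X : TTGraph) : kAgree X.toSignedGraph X := fun _ _ => ⟨rfl, rfl, rfl⟩

lemma kSubTrans {A B C : SignedGraph} (h1 : A.IsSubgraph B) (h2 : B.IsSubgraph C) :
    A.IsSubgraph C := by
  refine ⟨h1.1.trans h2.1, h1.2.1.trans h2.2.1, fun e he => ?_⟩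
  obtain ⟨a1, a2, a3⟩ := h1.2.2 e he
  obtain ⟨b1, b2, b3⟩ := h2.2.2 e (h1.2.1 he)
  exact ⟨a1.trans b1, a2.trans b2, a3.trans b3⟩

lemma kAgree_of_sub {A : SignedGraph} {X Y : TTGraph} (hag : kAgree A X)
    (h : Y.toSignedGraph.IsSubgraph X.toSignedGraph) : kAgree A Y := by
  intro e he
  obtain ⟨hf, hs, hg⟩ := h.2.2 e he
  obtain ⟨hf', hs', hg'⟩ := hag e (h.2.1 he)
  exact ⟨hf'.trans hf.symm, hs'.trans hs.symm, hg'.trans hg.symm⟩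

/-- K₂⁺ and D are mutually exclusive -/
lemma kExcl {H : TTGraph} (h1 : IsPositiveK2 H) (h2 : IsUnbalanced2Cycle H) : False := by
  obtain ⟨⟨_, e0, hes, _⟩, _⟩ := h1
  obtain ⟨_, e, f, hef, hes', _, _, _⟩ := h2
  have he : e ∈ H.edges := by rw [hes']; exact Finset.mem_insert_self _ _
  have hf : f ∈ H.edges := by rw [hes']; simp
  rw [hes, Finset.mem_singleton] at he hf
  exact hef (he.trans hf.symm)

lemma kGetLast?_cons {α : Type*} (a : α) {l : List α} (h : l ≠ []) :
    (a :: l).getLast? = l.getLast? := by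
  cases l with
  | nil => exact absurd rfl h
  | cons b l => rw [List.getLast?_cons_cons]

lemma kGetLast?_mem {α : Type*} {l : List α} {W : α} (h : l.getLast? = some W) : W ∈ l := by
  obtain ⟨hne, heq⟩ := List.mem_getLast?_eq_getLast (l := l) (x := W) (by rw [h]; rfl)
  rw [heq]; exact List.getLast_mem hne

lemma kSCL_ne_nil {X : TTGraph} {l : List TTGraph} (h : IsSeriesConnList X l) : l ≠ [] := by
  cases h <;> simp

lemma kHead {X : TTGraph} {l : List TTGraph} (h : IsSeriesConnList X l) :
    ∃ H Y l', l = H :: l' ∧ IsSeriesConn2 X H Y := by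
  cases h with
  | two hc => exact ⟨_, _, _, rfl, hc⟩
  | cons hc _ => exact ⟨_, _, _, rfl, hc⟩

/-- all edges of the whole series connection incident with the source lie in the
first part -/
lemma kEdgeAtS {X H Y : TTGraph} (hc : IsSeriesConn2 X H Y) :
    ∀ e ∈ X.edges, (X.fst e = X.s ∨ X.snd e = X.s) → e ∈ H.edges := by
  intro e he hend
  rw [← hc.edge_union] at he
  rcases Finset.mem_union.mp he with h | h
  · exact h
  · exfalso
    obtain ⟨hf, hs, _⟩ := hc.sub2.2.2 e h
    have hsv : X.s ∈ Y.verts := by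
      rcases hend with h1 | h1
      · rw [← h1, ← hf]; exact Y.fst_mem e h
      · rw [← h1, ← hs]; exact Y.snd_mem e h
    have hsv2 : X.s ∈ H.verts := by rw [hc.src]; exact H.s_mem
    have : X.s ∈ H.verts ∩ Y.verts := Finset.mem_inter.mpr ⟨hsv2, hsv⟩
    rw [hc.vert_inter, Finset.mem_singleton] at this
    exact H.s_ne_t (by rw [← hc.src, this])

/-- all edges of the whole series connection incident with the target lie in the
last part -/
lemma kEdgeAtT {X : TTGraph} {l : List TTGraph} (h : IsSeriesConnList X l) :
    ∃ W, l.getLast? = some W ∧ X.t = W.t ∧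
      ∀ e ∈ X.edges, (X.fst e = X.t ∨ X.snd e = X.t) → e ∈ W.edges := by
  induction h with
  | @two X H₁ H₂ hc =>
    refine ⟨H₂, rfl, hc.tgt, fun e he hend => ?_⟩
    rw [← hc.edge_union] at he
    rcases Finset.mem_union.mp he with h | h
    · exfalso
      obtain ⟨hf, hs, _⟩ := hc.sub1.2.2 e h
      have htv : X.t ∈ H₁.verts := by
        rcases hend with h1 | h1
        · rw [← h1, ← hf]; exact H₁.fst_mem e h
        · rw [← h1, ← hs]; exact H₁.snd_mem e h
      have htv2 : X.t ∈ H₂.verts := by rw [hc.tgt]; exact H₂.t_mem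
      have : X.t ∈ H₁.verts ∩ H₂.verts := Finset.mem_inter.mpr ⟨htv, htv2⟩
      rw [hc.vert_inter, Finset.mem_singleton] at this
      rw [hc.mid] at this
      exact H₂.s_ne_t (by rw [← this, hc.tgt])
    · exact h
  | @cons X Y H l hc htail ih =>
    obtain ⟨W, hW, hWt, hWuniq⟩ := ih
    refine ⟨W, ?_, hc.tgt.trans hWt, fun e he hend => ?_⟩
    · rw [kGetLast?_cons _ (kSCL_ne_nil htail)]; exact hW
    · rw [← hc.edge_union] at he
      rcases Finset.mem_union.mp he with h | h
      · exfalso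
        obtain ⟨hf, hs, _⟩ := hc.sub1.2.2 e h
        have htv : X.t ∈ H.verts := by
          rcases hend with h1 | h1
          · rw [← h1, ← hf]; exact H.fst_mem e h
          · rw [← h1, ← hs]; exact H.snd_mem e h
        have htv2 : X.t ∈ Y.verts := by rw [hc.tgt]; exact Y.t_mem
        have : X.t ∈ H.verts ∩ Y.verts := Finset.mem_inter.mpr ⟨htv, htv2⟩
        rw [hc.vert_inter, Finset.mem_singleton] at this
        rw [hc.mid] at this
        exact Y.s_ne_t (by rw [← this, hc.tgt])
      · obtain ⟨hf, hs, _⟩ := hc.sub2.2.2 e h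
        refine hWuniq e h ?_
        rw [hf, hs, ← hc.tgt]
        exact hend

lemma kSub_of_mem {X : TTGraph} {l : List TTGraph} (h : IsSeriesConnList X l) :
    ∀ H ∈ l, H.toSignedGraph.IsSubgraph X.toSignedGraph := by
  induction h with
  | two hc =>
    intro H hH
    simp only [List.mem_cons, List.mem_singleton, List.not_mem_nil, or_false] at hH
    rcases hH with rfl | rfl
    · exact hc.sub1
    · exact hc.sub2
  | cons hc htail ih =>
    intro H hH
    rcases List.mem_cons.mp hH with h | h
    · exact h ▸ hc.sub1
    · exact kSubTrans (ih H h) hc.sub2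

/-- count of unbalanced 2-cycles among the parts -/
inductive kDCnt : List TTGraph → ℕ → Prop
  | nil : kDCnt [] 0
  | k {H : TTGraph} {l n} : IsPositiveK2 H → kDCnt l n → kDCnt (H :: l) n
  | d {H : TTGraph} {l n} : IsUnbalanced2Cycle H → kDCnt l n → kDCnt (H :: l) (n + 1)

lemma kDCnt_exists (l : List TTGraph)
    (h : ∀ H ∈ l, IsPositiveK2 H ∨ IsUnbalanced2Cycle H) : ∃ n, kDCnt l n := by
  induction l with
  | nil => exact ⟨0, kDCnt.nil⟩
  | cons H l ih =>
    obtain ⟨n, hn⟩ := ih fun H' h' => h H' (List.mem_cons_of_mem _ h')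
    rcases h H (List.mem_cons_self) with hK | hD
    · exact ⟨n, kDCnt.k hK hn⟩
    · exact ⟨n + 1, kDCnt.d hD hn⟩

lemma kDCnt_zero : ∀ {l : List TTGraph}, kDCnt l 0 → ∀ H ∈ l, IsPositiveK2 H := by
  intro l h
  induction l with
  | nil => intro H hH; exact absurd hH List.not_mem_nil
  | cons H' l ih =>
    cases h with
    | k hK htail =>
      intro H hH
      rcases List.mem_cons.mp hH with rfl | hH
      · exact hK
      · exact ih htail H hH

def kFstD (l : List TTGraph) : Prop := ∃ H, l.head? = some H ∧ IsUnbalanced2Cycle H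
def kLstD (l : List TTGraph) : Prop := ∃ H, l.getLast? = some H ∧ IsUnbalanced2Cycle H

/-- conditions under which the value pair `(c,d)` is realizable on a chain with
`n` unbalanced 2-cycles -/
def kCond (n : ℕ) (c d : ℤ) (fD lD : Prop) : Prop :=
  (-5 ≤ c ∧ c ≤ 5) ∧ (d = 0 ∨ d = 1 ∨ d = -1 ∨ d = 3 ∨ d = -3) ∧ (c - d) % 2 = 0 ∧
  (n = 0 → c = d ∧ c ≠ 0) ∧ (n = 1 → d ≠ c ∧ d ≠ -c) ∧
  (1 ≤ n → (c ≠ 0 ∨ fD) ∧ (d ≠ 0 ∨ lD))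

lemma kCond_mono {n c d} {P Q : Prop} (h : kCond n c d False False) : kCond n c d P Q := by
  obtain ⟨h1, h2, h3, h4, h5, h6⟩ := h
  refine ⟨h1, h2, h3, h4, h5, fun hn => ?_⟩
  obtain ⟨ha, hb⟩ := h6 hn
  exact ⟨Or.inl (ha.resolve_right False.elim), Or.inl (hb.resolve_right False.elim)⟩

/-- choice of an intermediate value at a non-final unbalanced 2-cycle -/
lemma kMid {c d : ℤ} (h5 : -5 ≤ c ∧ c ≤ 5) (hd : d = 0 ∨ d = 1 ∨ d = -1 ∨ d = 3 ∨ d = -3)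
    (hpar : (c - d) % 2 = 0) :
    ∃ m : ℤ, m ≠ 0 ∧ m ≠ c ∧ m ≠ -c ∧ m ≠ d ∧ m ≠ -d ∧ -5 ≤ m ∧ m ≤ 5 ∧
      (c - m) % 2 = 0 ∧ (m - d) % 2 = 0 := by
  refine ⟨if c % 2 = 0 then (if c = 4 ∨ c = -4 then 2 else 4)
    else (if c = 1 ∨ c = -1 ∨ d = 1 ∨ d = -1 then
      (if c = 3 ∨ c = -3 ∨ d = 3 ∨ d = -3 then 5 else 3) else 1), ?_⟩
  split_ifs <;> omega

/-- flow data on a piece: valid orientation, nonzero bounded values,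
conservation at internal vertices, prescribed contributions at terminals -/
structure kChainProps (A : SignedGraph) (X : TTGraph) (o₁ o₂ : ℕ → Bool) (φ : ℕ → ℤ)
    (c d : ℤ) : Prop where
  orient : ∀ e ∈ X.edges, (A.sign e = true → o₁ e ≠ o₂ e) ∧ (A.sign e = false → o₁ e = o₂ e)
  good : ∀ e ∈ X.edges, φ e ≠ 0 ∧ |φ e| ≤ 5
  conserve : ∀ v ∈ X.verts, v ≠ X.s → v ≠ X.t → kCtb A o₁ o₂ φ X.edges v = 0
  at_s : kCtb A o₁ o₂ φ X.edges X.s = c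
  at_t : kCtb A o₁ o₂ φ X.edges X.t = -d

/-- realization on a positive K₂ -/
lemma kSegPos (A : SignedGraph) {H : TTGraph} (hK : IsPositiveK2 H)
    (hag : kAgree A H) (z : ℤ) (hz : z ≠ 0) (hz5 : |z| ≤ 5) :
    ∃ o₁ o₂ φ, kChainProps A H o₁ o₂ φ z z := by
  obtain ⟨⟨hv, e0, hes, hj⟩, hpos⟩ := hK
  have he0 : e0 ∈ H.edges := by rw [hes]; exact Finset.mem_singleton_self e0
  obtain ⟨haf, has, hasg⟩ := hag e0 he0
  have hst : H.s ≠ H.t := H.s_ne_t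
  have hsg : A.sign e0 = true := by rw [hasg]; exact hpos e0 he0
  have hmem : ∀ e ∈ H.edges, e = e0 := fun e he => by rwa [hes, Finset.mem_singleton] at he
  have hconsv : ∀ (o₁ o₂ : ℕ → Bool) (φ : ℕ → ℤ), ∀ v ∈ H.verts, v ≠ H.s → v ≠ H.t →
      kCtb A o₁ o₂ φ H.edges v = 0 := by
    intro o₁ o₂ φ v hv' h1 h2
    rw [hv] at hv'
    rcases Finset.mem_insert.mp hv' with h | h
    · exact absurd h h1
    · exact absurd (Finset.mem_singleton.mp h) h2
  rcases hj with ⟨h1, h2⟩ | ⟨h1, h2⟩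
  · refine ⟨fun _ => true, fun _ => false, fun _ => z, ?_, ?_, hconsv _ _ _, ?_, ?_⟩
    · intro e he
      constructor
      · intro _; simp
      · intro hfalse
        rw [hmem e he, hsg] at hfalse; exact absurd hfalse (by simp)
    · intro e _; exact ⟨hz, hz5⟩
    · rw [kCtb, hes, Finset.sum_singleton, kTm, haf, has, h1, h2,
        if_pos rfl, if_neg (Ne.symm hst)]
      simp [dirVal]
    · rw [kCtb, hes, Finset.sum_singleton, kTm, haf, has, h1, h2,
        if_neg hst, if_pos rfl]
      simp [dirVal]
  · refine ⟨fun _ => false, fun _ => true, fun _ => z, ?_, ?_, hconsv _ _ _, ?_, ?_⟩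
    · intro e he
      constructor
      · intro _; simp
      · intro hfalse
        rw [hmem e he, hsg] at hfalse; exact absurd hfalse (by simp)
    · intro e _; exact ⟨hz, hz5⟩
    · rw [kCtb, hes, Finset.sum_singleton, kTm, haf, has, h1, h2,
        if_neg (Ne.symm hst), if_pos rfl]
      simp [dirVal]
    · rw [kCtb, hes, Finset.sum_singleton, kTm, haf, has, h1, h2,
        if_pos rfl, if_neg hst]
      simp [dirVal]

/-- realization on an unbalanced 2-cycle: core version with the positive edge `p`
and the negative edge `q` -/
lemma kSegDCore (A : SignedGraph) {H : TTGraph} (p q : ℕ) (hpq : p ≠ q)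
    (hes : H.edges = {p, q}) (hjp : H.toSignedGraph.Joins p H.s H.t)
    (hjq : H.toSignedGraph.Joins q H.s H.t)
    (hv : H.verts = {H.s, H.t}) (hag : kAgree A H)
    (hsp : A.sign p = true) (hsq : A.sign q = false)
    (x y : ℤ) (hx : x ≠ 0) (hy : y ≠ 0) (hx5 : |x| ≤ 5) (hy5 : |y| ≤ 5) :
    ∃ o₁ o₂ φ, kChainProps A H o₁ o₂ φ (x + y) (x - y) := by
  have hp : p ∈ H.edges := by rw [hes]; exact Finset.mem_insert_self _ _
  have hq : q ∈ H.edges := by rw [hes]; simp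
  obtain ⟨hafp, hasp, _⟩ := hag p hp
  obtain ⟨hafq, hasq, _⟩ := hag q hq
  have hst : H.s ≠ H.t := H.s_ne_t
  refine ⟨fun m => if m = p then decide (A.fst p = H.s) else true,
         fun m => if m = p then decide (A.snd p = H.s) else true,
         fun m => if m = p then x else y, ?_, ?_, ?_, ?_, ?_⟩
  · intro e he
    rw [hes] at he
    rcases Finset.mem_insert.mp he with rfl | he
    · constructor
      · intro _
        simp only [if_pos rfl]
        rcases hjp with ⟨h1, h2⟩ | ⟨h1, h2⟩ <;>
          rw [hafp, hasp, h1, h2] <;> simp [hst, Ne.symm hst]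
      · intro hfalse; rw [hsp] at hfalse; exact absurd hfalse (by simp)
    · rw [Finset.mem_singleton] at he; subst he
      constructor
      · intro htrue; rw [hsq] at htrue; exact absurd htrue (by simp)
      · intro _; rw [if_neg (Ne.symm hpq), if_neg (Ne.symm hpq)]
  · intro e he
    rw [hes] at he
    rcases Finset.mem_insert.mp he with rfl | he
    · rw [if_pos rfl]; exact ⟨hx, hx5⟩
    · rw [Finset.mem_singleton] at he; subst he
      rw [if_neg (Ne.symm hpq)]; exact ⟨hy, hy5⟩
  · intro v hv' h1 h2
    rw [hv] at hv'
    rcases Finset.mem_insert.mp hv' with h | h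
    · exact absurd h h1
    · exact absurd (Finset.mem_singleton.mp h) h2
  · rw [kCtb, hes, Finset.sum_pair hpq]
    rcases hjp with ⟨h1, h2⟩ | ⟨h1, h2⟩ <;> rcases hjq with ⟨h3, h4⟩ | ⟨h3, h4⟩ <;>
      simp [kTm, hafp, hasp, hafq, hasq, h1, h2, h3, h4, hst, Ne.symm hst,
        Ne.symm hpq, dirVal] <;> ring
  · rw [kCtb, hes, Finset.sum_pair hpq]
    rcases hjp with ⟨h1, h2⟩ | ⟨h1, h2⟩ <;> rcases hjq with ⟨h3, h4⟩ | ⟨h3, h4⟩ <;>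
      simp [kTm, hafp, hasp, hafq, hasq, h1, h2, h3, h4, hst, Ne.symm hst,
        Ne.symm hpq, dirVal] <;> ring

/-- realization on an unbalanced 2-cycle -/
lemma kSegD (A : SignedGraph) {H : TTGraph} (hD : IsUnbalanced2Cycle H)
    (hag : kAgree A H) (c d : ℤ) (hpar : (c - d) % 2 = 0) (hne1 : d ≠ c) (hne2 : d ≠ -c)
    (hc5 : |c| ≤ 5) (hd5 : |d| ≤ 5) :
    ∃ o₁ o₂ φ, kChainProps A H o₁ o₂ φ c d := by
  obtain ⟨hv, e, f, hef, hes, hje, hjf, hsgn⟩ := hD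
  obtain ⟨y, hyy⟩ : ∃ y : ℤ, c - d = 2 * y := ⟨(c - d) / 2, by omega⟩
  set x := c - y with hxx
  have hx : x ≠ 0 := by rw [abs_le] at hc5 hd5; omega
  have hy : y ≠ 0 := by omega
  have hx5 : |x| ≤ 5 := by rw [abs_le] at hc5 hd5 ⊢; omega
  have hy5 : |y| ≤ 5 := by rw [abs_le] at hc5 hd5 ⊢; omega
  have hcd : c = x + y ∧ d = x - y := by omega
  have he : e ∈ H.edges := by rw [hes]; exact Finset.mem_insert_self _ _
  have hf : f ∈ H.edges := by rw [hes]; simp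
  rw [hcd.1, hcd.2]
  cases hse : H.sign e with
  | true =>
    have hsf : H.sign f = false := by
      cases hsf : H.sign f
      · rfl
      · rw [hse, hsf] at hsgn; exact absurd rfl hsgn
    exact kSegDCore A e f hef hes hje hjf hv hag
      (by rw [(hag e he).2.2]; exact hse) (by rw [(hag f hf).2.2]; exact hsf)
      x y hx hy hx5 hy5
  | false =>
    have hsf : H.sign f = true := by
      cases hsf : H.sign f
      · rw [hse, hsf] at hsgn; exact absurd rfl hsgn
      · rfl
    have hes' : H.edges = {f, e} := by rw [hes, Finset.pair_comm]
    exact kSegDCore A f e (Ne.symm hef) hes' hjf hje hv hag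
      (by rw [(hag f hf).2.2]; exact hsf) (by rw [(hag e he).2.2]; exact hse)
      x y hx hy hx5 hy5

/-- gluing flow data along a series connection whose first part is a segment -/
lemma kGlue (A : SignedGraph) {X H Y : TTGraph} (hc : IsSeriesConn2 X H Y)
    (hHv : H.verts = {H.s, H.t}) (hag : kAgree A X)
    {o₁ o₂ : ℕ → Bool} {φ : ℕ → ℤ} {c m : ℤ} (h1 : kChainProps A H o₁ o₂ φ c m)
    {p₁ p₂ : ℕ → Bool} {ψ : ℕ → ℤ} {d : ℤ} (h2 : kChainProps A Y p₁ p₂ ψ m d) :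
    ∃ q₁ q₂ χ, kChainProps A X q₁ q₂ χ c d := by
  have hagH : kAgree A H := kAgree_of_sub hag hc.sub1
  have hagY : kAgree A Y := kAgree_of_sub hag hc.sub2
  have hsne : X.s ≠ H.t := by rw [hc.src]; exact H.s_ne_t
  have htne : X.t ≠ H.t := by
    rw [hc.tgt, hc.mid]; exact Ne.symm Y.s_ne_t
  have hsY : X.s ∉ Y.verts := by
    intro hmem
    have : X.s ∈ H.verts ∩ Y.verts :=
      Finset.mem_inter.mpr ⟨by rw [hc.src]; exact H.s_mem, hmem⟩
    rw [hc.vert_inter, Finset.mem_singleton] at this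
    exact hsne this
  have htH : X.t ∉ H.verts := by
    intro hmem
    have : X.t ∈ H.verts ∩ Y.verts :=
      Finset.mem_inter.mpr ⟨hmem, by rw [hc.tgt]; exact Y.t_mem⟩
    rw [hc.vert_inter, Finset.mem_singleton] at this
    exact htne this
  have hdisj := hc.edge_disj
  have hsplit : ∀ v, kCtb A (fun e => if e ∈ H.edges then o₁ e else p₁ e)
      (fun e => if e ∈ H.edges then o₂ e else p₂ e)
      (fun e => if e ∈ H.edges then φ e else ψ e) X.edges v
      = kCtb A o₁ o₂ φ H.edges v + kCtb A p₁ p₂ ψ Y.edges v := by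
    intro v
    rw [← hc.edge_union, kCtb, Finset.sum_union hdisj]
    congr 1
    · refine Finset.sum_congr rfl fun e he => kTm_congr ?_ ?_ ?_ <;> simp [he]
    · refine Finset.sum_congr rfl fun e he => kTm_congr ?_ ?_ ?_ <;>
        simp [Finset.disjoint_right.mp hdisj he]
  have hHz : ∀ v, v ∉ H.verts → kCtb A o₁ o₂ φ H.edges v = 0 := by
    intro v hv
    refine kCtb_zero fun e he => ?_
    obtain ⟨hf, hs, _⟩ := hagH e he
    constructor
    · intro hh; apply hv; rw [← hh, hf]; exact H.fst_mem e he
    · intro hh; apply hv; rw [← hh, hs]; exact H.snd_mem e he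
  have hYz : ∀ v, v ∉ Y.verts → kCtb A p₁ p₂ ψ Y.edges v = 0 := by
    intro v hv
    refine kCtb_zero fun e he => ?_
    obtain ⟨hf, hs, _⟩ := hagY e he
    constructor
    · intro hh; apply hv; rw [← hh, hf]; exact Y.fst_mem e he
    · intro hh; apply hv; rw [← hh, hs]; exact Y.snd_mem e he
  refine ⟨fun e => if e ∈ H.edges then o₁ e else p₁ e,
          fun e => if e ∈ H.edges then o₂ e else p₂ e,
          fun e => if e ∈ H.edges then φ e else ψ e, ?_, ?_, ?_, ?_, ?_⟩
  · -- orient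
    intro e he
    rw [← hc.edge_union] at he
    rcases Finset.mem_union.mp he with h | h
    · simp only [if_pos h]; exact h1.orient e h
    · have hn : e ∉ H.edges := Finset.disjoint_right.mp hdisj h
      simp only [if_neg hn]; exact h2.orient e h
  · -- good
    intro e he
    rw [← hc.edge_union] at he
    rcases Finset.mem_union.mp he with h | h
    · simp only [if_pos h]; exact h1.good e h
    · have hn : e ∉ H.edges := Finset.disjoint_right.mp hdisj h
      simp only [if_neg hn]; exact h2.good e h
  · -- conserve
    intro v hv hv1 hv2
    rw [hsplit]
    by_cases hmid : v = H.t
    · subst hmid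
      have e1 : kCtb A o₁ o₂ φ H.edges H.t = -m := h1.at_t
      have e2 : kCtb A p₁ p₂ ψ Y.edges H.t = m := by
        rw [hc.mid]; exact h2.at_s
      rw [e1, e2]; ring
    · rw [← hc.vert_union] at hv
      rcases Finset.mem_union.mp hv with h | h
      · exfalso
        rw [hHv] at h
        rcases Finset.mem_insert.mp h with h | h
        · exact hv1 (by rw [h, ← hc.src])
        · exact hmid (Finset.mem_singleton.mp h)
      · have hYv : kCtb A p₁ p₂ ψ Y.edges v = 0 := by
          refine h2.conserve v h ?_ ?_
          · rw [← hc.mid]; exact hmid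
          · rw [← hc.tgt]; exact hv2
        have hHz' : kCtb A o₁ o₂ φ H.edges v = 0 := by
          refine hHz v fun hmem => ?_
          rw [hHv] at hmem
          rcases Finset.mem_insert.mp hmem with h' | h'
          · exact hv1 (by rw [h', ← hc.src])
          · exact hmid (Finset.mem_singleton.mp h')
        rw [hYv, hHz']; ring
  · -- at_s
    rw [hsplit, hYz X.s hsY, hc.src, h1.at_s]; ring
  · -- at_t
    rw [hsplit, hHz X.t htH, hc.tgt, h2.at_t]; ring

lemma kEdgePart {X : TTGraph} {l : List TTGraph} (h : IsSeriesConnList X l) :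
    ∀ e ∈ X.edges, ∃ H ∈ l, e ∈ H.edges := by
  induction h with
  | two hc =>
    intro e he
    rw [← hc.edge_union] at he
    rcases Finset.mem_union.mp he with h | h
    · exact ⟨_, by simp, h⟩
    · exact ⟨_, by simp, h⟩
  | cons hc htail ih =>
    intro e he
    rw [← hc.edge_union] at he
    rcases Finset.mem_union.mp he with h | h
    · exact ⟨_, List.mem_cons_self, h⟩
    · obtain ⟨H', hH', he'⟩ := ih e h
      exact ⟨H', List.mem_cons_of_mem _ hH', he'⟩

lemma kAllPos {A : SignedGraph} {X : TTGraph} {l : List TTGraph}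
    (h : IsSeriesConnList X l) (hag : kAgree A X)
    (hK : ∀ H ∈ l, IsPositiveK2 H) : ∀ e ∈ X.edges, A.sign e = true := by
  intro e he
  obtain ⟨H, hH, heH⟩ := kEdgePart h e he
  have hsub := kSub_of_mem h H hH
  rw [(hag e he).2.2, ← (hsub.2.2 e heH).2.2]
  exact (hK H hH).2 e heH

lemma kDCnt_one : ∀ {l : List TTGraph}, kDCnt l 1 →
    ∃ Hd ∈ l, IsUnbalanced2Cycle Hd ∧ ∀ H ∈ l, IsPositiveK2 H ∨ H = Hd := by
  intro l h
  induction l with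
  | nil => cases h
  | cons H' l ih =>
    cases h with
    | k hK htail =>
      obtain ⟨Hd, hHd, hD, hall⟩ := ih htail
      refine ⟨Hd, List.mem_cons_of_mem _ hHd, hD, fun H hH => ?_⟩
      rcases List.mem_cons.mp hH with rfl | hH
      · exact Or.inl hK
      · exact hall H hH
    | d hD htail =>
      refine ⟨H', List.mem_cons_self, hD, fun H hH => ?_⟩
      rcases List.mem_cons.mp hH with rfl | hH
      · exact Or.inr rfl
      · exact Or.inl (kDCnt_zero htail H hH)

/-- the negative edge of an unbalanced 2-cycle -/
lemma kDNegEdge {H : TTGraph} (hD : IsUnbalanced2Cycle H) :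
    ∃ f ∈ H.edges, H.sign f = false ∧ ∀ e ∈ H.edges, e ≠ f → H.sign e = true := by
  obtain ⟨hv, e, f, hef, hes, hje, hjf, hsgn⟩ := hD
  have he : e ∈ H.edges := by rw [hes]; exact Finset.mem_insert_self _ _
  have hf : f ∈ H.edges := by rw [hes]; simp
  have hmem : ∀ g ∈ H.edges, g = e ∨ g = f := by
    intro g hg; rw [hes] at hg
    rcases Finset.mem_insert.mp hg with h | h
    · exact Or.inl h
    · exact Or.inr (Finset.mem_singleton.mp h)
  cases hse : H.sign e with
  | false =>
    refine ⟨e, he, hse, fun g hg hge => ?_⟩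
    rcases hmem g hg with rfl | rfl
    · exact absurd rfl hge
    · cases hsf : H.sign g
      · rw [hse, hsf] at hsgn; exact absurd rfl hsgn
      · rfl
  | true =>
    have hsf : H.sign f = false := by
      cases hsf : H.sign f
      · rfl
      · rw [hse, hsf] at hsgn; exact absurd rfl hsgn
    refine ⟨f, hf, hsf, fun g hg hgf => ?_⟩
    rcases hmem g hg with rfl | rfl
    · exact hse
    · exact absurd rfl hgf

lemma kOneNeg {A : SignedGraph} {X : TTGraph} {l : List TTGraph}
    (h : IsSeriesConnList X l) (hag : kAgree A X) (hcnt : kDCnt l 1) :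
    ∃ f ∈ X.edges, A.sign f = false ∧ ∀ e ∈ X.edges, e ≠ f → A.sign e = true := by
  obtain ⟨Hd, hHd, hD, hall⟩ := kDCnt_one hcnt
  obtain ⟨f, hfm, hfneg, hfpos⟩ := kDNegEdge hD
  have hsubd := kSub_of_mem h Hd hHd
  have hfX : f ∈ X.edges := hsubd.2.1 hfm
  refine ⟨f, hfX, ?_, ?_⟩
  · rw [(hag f hfX).2.2, ← (hsubd.2.2 f hfm).2.2]; exact hfneg
  · intro e he hne
    obtain ⟨H, hH, heH⟩ := kEdgePart h e he
    have hsub := kSub_of_mem h H hH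
    rw [(hag e he).2.2, ← (hsub.2.2 e heH).2.2]
    rcases hall H hH with hK | rfl
    · exact hK.2 e heH
    · exact hfpos e heH hne

lemma kFstD_cons {H : TTGraph} {l : List TTGraph} :
    kFstD (H :: l) ↔ IsUnbalanced2Cycle H := by
  constructor
  · rintro ⟨H', hH', hD⟩
    rw [List.head?_cons, Option.some.injEq] at hH'
    exact hH' ▸ hD
  · intro h; exact ⟨H, rfl, h⟩

lemma kLstD_cons {H : TTGraph} {l : List TTGraph} (h : l ≠ []) :
    kLstD (H :: l) ↔ kLstD l := by
  unfold kLstD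
  rw [kGetLast?_cons _ h]

lemma kLstD_pair {H₁ H₂ : TTGraph} : kLstD [H₁, H₂] ↔ IsUnbalanced2Cycle H₂ := by
  constructor
  · rintro ⟨H', hH', hD⟩
    have : ([H₁, H₂] : List TTGraph).getLast? = some H₂ := rfl
    rw [this, Option.some.injEq] at hH'
    exact hH' ▸ hD
  · intro h; exact ⟨H₂, rfl, h⟩

lemma kCond_zero (d : ℤ) (hd0 : d ≠ 0)
    (hdset : d = 0 ∨ d = 1 ∨ d = -1 ∨ d = 3 ∨ d = -3) {P Q : Prop} : kCond 0 d d P Q := by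
  refine ⟨by omega, hdset, by omega, fun _ => ⟨rfl, hd0⟩, fun h => absurd h (by omega),
    fun h => absurd h (by omega)⟩

/-- main realization lemma for chains -/
lemma kCR (A : SignedGraph) {X : TTGraph} {l : List TTGraph} (hl : IsSeriesConnList X l) :
    ∀ (_ : ∀ H ∈ l, IsPositiveK2 H ∨ IsUnbalanced2Cycle H) (_ : kAgree A X)
      (n : ℕ) (_ : kDCnt l n) (c d : ℤ),
      kCond n c d (kFstD l) (kLstD l) →
      ∃ o₁ o₂ φ, kChainProps A X o₁ o₂ φ c d := by
  induction hl with
  | @two X H₁ H₂ hc =>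
    intro hparts hag n hcnt c d hcond
    obtain ⟨hb, hdset, hpar, h0, h1, hge⟩ := hcond
    have hagH₁ : kAgree A H₁ := kAgree_of_sub hag hc.sub1
    have hagH₂ : kAgree A H₂ := kAgree_of_sub hag hc.sub2
    have hd5 : |d| ≤ 5 := abs_le.mpr (by omega)
    have hc5 : |c| ≤ 5 := abs_le.mpr hb
    cases hcnt with
    | k hK1 h' =>
      have hv1 : H₁.verts = {H₁.s, H₁.t} := hK1.1.1
      cases h' with
      | k hK2 h'' =>
        cases h''
        obtain ⟨hcd, hc0⟩ := h0 rfl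
        subst hcd
        obtain ⟨o₁, o₂, φ, hp1⟩ := kSegPos A hK1 hagH₁ c hc0 hc5
        obtain ⟨p₁, p₂, ψ, hp2⟩ := kSegPos A hK2 hagH₂ c hc0 hc5
        exact kGlue A hc hv1 hag hp1 hp2
      | d hD2 h'' =>
        cases h''
        obtain ⟨hd1, hd2⟩ := h1 rfl
        have hc0 : c ≠ 0 := by
          rcases (hge (by omega)).1 with h | hF
          · exact h
          · exact absurd (kFstD_cons.mp hF) (fun hD => kExcl hK1 hD)
        obtain ⟨o₁, o₂, φ, hp1⟩ := kSegPos A hK1 hagH₁ c hc0 hc5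
        obtain ⟨p₁, p₂, ψ, hp2⟩ := kSegD A hD2 hagH₂ c d hpar hd1 hd2 hc5 hd5
        exact kGlue A hc hv1 hag hp1 hp2
    | d hD1 h' =>
      have hv1 : H₁.verts = {H₁.s, H₁.t} := hD1.1
      cases h' with
      | k hK2 h'' =>
        cases h''
        obtain ⟨hd1, hd2⟩ := h1 rfl
        have hd0 : d ≠ 0 := by
          rcases (hge (by omega)).2 with h | hF
          · exact h
          · exact absurd (kLstD_pair.mp hF) (fun hD => kExcl hK2 hD)
        obtain ⟨o₁, o₂, φ, hp1⟩ := kSegD A hD1 hagH₁ c d hpar hd1 hd2 hc5 hd5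
        obtain ⟨p₁, p₂, ψ, hp2⟩ := kSegPos A hK2 hagH₂ d hd0 hd5
        exact kGlue A hc hv1 hag hp1 hp2
      | d hD2 h'' =>
        cases h''
        obtain ⟨m, hm0, hmc, hmc', hmd, hmd', hm5a, hm5b, hpar1, hpar2⟩ :=
          kMid hb hdset hpar
        have hm5 : |m| ≤ 5 := abs_le.mpr ⟨hm5a, hm5b⟩
        obtain ⟨o₁, o₂, φ, hp1⟩ := kSegD A hD1 hagH₁ c m hpar1 hmc hmc' hc5 hm5
        obtain ⟨p₁, p₂, ψ, hp2⟩ := kSegD A hD2 hagH₂ m d hpar2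
          (Ne.symm hmd) (by omega) hm5 hd5
        exact kGlue A hc hv1 hag hp1 hp2
  | @cons X Y H l hc htail ih =>
    intro hparts hag n hcnt c d hcond
    obtain ⟨hb, hdset, hpar, h0, h1, hge⟩ := hcond
    have hlne : l ≠ [] := kSCL_ne_nil htail
    have hlst : kLstD (H :: l) ↔ kLstD l := kLstD_cons hlne
    have hagH : kAgree A H := kAgree_of_sub hag hc.sub1
    have hagY : kAgree A Y := kAgree_of_sub hag hc.sub2
    have hparts' : ∀ H' ∈ l, IsPositiveK2 H' ∨ IsUnbalanced2Cycle H' :=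
      fun H' h' => hparts H' (List.mem_cons_of_mem _ h')
    have hd5 : |d| ≤ 5 := abs_le.mpr (by omega)
    have hc5 : |c| ≤ 5 := abs_le.mpr hb
    cases hcnt with
    | k hK htail' =>
      have hv1 : H.verts = {H.s, H.t} := hK.1.1
      have hc0 : c ≠ 0 := by
        by_cases hn : n = 0
        · exact (h0 hn).2
        · rcases (hge (by omega)).1 with h | hF
          · exact h
          · exact absurd (kFstD_cons.mp hF) (fun hD => kExcl hK hD)
      obtain ⟨p₁, p₂, ψ, hp2⟩ := ih hparts' hagY n htail' c d
        ⟨hb, hdset, hpar, fun hn => ⟨(h0 hn).1, hc0⟩, h1,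
          fun hn => ⟨Or.inl hc0, ((hge hn).2).imp_right hlst.mp⟩⟩
      obtain ⟨o₁, o₂, φ, hp1⟩ := kSegPos A hK hagH c hc0 hc5
      exact kGlue A hc hv1 hag hp1 hp2
    | @d _ _ n' hD htail' =>
      have hv1 : H.verts = {H.s, H.t} := hD.1
      have hlflag : d ≠ 0 ∨ kLstD l := ((hge (by omega)).2).imp_right hlst.mp
      by_cases hn0 : n' = 0
      · subst hn0
        obtain ⟨hd1, hd2⟩ := h1 rfl
        have hd0 : d ≠ 0 := by
          rcases hlflag with h | ⟨W, hW, hDW⟩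
          · exact h
          · exact absurd hDW (fun hDW => kExcl (kDCnt_zero htail' W (kGetLast?_mem hW)) hDW)
        obtain ⟨o₁, o₂, φ, hp1⟩ := kSegD A hD hagH c d hpar hd1 hd2 hc5 hd5
        obtain ⟨p₁, p₂, ψ, hp2⟩ := ih hparts' hagY 0 htail' d d (kCond_zero d hd0 hdset)
        exact kGlue A hc hv1 hag hp1 hp2
      · obtain ⟨m, hm0, hmc, hmc', hmd, hmd', hm5a, hm5b, hpar1, hpar2⟩ :=
          kMid hb hdset hpar
        have hm5 : |m| ≤ 5 := abs_le.mpr ⟨hm5a, hm5b⟩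
        obtain ⟨o₁, o₂, φ, hp1⟩ := kSegD A hD hagH c m hpar1 hmc hmc' hc5 hm5
        obtain ⟨p₁, p₂, ψ, hp2⟩ := ih hparts' hagY n' htail' m d
          ⟨⟨hm5a, hm5b⟩, hdset, hpar2, fun hn => absurd hn hn0,
            fun _ => ⟨Ne.symm hmd, by omega⟩,
            fun _ => ⟨Or.inl hm0, hlflag⟩⟩
        exact kGlue A hc hv1 hag hp1 hp2

/-- capabilities of a string used as a chain of a necklace -/
lemma kChainCap (A : SignedGraph) (X : TTGraph) (hag : kAgree A X) (hstr : IsString X) :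
    ∃ n : ℕ,
      (n = 0 → ∀ e ∈ X.edges, A.sign e = true) ∧
      (n = 1 → ∃ f ∈ X.edges, A.sign f = false ∧
        ∀ e ∈ X.edges, e ≠ f → A.sign e = true) ∧
      (∀ c d : ℤ, kCond n c d False False →
        ∃ o₁ o₂ φ, kChainProps A X o₁ o₂ φ c d) := by
  obtain ⟨h1, _⟩ := hstr
  rcases h1 with hK | hD | ⟨l, hl, hparts⟩
  · refine ⟨0, fun _ e he => by rw [(hag e he).2.2]; exact hK.2 e he,
      fun h => absurd h (by norm_num), fun c d hcond => ?_⟩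
    obtain ⟨hcd, hc0⟩ := hcond.2.2.2.1 rfl
    subst hcd
    exact kSegPos A hK hag c hc0 (abs_le.mpr hcond.1)
  · refine ⟨1, fun h => absurd h (by norm_num), fun _ => ?_, fun c d hcond => ?_⟩
    · obtain ⟨f, hf, hneg, hpos⟩ := kDNegEdge hD
      exact ⟨f, hf, by rw [(hag f hf).2.2]; exact hneg,
        fun e he hne => by rw [(hag e he).2.2]; exact hpos e he hne⟩
    · obtain ⟨hb, hdset, hpar, _, h1', _⟩ := hcond
      obtain ⟨hd1, hd2⟩ := h1' rfl
      exact kSegD A hD hag c d hpar hd1 hd2 (abs_le.mpr hb) (abs_le.mpr (by omega))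
  · obtain ⟨n, hcnt⟩ := kDCnt_exists l hparts
    refine ⟨n, fun hn => ?_, fun hn => ?_, fun c d hcond => ?_⟩
    · subst hn; exact kAllPos hl hag (kDCnt_zero hcnt)
    · subst hn; exact kOneNeg hl hag hcnt
    · exact kCR A hl hparts hag n hcnt c d (kCond_mono hcond)

/-- gluing flow data of the two strings of a necklace into a nowhere-zero 6-flow -/
lemma kPGlue (G : TTGraph) {H₁ H₂ : TTGraph} (hc : IsParallelConn2 G H₁ H₂)
    {o₁ o₂ : ℕ → Bool} {φ : ℕ → ℤ} {c d : ℤ}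
    (h1 : kChainProps G.toSignedGraph H₁ o₁ o₂ φ c d)
    {p₁ p₂ : ℕ → Bool} {ψ : ℕ → ℤ}
    (h2 : kChainProps G.toSignedGraph H₂ p₁ p₂ ψ (-c) (-d)) :
    G.toSignedGraph.HasNZFlow 6 := by
  set A := G.toSignedGraph with hA
  have hagH₁ : kAgree A H₁ := kAgree_of_sub (kAgree_refl G) hc.sub1
  have hagH₂ : kAgree A H₂ := kAgree_of_sub (kAgree_refl G) hc.sub2
  have hdisj := hc.edge_disj
  have hsplit : ∀ v, kCtb A (fun e => if e ∈ H₁.edges then o₁ e else p₁ e)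
      (fun e => if e ∈ H₁.edges then o₂ e else p₂ e)
      (fun e => if e ∈ H₁.edges then φ e else ψ e) A.edges v
      = kCtb A o₁ o₂ φ H₁.edges v + kCtb A p₁ p₂ ψ H₂.edges v := by
    intro v
    have : A.edges = H₁.edges ∪ H₂.edges := hc.edge_union.symm
    rw [this, kCtb, Finset.sum_union hdisj]
    congr 1
    · refine Finset.sum_congr rfl fun e he => kTm_congr ?_ ?_ ?_ <;> simp [he]
    · refine Finset.sum_congr rfl fun e he => kTm_congr ?_ ?_ ?_ <;>
        simp [Finset.disjoint_right.mp hdisj he]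
  have hH₁z : ∀ v, v ∉ H₁.verts → kCtb A o₁ o₂ φ H₁.edges v = 0 := by
    intro v hv
    refine kCtb_zero fun e he => ?_
    obtain ⟨hf, hs, _⟩ := hagH₁ e he
    exact ⟨fun hh => hv (by rw [← hh, hf]; exact H₁.fst_mem e he),
      fun hh => hv (by rw [← hh, hs]; exact H₁.snd_mem e he)⟩
  have hH₂z : ∀ v, v ∉ H₂.verts → kCtb A p₁ p₂ ψ H₂.edges v = 0 := by
    intro v hv
    refine kCtb_zero fun e he => ?_
    obtain ⟨hf, hs, _⟩ := hagH₂ e he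
    exact ⟨fun hh => hv (by rw [← hh, hf]; exact H₂.fst_mem e he),
      fun hh => hv (by rw [← hh, hs]; exact H₂.snd_mem e he)⟩
  refine ⟨fun e => if e ∈ H₁.edges then o₁ e else p₁ e,
          fun e => if e ∈ H₁.edges then o₂ e else p₂ e,
          fun e => if e ∈ H₁.edges then φ e else ψ e, ?_, ?_, ?_, ?_⟩
  · -- orientation
    intro e he
    rw [← hc.edge_union] at he
    rcases Finset.mem_union.mp he with h | h
    · simp only [if_pos h]; exact h1.orient e h
    · have hn : e ∉ H₁.edges := Finset.disjoint_right.mp hdisj h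
      simp only [if_neg hn]; exact h2.orient e h
  · -- nonzero
    intro e he
    rw [← hc.edge_union] at he
    rcases Finset.mem_union.mp he with h | h
    · simp only [if_pos h]; exact (h1.good e h).1
    · have hn : e ∉ H₁.edges := Finset.disjoint_right.mp hdisj h
      simp only [if_neg hn]; exact (h2.good e h).1
  · -- bounded
    intro e he
    rw [← hc.edge_union] at he
    rcases Finset.mem_union.mp he with h | h
    · simp only [if_pos h]
      have := (h1.good e h).2; omega
    · have hn : e ∉ H₁.edges := Finset.disjoint_right.mp hdisj h
      simp only [if_neg hn]
      have := (h2.good e h).2; omega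
  · -- conservation
    intro v hv
    rw [excess_eq_kCtb, hsplit]
    by_cases hvs : v = G.s
    · subst hvs
      have e1 : kCtb A o₁ o₂ φ H₁.edges G.s = c := by rw [hc.src]; exact h1.at_s
      have e2 : kCtb A p₁ p₂ ψ H₂.edges G.s = -c := by
        rw [hc.src, hc.src_eq]; exact h2.at_s
      rw [e1, e2]; ring
    by_cases hvt : v = G.t
    · subst hvt
      have e1 : kCtb A o₁ o₂ φ H₁.edges G.t = -d := by rw [hc.tgt]; exact h1.at_t
      have e2 : kCtb A p₁ p₂ ψ H₂.edges G.t = d := by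
        rw [hc.tgt, hc.tgt_eq]
        have := h2.at_t; rw [neg_neg] at this; exact this
      rw [e1, e2]; ring
    · have hnotboth : ¬ (v ∈ H₁.verts ∧ v ∈ H₂.verts) := by
        rintro ⟨hv1, hv2⟩
        have : v ∈ H₁.verts ∩ H₂.verts := Finset.mem_inter.mpr ⟨hv1, hv2⟩
        rw [hc.vert_inter] at this
        rcases Finset.mem_insert.mp this with h | h
        · exact hvs (by rw [h, hc.src])
        · exact hvt (by rw [Finset.mem_singleton.mp h, hc.tgt])
      rw [← hc.vert_union] at hv
      rcases Finset.mem_union.mp hv with h | h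
      · have hz2 : kCtb A p₁ p₂ ψ H₂.edges v = 0 :=
          hH₂z v fun h2m => hnotboth ⟨h, h2m⟩
        have hz1 : kCtb A o₁ o₂ φ H₁.edges v = 0 := by
          refine h1.conserve v h ?_ ?_
          · intro hh; exact hvs (by rw [hh, hc.src])
          · intro hh; exact hvt (by rw [hh, hc.tgt])
        rw [hz1, hz2]; ring
      · have hz1 : kCtb A o₁ o₂ φ H₁.edges v = 0 :=
          hH₁z v fun h1m => hnotboth ⟨h1m, h⟩
        have hz2 : kCtb A p₁ p₂ ψ H₂.edges v = 0 := by
          refine h2.conserve v h ?_ ?_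
          · intro hh; exact hvs (by rw [hh, hc.src, hc.src_eq])
          · intro hh; exact hvt (by rw [hh, hc.tgt, hc.tgt_eq])
        rw [hz1, hz2]; ring

/-- a flow-admissible string has a nowhere-zero 6-flow -/
lemma kStringMain (G : TTGraph) (hstr : IsString G)
    (hfa : G.toSignedGraph.FlowAdmissible) : G.toSignedGraph.HasNZFlow 6 := by
  obtain ⟨k, o₁, o₂, φ, hflow⟩ := hfa
  obtain ⟨h1, _⟩ := hstr
  rcases h1 with hK | hD | ⟨l, hl, hparts⟩
  · -- a single positive K₂ is not flow-admissible
    exfalso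
    obtain ⟨⟨hv, e0, hes, hj⟩, _⟩ := hK
    have he0 : e0 ∈ G.edges := by rw [hes]; exact Finset.mem_singleton_self _
    refine kUniqueEdgeContra he0 hj G.s_ne_t ?_ (hflow.nonzero e0 he0)
      (hflow.conserve G.s G.s_mem)
    intro e he _
    rw [hes] at he; exact Finset.mem_singleton.mp he
  · -- a single unbalanced 2-cycle is not flow-admissible
    exfalso
    obtain ⟨f, hf, hneg, hpos⟩ := kDNegEdge hD
    exact kOneNegContra hflow hf hneg hpos
  · obtain ⟨n, hcnt⟩ := kDCnt_exists l hparts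
    obtain ⟨Hh, Y, l', hleq, hc2⟩ := kHead hl
    subst hleq
    have hHhmem : Hh ∈ Hh :: l' := List.mem_cons_self
    have hFstD : IsUnbalanced2Cycle Hh := by
      rcases hparts Hh hHhmem with hKh | hDh
      · exfalso
        obtain ⟨⟨hvh, e0, hes, hj⟩, _⟩ := hKh
        have he0H : e0 ∈ Hh.edges := by rw [hes]; exact Finset.mem_singleton_self _
        have he0 : e0 ∈ G.edges := hc2.sub1.2.1 he0H
        obtain ⟨hfst, hsnd, _⟩ := hc2.sub1.2.2 e0 he0H
        have hjG : G.toSignedGraph.Joins e0 G.s Hh.t := by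
          rcases hj with ⟨a, b⟩ | ⟨a, b⟩
          · exact Or.inl ⟨by rw [← hfst, a, ← hc2.src], by rw [← hsnd, b]⟩
          · exact Or.inr ⟨by rw [← hfst, a], by rw [← hsnd, b, ← hc2.src]⟩
        refine kUniqueEdgeContra he0 hjG (by rw [hc2.src]; exact Hh.s_ne_t) ?_
          (hflow.nonzero e0 he0) (hflow.conserve G.s G.s_mem)
        intro e he hend
        have := kEdgeAtS hc2 e he hend
        rw [hes] at this; exact Finset.mem_singleton.mp this
      · exact hDh
    obtain ⟨W, hW, hWt, hWuniq⟩ := kEdgeAtT hl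
    have hWmem : W ∈ Hh :: l' := kGetLast?_mem hW
    have hLstD : IsUnbalanced2Cycle W := by
      rcases hparts W hWmem with hKW | hDW
      · exfalso
        obtain ⟨⟨hvW, e0, hes, hj⟩, _⟩ := hKW
        have he0W : e0 ∈ W.edges := by rw [hes]; exact Finset.mem_singleton_self _
        have hsubW := kSub_of_mem hl W hWmem
        have he0 : e0 ∈ G.edges := hsubW.2.1 he0W
        obtain ⟨hfst, hsnd, _⟩ := hsubW.2.2 e0 he0W
        have hjG : G.toSignedGraph.Joins e0 G.t W.s := by
          rcases hj with ⟨a, b⟩ | ⟨a, b⟩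
          · exact Or.inr ⟨by rw [← hfst, a], by rw [← hsnd, b, ← hWt]⟩
          · exact Or.inl ⟨by rw [← hfst, a, ← hWt], by rw [← hsnd, b]⟩
        refine kUniqueEdgeContra he0 hjG (by rw [hWt]; exact Ne.symm W.s_ne_t) ?_
          (hflow.nonzero e0 he0) (hflow.conserve G.t G.t_mem)
        intro e he hend
        have := hWuniq e he hend
        rw [hes] at this; exact Finset.mem_singleton.mp this
      · exact hDW
    match n, hcnt with
    | 0, hcnt =>
      exact absurd hFstD (fun h => kExcl (kDCnt_zero hcnt Hh hHhmem) h)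
    | 1, hcnt =>
      exfalso
      obtain ⟨f, hf, hneg, hpos⟩ := kOneNeg hl (kAgree_refl G) hcnt
      exact kOneNegContra hflow hf hneg hpos
    | (n + 2), hcnt =>
      obtain ⟨o₁', o₂', φ', hp⟩ := kCR G.toSignedGraph hl hparts (kAgree_refl G)
        (n + 2) hcnt 0 0
        ⟨by omega, Or.inl rfl, by omega, fun h => absurd h (by omega),
          fun h => absurd h (by omega),
          fun _ => ⟨Or.inr (kFstD_cons.mpr hFstD), Or.inr ⟨W, hW, hLstD⟩⟩⟩
      refine ⟨o₁', o₂', φ', hp.orient, fun e he => (hp.good e he).1,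
        fun e he => by have := (hp.good e he).2; omega, ?_⟩
      intro v hv
      rw [excess_eq_kCtb]
      by_cases hvs : v = G.s
      · subst hvs; rw [hp.at_s]
      by_cases hvt : v = G.t
      · subst hvt; rw [hp.at_t]; ring
      · exact hp.conserve v hv hvs hvt

/-- a flow-admissible necklace has a nowhere-zero 6-flow -/
lemma kNecklaceMain (G : TTGraph) (hneck : IsNecklace G)
    (hfa : G.toSignedGraph.FlowAdmissible) : G.toSignedGraph.HasNZFlow 6 := by
  obtain ⟨H₁, H₂, hc, hstr1, hstr2, _⟩ := hneck
  obtain ⟨n1, hA1, hB1, hCap1⟩ := kChainCap G.toSignedGraph H₁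
    (kAgree_of_sub (kAgree_refl G) hc.sub1) hstr1
  obtain ⟨n2, hA2, hB2, hCap2⟩ := kChainCap G.toSignedGraph H₂
    (kAgree_of_sub (kAgree_refl G) hc.sub2) hstr2
  by_cases hcase : (n1 = 0 ∧ n2 = 1) ∨ (n1 = 1 ∧ n2 = 0)
  · exfalso
    obtain ⟨k, o₁, o₂, φ, hflow⟩ := hfa
    rcases hcase with ⟨h10, h21⟩ | ⟨h11, h20⟩
    · obtain ⟨f, hf2, hneg, hpos2⟩ := hB2 h21
      have hf : f ∈ G.edges := hc.sub2.2.1 hf2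
      refine kOneNegContra hflow hf hneg ?_
      intro e he hne
      rw [← hc.edge_union] at he
      rcases Finset.mem_union.mp he with h | h
      · exact hA1 h10 e h
      · exact hpos2 e h hne
    · obtain ⟨f, hf1, hneg, hpos1⟩ := hB1 h11
      have hf : f ∈ G.edges := hc.sub1.2.1 hf1
      refine kOneNegContra hflow hf hneg ?_
      intro e he hne
      rw [← hc.edge_union] at he
      rcases Finset.mem_union.mp he with h | h
      · exact hpos1 e h hne
      · exact hA2 h20 e h
  · by_cases h3 : n1 = 1 ∨ n2 = 1
    · have hcond1 : kCond n1 1 3 False False := by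
        refine ⟨by norm_num, by norm_num, by norm_num, ?_, ?_,
          fun _ => ⟨Or.inl (by norm_num), Or.inl (by norm_num)⟩⟩
        · intro h0
          exfalso
          rcases h3 with h | h
          · omega
          · exact hcase (Or.inl ⟨h0, h⟩)
        · intro _; exact ⟨by norm_num, by norm_num⟩
      have hcond2 : kCond n2 (-1) (-3) False False := by
        refine ⟨by norm_num, by norm_num, by norm_num, ?_, ?_,
          fun _ => ⟨Or.inl (by norm_num), Or.inl (by norm_num)⟩⟩
        · intro h0
          exfalso
          rcases h3 with h | h
          · exact hcase (Or.inr ⟨h, h0⟩)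
          · omega
        · intro _; exact ⟨by norm_num, by norm_num⟩
      obtain ⟨a₁, a₂, χ₁, hp1⟩ := hCap1 1 3 hcond1
      obtain ⟨b₁, b₂, χ₂, hp2⟩ := hCap2 (-1) (-3) hcond2
      exact kPGlue G hc hp1 hp2
    · push_neg at h3
      have hcond1 : kCond n1 1 1 False False :=
        ⟨by norm_num, by norm_num, by norm_num, fun _ => ⟨rfl, by norm_num⟩,
          fun h => absurd h h3.1, fun _ => ⟨Or.inl (by norm_num), Or.inl (by norm_num)⟩⟩
      have hcond2 : kCond n2 (-1) (-1) False False :=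
        ⟨by norm_num, by norm_num, by norm_num, fun _ => ⟨rfl, by norm_num⟩,
          fun h => absurd h h3.2, fun _ => ⟨Or.inl (by norm_num), Or.inl (by norm_num)⟩⟩
      obtain ⟨a₁, a₂, χ₁, hp1⟩ := hCap1 1 1 hcond1
      obtain ⟨b₁, b₂, χ₂, hp2⟩ := hCap2 (-1) (-1) hcond2
      exact kPGlue G hc hp1 hp2

end KR

/-- Every flow-admissible string admits a nowhere-zero
6-flow, and every flow-admissible necklace admits a nowhere-zero 6-flow. -/
theorem flow_admissible_string_or_necklace_has_six_flow :
    (∀ G : TTGraph, IsString G → G.toSignedGraph.FlowAdmissible →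
      G.toSignedGraph.HasNZFlow 6) ∧
    (∀ G : TTGraph, IsNecklace G → G.toSignedGraph.FlowAdmissible →
      G.toSignedGraph.HasNZFlow 6) :=
  ⟨kStringMain, kNecklaceMain⟩
end
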